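/- arXiv:2410.20830 — 7 statements merged into one kernel-verified Lean document; each statement's English description precedes it below -/
import Mathlib

section
/- Let k ≥ 2 and let T be a k-uniform hypertree with m ≥ 1 edges (so T has n = m(k−1)+1 vertices), and let ρ be the unique eigenvalue of the adjacency tensor 𝒜(T) admitting a strictly positive eigenvector. Then the number of eigenvectors of 𝒜(T) associated with ρ, counted up to multiplication by nonzero complex scalars, is exactly k^{m(k−2)}; that is, |𝕍_ρ(𝒜(T))| = k^{m(k−2)}. -/
open Finset
open Polynomial

/-- `(𝒜(H) x^{k-1})_v = ∑_{e ∈ E(H), v ∈ e} ∏_{u ∈ e∖{v}} x_u` for a hypergraph with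
edge set `E` on vertex set `Fin n`. -/
noncomputable def adjApply {n : ℕ} (E : Finset (Finset (Fin n))) (x : Fin n → ℂ)
    (v : Fin n) : ℂ :=
  ∑ e ∈ E.filter (fun e => v ∈ e), ∏ u ∈ e.erase v, x u

private lemma hx7_eq_re (z : ℂ) (h : ‖z‖ = z.re) : z = (z.re : ℂ) := by
  have h2 : ‖z‖ ^ 2 = Complex.normSq z := Complex.sq_norm z
  rw [h] at h2
  have him : z.im = 0 := by
    have : z.re ^ 2 = z.re * z.re + z.im * z.im := by rw [h2]; rfl
    nlinarith [sq_nonneg z.im]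
  exact Complex.ext rfl him

private lemma hx7_tri {ι : Type*} (s : Finset ι) (a : ι → ℂ) (u : ℂ)
    (hu : ‖u‖ = 1)
    (h : ∑ i ∈ s, a i = ((∑ i ∈ s, ‖a i‖ : ℝ) : ℂ) * u) :
    ∀ i ∈ s, a i = (‖a i‖ : ℂ) * u := by
  have huu : (starRingEnd ℂ) u * u = 1 := by
    rw [mul_comm, Complex.mul_conj]
    norm_cast
    rw [← Complex.sq_norm, hu]; norm_num
  have hre : ∀ i ∈ s, (a i * (starRingEnd ℂ) u).re ≤ ‖a i‖ := by
    intro i _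
    calc (a i * (starRingEnd ℂ) u).re ≤ ‖a i * (starRingEnd ℂ) u‖ :=
          Complex.re_le_norm _
      _ = ‖a i‖ := by
          rw [norm_mul, Complex.norm_conj, hu, mul_one]
  have hsum : ∑ i ∈ s, (a i * (starRingEnd ℂ) u).re = ∑ i ∈ s, ‖a i‖ := by
    have : (∑ i ∈ s, a i) * (starRingEnd ℂ) u
        = ((∑ i ∈ s, ‖a i‖ : ℝ) : ℂ) := by
      rw [h, mul_assoc, mul_comm u, huu, mul_one]
    calc ∑ i ∈ s, (a i * (starRingEnd ℂ) u).re
        = ((∑ i ∈ s, a i) * (starRingEnd ℂ) u).re := by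
          rw [Finset.sum_mul, Complex.re_sum]
      _ = ∑ i ∈ s, ‖a i‖ := by rw [this, Complex.ofReal_re]
  have heach := (Finset.sum_eq_sum_iff_of_le hre).mp hsum
  intro i hi
  have h1 : ‖a i * (starRingEnd ℂ) u‖ = (a i * (starRingEnd ℂ) u).re := by
    rw [norm_mul, Complex.norm_conj, hu, mul_one, ← heach i hi]
  have h2 : a i * (starRingEnd ℂ) u = ((a i * (starRingEnd ℂ) u).re : ℂ) :=
    hx7_eq_re _ h1
  have h3 : a i * (starRingEnd ℂ) u = (‖a i‖ : ℂ) := by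
    rw [h2, ← heach i hi]
  calc a i = a i * ((starRingEnd ℂ) u * u) := by rw [huu, mul_one]
    _ = (a i * (starRingEnd ℂ) u) * u := by ring
    _ = (‖a i‖ : ℂ) * u := by rw [h3]

private lemma hx7_prod_eq {ι : Type*} (s : Finset ι) (f g : ι → ℝ)
    (h0 : ∀ i ∈ s, 0 ≤ f i) (hle : ∀ i ∈ s, f i ≤ g i) (hpos : ∀ i ∈ s, 0 < g i)
    (h : ∏ i ∈ s, f i = ∏ i ∈ s, g i) : ∀ i ∈ s, f i = g i := by
  have hfpos : ∀ i ∈ s, 0 < f i := by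
    intro i hi
    rcases (h0 i hi).lt_or_eq with h' | h'
    · exact h'
    · exfalso
      have : ∏ i ∈ s, f i = 0 := Finset.prod_eq_zero hi h'.symm
      have : (0:ℝ) < ∏ i ∈ s, g i := Finset.prod_pos hpos
      rw [← h] at this; linarith
  intro i hi
  by_contra hne
  have hlt : f i < g i := lt_of_le_of_ne (hle i hi) hne
  have := Finset.prod_lt_prod hfpos hle ⟨i, hi, hlt⟩
  rw [h] at this; exact lt_irrefl _ this

private lemma hx7_adj {m n : ℕ} (e : Fin m → Finset (Fin n))
    (hinj : Function.Injective e) (x : Fin n → ℂ) (v : Fin n) :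
    adjApply (univ.image e) x v
      = ∑ j ∈ univ.filter (fun j => v ∈ e j), ∏ u ∈ (e j).erase v, x u := by
  unfold adjApply
  rw [Finset.filter_image]
  exact Finset.sum_image (fun a _ b _ hab => hinj hab)

private lemma hx7_conn {m n : ℕ} (hm : 1 ≤ m) (e : Fin m → Finset (Fin n))
    (hcover : ∀ v : Fin n, ∃ j, v ∈ e j)
    (htree : ∀ j : Fin m, 0 < (j : ℕ) →
      ((e j) ∩ (univ.filter (fun i => i < j)).biUnion e).card = 1)
    (P : Fin n → Prop)
    (hedge : ∀ (j : Fin m) (v u : Fin n), v ∈ e j → u ∈ e j → P v → P u)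
    (w : Fin n) (hw : P w) : ∀ v, P v := by
  have j0 : Fin m := ⟨0, hm⟩
  -- if (j:ℕ) = 0 then j = ⟨0,hm⟩
  have hmeet : ∀ j : Fin m, 0 < (j : ℕ) →
      ∃ (i : Fin m) (u : Fin n), i < j ∧ u ∈ e i ∧ u ∈ e j := by
    intro j hj
    have h1 := htree j hj
    have : ((e j) ∩ (univ.filter (fun i => i < j)).biUnion e).Nonempty := by
      rw [← Finset.card_pos, h1]; norm_num
    obtain ⟨u, hu⟩ := this
    rw [Finset.mem_inter, Finset.mem_biUnion] at hu
    obtain ⟨hu1, i, hi, hu2⟩ := hu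
    rw [Finset.mem_filter] at hi
    exact ⟨i, u, hi.2, hu2, hu1⟩
  -- claim 1 : from any edge with a P-vertex, e ⟨0,hm⟩ is all P
  have claim1 : ∀ N : ℕ, ∀ j : Fin m, (j : ℕ) < N → (∃ v ∈ e j, P v) →
      ∀ u ∈ e ⟨0, hm⟩, P u := by
    intro N
    induction N with
    | zero => intro j hj; omega
    | succ N ih =>
      intro j hj ⟨v, hv, hPv⟩
      by_cases h0 : (j : ℕ) = 0
      · have : j = ⟨0, hm⟩ := Fin.ext h0
        subst this
        intro u hu; exact hedge _ v u hv hu hPv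
      · obtain ⟨i, u, hij, hui, huj⟩ := hmeet j (Nat.pos_of_ne_zero h0)
        have hPu : P u := hedge j v u hv huj hPv
        exact ih i (by have := Fin.lt_def.mp hij; omega) ⟨u, hui, hPu⟩
  -- claim 2 : if e ⟨0,hm⟩ all P then every edge all P
  have claim2 : ∀ N : ℕ, ∀ j : Fin m, (j : ℕ) < N → (∀ u ∈ e ⟨0, hm⟩, P u) →
      ∀ u ∈ e j, P u := by
    intro N
    induction N with
    | zero => intro j hj; omega
    | succ N ih =>
      intro j hj h0all
      by_cases h0 : (j : ℕ) = 0
      · have : j = ⟨0, hm⟩ := Fin.ext h0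
        subst this; exact h0all
      · obtain ⟨i, u, hij, hui, huj⟩ := hmeet j (Nat.pos_of_ne_zero h0)
        have hPu : P u := ih i (by have := Fin.lt_def.mp hij; omega) h0all u hui
        intro u' hu'; exact hedge j u u' huj hu' hPu
  obtain ⟨jw, hjw⟩ := hcover w
  have h0all := claim1 m jw jw.isLt ⟨w, hjw, hw⟩
  intro v
  obtain ⟨jv, hjv⟩ := hcover v
  exact claim2 m jv jv.isLt h0all v hjv

private lemma hx7_card_free {n k : ℕ} (hk : 0 < k) (A : Finset (Fin n)) :
    Nat.card {τ : Fin n → ℂ // (∀ v ∈ A, τ v ^ k = 1) ∧ ∀ v ∉ A, τ v = 1}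
      = k ^ A.card := by
  have E : {τ : Fin n → ℂ // (∀ v ∈ A, τ v ^ k = 1) ∧ ∀ v ∉ A, τ v = 1}
      ≃ (↥A → ↥(nthRootsFinset k (1 : ℂ))) :=
  { toFun := fun τ a => ⟨τ.1 a.1, (mem_nthRootsFinset hk 1).2 (τ.2.1 a.1 a.2)⟩
    invFun := fun f => ⟨fun v => if h : v ∈ A then (f ⟨v, h⟩).1 else 1,
      ⟨fun v hv => by
          simp only [dif_pos hv]
          exact (mem_nthRootsFinset hk 1).1 (f ⟨v, hv⟩).2,
        fun v hv => by simp only [dif_neg hv]⟩⟩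
    left_inv := fun τ => by
      apply Subtype.ext; funext v
      by_cases h : v ∈ A
      · simp only [dif_pos h]
      · simp only [dif_neg h]; exact (τ.2.2 v h).symm
    right_inv := fun f => by
      funext a
      apply Subtype.ext
      simp only [dif_pos a.2] }
  rw [Nat.card_congr E, Nat.card_fun, Nat.card_eq_finsetCard, Nat.card_eq_finsetCard,
    (Complex.isPrimitiveRoot_exp k hk.ne').card_nthRootsFinset]

private lemma hx7_card_prod {n k : ℕ} (hk : 0 < k) (A : Finset (Fin n))
    (w : Fin n) (hw : w ∈ A) (a : ℂ) (ha : a ^ k = 1) :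
    Nat.card {σ : Fin n → ℂ // (∀ v ∈ A, σ v ^ k = 1) ∧ (∀ v ∉ A, σ v = 1)
        ∧ ∏ v ∈ A, σ v = a}
      = k ^ (A.card - 1) := by
  have ha0 : a ≠ 0 := by intro h; rw [h, zero_pow hk.ne'] at ha; exact zero_ne_one ha
  have key : ∀ (τ : Fin n → ℂ), (∀ v ∈ A.erase w, τ v ^ k = 1) →
      (∏ v ∈ A.erase w, τ v) ≠ 0 := by
    intro τ hτ
    apply Finset.prod_ne_zero_iff.2
    intro v hv h0
    have := hτ v hv; rw [h0, zero_pow hk.ne'] at this; exact zero_ne_one this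
  have E : {σ : Fin n → ℂ // (∀ v ∈ A, σ v ^ k = 1) ∧ (∀ v ∉ A, σ v = 1)
        ∧ ∏ v ∈ A, σ v = a}
      ≃ {τ : Fin n → ℂ // (∀ v ∈ A.erase w, τ v ^ k = 1) ∧ ∀ v ∉ A.erase w, τ v = 1} :=
  { toFun := fun σ => ⟨Function.update σ.1 w 1,
      ⟨fun v hv => by
          rw [Function.update_of_ne (Finset.ne_of_mem_erase hv)]
          exact σ.2.1 v (Finset.mem_of_mem_erase hv),
        fun v hv => by
          by_cases h : v = w
          · subst h; rw [Function.update_self]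
          · rw [Function.update_of_ne h]
            exact σ.2.2.1 v (fun hvA => hv (Finset.mem_erase.2 ⟨h, hvA⟩))⟩⟩
    invFun := fun τ => ⟨Function.update τ.1 w (a / ∏ v ∈ A.erase w, τ.1 v),
      by
        have hprod : ∀ v ∈ A.erase w, Function.update τ.1 w (a / ∏ v ∈ A.erase w, τ.1 v) v = τ.1 v := by
          intro v hv
          rw [Function.update_of_ne (Finset.ne_of_mem_erase hv)]
        refine ⟨?_, ?_, ?_⟩
        · intro v hv
          by_cases h : v = w
          · subst h
            rw [Function.update_self, div_pow, ha, ← Finset.prod_pow,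
              Finset.prod_congr rfl (fun v hv => τ.2.1 v hv), Finset.prod_const_one,
              div_one]
          · rw [Function.update_of_ne h]
            exact τ.2.1 v (Finset.mem_erase.2 ⟨h, hv⟩)
        · intro v hv
          have h : v ≠ w := fun h => hv (h ▸ hw)
          rw [Function.update_of_ne h]
          exact τ.2.2 v (fun hve => hv (Finset.mem_of_mem_erase hve))
        · rw [← Finset.prod_erase_mul A _ hw, Finset.prod_congr rfl hprod,
            Function.update_self]
          rw [mul_comm, div_mul_cancel₀]
          exact key τ.1 τ.2.1⟩
    left_inv := fun σ => by
      apply Subtype.ext; funext v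
      simp only
      by_cases h : v = w
      · rw [h, Function.update_self]
        have hupd : ∏ u ∈ A.erase w, Function.update σ.1 w 1 u = ∏ u ∈ A.erase w, σ.1 u :=
          Finset.prod_congr rfl (fun u hu => Function.update_of_ne (Finset.ne_of_mem_erase hu) _ _)
        have hσw : σ.1 w * ∏ u ∈ A.erase w, σ.1 u = a := by
          rw [Finset.mul_prod_erase A σ.1 hw]; exact σ.2.2.2
        rw [hupd, div_eq_iff (key σ.1 (fun u hu => σ.2.1 u (Finset.mem_of_mem_erase hu))),
          mul_comm]
        rw [mul_comm] at hσw
        exact hσw.symm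
      · rw [Function.update_of_ne h, Function.update_of_ne h]
    right_inv := fun τ => by
      apply Subtype.ext; funext v
      simp only
      by_cases h : v = w
      · rw [h, Function.update_self]
        exact (τ.2.2 w (fun hwe => (Finset.mem_erase.1 hwe).1 rfl)).symm
      · rw [Function.update_of_ne h, Function.update_of_ne h] }
  rw [Nat.card_congr E, hx7_card_free hk, Finset.card_erase_of_mem hw]

private def hx7_Wd {m n : ℕ} (e : Fin m → Finset (Fin n)) (j : ℕ) : Finset (Fin n) :=
  (univ.filter (fun i : Fin m => (i : ℕ) < j)).biUnion e

private lemma hx7_count {k m n : ℕ} (hk : 2 ≤ k) (hm : 1 ≤ m)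
    (e : Fin m → Finset (Fin n)) (hcard : ∀ j, (e j).card = k)
    (hcover : ∀ v : Fin n, ∃ j, v ∈ e j)
    (htree : ∀ j : Fin m, 0 < (j : ℕ) →
      ((e j) ∩ (univ.filter (fun i => i < j)).biUnion e).card = 1)
    (v0 : Fin n) (hv0 : v0 ∈ e ⟨0, hm⟩) :
    Nat.card {σ : Fin n → ℂ //
        (∀ v, σ v ^ k = 1) ∧ (∀ j, ∏ u ∈ e j, σ u = 1) ∧ σ v0 = 1}
      = k ^ (m * (k - 2)) := by
  have hk0 : 0 < k := by omega
  have hWmono : ∀ {j j' : ℕ}, j ≤ j' → hx7_Wd e j ⊆ hx7_Wd e j' := by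
    intro j j' hjj
    unfold hx7_Wd
    apply Finset.biUnion_subset_biUnion_of_subset_left
    intro i hi
    simp only [Finset.mem_filter, Finset.mem_univ, true_and] at *
    omega
  have hsub : ∀ (J : ℕ) (i : Fin m), (i : ℕ) < J → e i ⊆ hx7_Wd e J := by
    intro J i hi
    unfold hx7_Wd
    apply Finset.subset_biUnion_of_mem
    simp only [Finset.mem_filter, Finset.mem_univ, true_and]
    exact hi
  have hW1 : hx7_Wd e 1 = e ⟨0, hm⟩ := by
    apply Finset.ext
    intro v
    simp only [hx7_Wd, Finset.mem_biUnion, Finset.mem_filter, Finset.mem_univ, true_and]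
    constructor
    · rintro ⟨i, hi, hv⟩
      have : i = ⟨0, hm⟩ := Fin.ext (by simp only [Fin.val_mk]; omega)
      rwa [← this]
    · intro hv
      exact ⟨⟨0, hm⟩, by simp only [Fin.val_mk]; omega, hv⟩
  have hv0W : ∀ J : ℕ, 1 ≤ J → v0 ∈ hx7_Wd e J := by
    intro J hJ
    exact hWmono hJ (hW1 ▸ hv0)
  -- the inductive claim
  have main : ∀ j : ℕ, 1 ≤ j → j ≤ m →
      Nat.card {σ : Fin n → ℂ // (∀ v ∈ hx7_Wd e j, σ v ^ k = 1) ∧ (∀ v ∉ hx7_Wd e j, σ v = 1)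
          ∧ (∀ i : Fin m, (i : ℕ) < j → ∏ u ∈ e i, σ u = 1) ∧ σ v0 = 1}
        = k ^ (j * (k - 2)) := by
    intro j hj
    induction j, hj using Nat.le_induction with
    | base =>
      intro _g
      -- translate to hx7_card_prod on (e ⟨0,hm⟩).erase v0
      have hcard0 : ((e ⟨0, hm⟩).erase v0).card = k - 1 := by
        rw [Finset.card_erase_of_mem hv0, hcard]
      have hne : ((e ⟨0, hm⟩).erase v0).Nonempty := by
        rw [← Finset.card_pos, hcard0]; omega
      obtain ⟨w, hw⟩ := hne
      have hiff : ∀ σ : Fin n → ℂ,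
          ((∀ v ∈ hx7_Wd e 1, σ v ^ k = 1) ∧ (∀ v ∉ hx7_Wd e 1, σ v = 1)
            ∧ (∀ i : Fin m, (i : ℕ) < 1 → ∏ u ∈ e i, σ u = 1) ∧ σ v0 = 1)
          ↔ ((∀ v ∈ (e ⟨0, hm⟩).erase v0, σ v ^ k = 1)
            ∧ (∀ v ∉ (e ⟨0, hm⟩).erase v0, σ v = 1)
            ∧ ∏ v ∈ (e ⟨0, hm⟩).erase v0, σ v = 1) := by
        intro σ
        rw [hW1]
        constructor
        · rintro ⟨h1, h2, h3, h4⟩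
          refine ⟨fun v hv => h1 v (Finset.mem_of_mem_erase hv), ?_, ?_⟩
          · intro v hv
            by_cases hv0' : v = v0
            · rw [hv0']; exact h4
            · exact h2 v (fun hve => hv (Finset.mem_erase.2 ⟨hv0', hve⟩))
          · have := h3 ⟨0, hm⟩ (by norm_num)
            rw [← Finset.mul_prod_erase _ _ hv0, h4, one_mul] at this
            exact this
        · rintro ⟨h1, h2, h3⟩
          have h4 : σ v0 = 1 := h2 v0 (fun hve => (Finset.mem_erase.1 hve).1 rfl)
          refine ⟨?_, ?_, ?_, h4⟩
          · intro v hv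
            by_cases hv0' : v = v0
            · rw [hv0', h4, one_pow]
            · exact h1 v (Finset.mem_erase.2 ⟨hv0', hv⟩)
          · intro v hv
            exact h2 v (fun hve => hv (Finset.mem_of_mem_erase hve))
          · intro i hi
            have : i = ⟨0, hm⟩ := Fin.ext (by simp only [Fin.val_mk]; omega)
            rw [this, ← Finset.mul_prod_erase _ _ hv0, h4, one_mul]
            exact h3
      rw [Nat.card_congr (Equiv.subtypeEquivRight hiff),
        hx7_card_prod hk0 _ w hw 1 (one_pow k), hcard0]
      congr 1
      omega
    | succ j hj1 ih =>
      intro hjm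
      obtain ⟨j', hj'val⟩ : ∃ j' : Fin m, (j' : ℕ) = j := ⟨⟨j, by omega⟩, rfl⟩
      -- the intersection vertex
      have htr : (e j' ∩ hx7_Wd e j).card = 1 := by
        have h := htree j' (by omega)
        have : (univ.filter (fun i : Fin m => i < j')).biUnion e = hx7_Wd e j := by
          unfold hx7_Wd
          congr 1
          apply Finset.filter_congr
          intro i _
          simp only [Fin.lt_def, hj'val, eq_iff_iff]
        rwa [this] at h
      obtain ⟨w, hwEq⟩ := Finset.card_eq_one.1 htr
      have hwE : w ∈ e j' := by
        have : w ∈ e j' ∩ hx7_Wd e j := hwEq ▸ Finset.mem_singleton_self w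
        exact (Finset.mem_inter.1 this).1
      have hwW : w ∈ hx7_Wd e j := by
        have : w ∈ e j' ∩ hx7_Wd e j := hwEq ▸ Finset.mem_singleton_self w
        exact (Finset.mem_inter.1 this).2
      obtain ⟨New, hNew⟩ : ∃ N : Finset (Fin n), N = e j' \ hx7_Wd e j := ⟨_, rfl⟩
      have hNewCard : New.card = k - 1 := by
        have h1 : (e j' ∩ hx7_Wd e j).card + (e j' \ hx7_Wd e j).card = (e j').card :=
          Finset.card_inter_add_card_sdiff _ _
        rw [htr, hcard, ← hNew] at h1
        omega
      have hNewdisj : ∀ v ∈ New, v ∉ hx7_Wd e j := fun v hv =>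
        (Finset.mem_sdiff.1 (hNew ▸ hv)).2
      have hNewsub : New ⊆ e j' := hNew ▸ Finset.sdiff_subset
      have hNewne : New.Nonempty := by rw [← Finset.card_pos, hNewCard]; omega
      obtain ⟨us, hus⟩ := hNewne
      have hwNew : w ∉ New := fun h => (hNewdisj w h) hwW
      have hins : e j' = insert w New := by
        apply Finset.ext
        intro v
        constructor
        · intro hv
          by_cases hvW : v ∈ hx7_Wd e j
          · have : v ∈ e j' ∩ hx7_Wd e j := Finset.mem_inter.2 ⟨hv, hvW⟩
            rw [hwEq, Finset.mem_singleton] at this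
            rw [this]; exact Finset.mem_insert_self _ _
          · exact Finset.mem_insert.2 (Or.inr (hNew ▸ Finset.mem_sdiff.2 ⟨hv, hvW⟩))
        · intro hv
          rcases Finset.mem_insert.1 hv with h | h
          · rw [h]; exact hwE
          · exact hNewsub h
      have hWsucc : hx7_Wd e (j+1) = e j' ∪ hx7_Wd e j := by
        have hfil : (univ.filter (fun i : Fin m => (i : ℕ) < j + 1))
            = insert j' (univ.filter (fun i : Fin m => (i : ℕ) < j)) := by
          apply Finset.ext
          intro i
          simp only [Finset.mem_filter, Finset.mem_univ, true_and, Finset.mem_insert]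
          constructor
          · intro hi
            by_cases h : (i : ℕ) = j
            · exact Or.inl (Fin.ext (by omega))
            · exact Or.inr (by omega)
          · rintro (h | h)
            · rw [h, hj'val]; omega
            · omega
        rw [hx7_Wd, hfil, Finset.biUnion_insert]
        rfl
      have hjW : ∀ i : Fin m, (i : ℕ) < j + 1 → e i ⊆ hx7_Wd e (j+1) :=
        fun i hi => hsub (j+1) i hi
      have hj'lt : (j' : ℕ) < j + 1 := by omega
      have hAcard : (New.erase us).card = k - 2 := by
        rw [Finset.card_erase_of_mem hus, hNewCard]
        omega
      have hANotW : ∀ v ∈ New.erase us, v ∉ hx7_Wd e j :=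
        fun v hv => hNewdisj v (Finset.mem_of_mem_erase hv)
      have husW : us ∉ hx7_Wd e j := hNewdisj us hus
      have husA : us ∉ New.erase us := Finset.notMem_erase us New
      have hroot_ne : ∀ z : ℂ, z ^ k = 1 → z ≠ 0 := by
        intro z hz h0
        rw [h0, zero_pow hk0.ne'] at hz
        exact zero_ne_one hz
      have hnotW1 : ∀ v : Fin n, v ∉ hx7_Wd e j → v ∉ New.erase us → v ≠ us →
          v ∉ hx7_Wd e (j+1) := by
        intro v h1 h2 h3 hv
        rw [hWsucc, Finset.mem_union] at hv
        rcases hv with hv | hv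
        · have hvN : v ∈ New := hNew ▸ Finset.mem_sdiff.2 ⟨hv, h1⟩
          exact h3 (by_contra fun hne => h2 (Finset.mem_erase.2 ⟨hne, hvN⟩))
        · exact h1 hv
      have husWs : us ∈ hx7_Wd e (j+1) := by
        rw [hWsucc, Finset.mem_union]
        exact Or.inl (hNewsub hus)
      have E : {σ : Fin n → ℂ // (∀ v ∈ hx7_Wd e (j+1), σ v ^ k = 1)
            ∧ (∀ v ∉ hx7_Wd e (j+1), σ v = 1)
            ∧ (∀ i : Fin m, (i : ℕ) < j + 1 → ∏ u ∈ e i, σ u = 1) ∧ σ v0 = 1}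
          ≃ {σ : Fin n → ℂ // (∀ v ∈ hx7_Wd e j, σ v ^ k = 1)
            ∧ (∀ v ∉ hx7_Wd e j, σ v = 1)
            ∧ (∀ i : Fin m, (i : ℕ) < j → ∏ u ∈ e i, σ u = 1) ∧ σ v0 = 1}
          × {τ : Fin n → ℂ // (∀ v ∈ New.erase us, τ v ^ k = 1)
            ∧ ∀ v ∉ New.erase us, τ v = 1} := by
        refine
        { toFun := fun σ => (⟨fun v => if v ∈ hx7_Wd e j then σ.1 v else 1, ?_, ?_, ?_, ?_⟩,
            ⟨fun v => if v ∈ New.erase us then σ.1 v else 1, ?_, ?_⟩)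
          invFun := fun p =>
            ⟨fun v => if v ∈ hx7_Wd e j then p.1.1 v
              else if v ∈ New.erase us then p.2.1 v
              else if v = us then (p.1.1 w * ∏ u ∈ New.erase us, p.2.1 u)⁻¹
              else 1, ?_, ?_, ?_, ?_⟩
          left_inv := ?_
          right_inv := ?_ }
        · intro v hv
          beta_reduce
          rw [if_pos hv]
          exact σ.2.1 v (hWmono (Nat.le_succ j) hv)
        · intro v hv
          beta_reduce
          rw [if_neg hv]
        · intro i hi
          beta_reduce
          rw [Finset.prod_congr rfl (fun u hu => if_pos (hsub j i hi hu))]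
          exact σ.2.2.2.1 i (by omega)
        · beta_reduce
          rw [if_pos (hv0W j hj1)]
          exact σ.2.2.2.2
        · intro v hv
          beta_reduce
          rw [if_pos hv]
          exact σ.2.1 v (hjW j' hj'lt (hNewsub (Finset.mem_of_mem_erase hv)))
        · intro v hv
          beta_reduce
          rw [if_neg hv]
        · -- invFun : roots on W (j+1)
          intro v hv
          beta_reduce
          rw [hWsucc, Finset.mem_union] at hv
          by_cases hvW : v ∈ hx7_Wd e j
          · rw [if_pos hvW]
            exact p.1.2.1 v hvW
          · have hvE : v ∈ e j' := by
              rcases hv with hv | hv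
              · exact hv
              · exact absurd hv hvW
            have hvN : v ∈ New := hNew ▸ Finset.mem_sdiff.2 ⟨hvE, hvW⟩
            rw [if_neg hvW]
            by_cases hvA : v ∈ New.erase us
            · rw [if_pos hvA]
              exact p.2.2.1 v hvA
            · have hveq : v = us := by_contra fun hne => hvA (Finset.mem_erase.2 ⟨hne, hvN⟩)
              rw [if_neg hvA, if_pos hveq, mul_inv]
              rw [mul_pow, inv_pow, inv_pow, p.1.2.1 w hwW, inv_one, one_mul,
                ← Finset.prod_pow, Finset.prod_congr rfl (fun u hu => p.2.2.1 u hu),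
                Finset.prod_const_one, inv_one]
        · -- invFun : one outside W (j+1)
          intro v hv
          beta_reduce
          have h1 : v ∉ hx7_Wd e j := fun h => hv (hWmono (Nat.le_succ j) h)
          have h2 : v ∉ New.erase us := fun h =>
            hv (hjW j' hj'lt (hNewsub (Finset.mem_of_mem_erase h)))
          have h3 : v ≠ us := fun h => hv (h ▸ husWs)
          rw [if_neg h1, if_neg h2, if_neg h3]
        · -- invFun : edge products
          intro i hi
          beta_reduce
          by_cases hij : (i : ℕ) < j
          · rw [Finset.prod_congr rfl (fun u hu => if_pos (hsub j i hij hu))]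
            exact p.1.2.2.2.1 i hij
          · have : i = j' := Fin.ext (by omega)
            subst this
            rw [hins, Finset.prod_insert hwNew, ← Finset.mul_prod_erase New _ hus]
            have hfw : (if w ∈ hx7_Wd e j then p.1.1 w
                else if w ∈ New.erase us then p.2.1 w
                else if w = us then (p.1.1 w * ∏ u ∈ New.erase us, p.2.1 u)⁻¹
                else 1) = p.1.1 w := if_pos hwW
            have hfus : (if us ∈ hx7_Wd e j then p.1.1 us
                else if us ∈ New.erase us then p.2.1 us
                else if us = us then (p.1.1 w * ∏ u ∈ New.erase us, p.2.1 u)⁻¹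
                else 1) = (p.1.1 w * ∏ u ∈ New.erase us, p.2.1 u)⁻¹ := by
              rw [if_neg husW, if_neg husA, if_pos rfl]
            have hrest : ∏ u ∈ New.erase us, (if u ∈ hx7_Wd e j then p.1.1 u
                else if u ∈ New.erase us then p.2.1 u
                else if u = us then (p.1.1 w * ∏ u ∈ New.erase us, p.2.1 u)⁻¹
                else 1) = ∏ u ∈ New.erase us, p.2.1 u :=
              Finset.prod_congr rfl (fun u hu => by
                rw [if_neg (hANotW u hu), if_pos hu])
            rw [hfw, hfus, hrest, mul_comm ((p.1.1 w * ∏ u ∈ New.erase us, p.2.1 u)⁻¹),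
              ← mul_assoc]
            apply mul_inv_cancel₀
            apply mul_ne_zero
            · exact hroot_ne _ (p.1.2.1 w hwW)
            · apply Finset.prod_ne_zero_iff.2
              intro u hu
              exact hroot_ne _ (p.2.2.1 u hu)
        · -- invFun : v0
          beta_reduce
          rw [if_pos (hv0W j hj1)]
          exact p.1.2.2.2.2
        · -- left_inv
          intro σ
          apply Subtype.ext
          funext v
          simp only
          by_cases hvW : v ∈ hx7_Wd e j
          · rw [if_pos hvW, if_pos hvW]
          · rw [if_neg hvW]
            by_cases hvA : v ∈ New.erase us
            · rw [if_pos hvA, if_pos hvA]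
            · rw [if_neg hvA]
              by_cases hvu : v = us
              · rw [if_pos hvu, if_pos hwW,
                  Finset.prod_congr rfl (fun u hu => if_pos hu)]
                have hprodEq : σ.1 w * (σ.1 us * ∏ u ∈ New.erase us, σ.1 u) = 1 := by
                  have h := σ.2.2.2.1 j' hj'lt
                  rwa [hins, Finset.prod_insert hwNew,
                    ← Finset.mul_prod_erase New _ hus] at h
                rw [hvu]
                exact (eq_inv_of_mul_eq_one_left (by rw [mul_left_comm]; exact hprodEq)).symm
              · rw [if_neg hvu]
                exact (σ.2.2.1 v (hnotW1 v hvW hvA hvu)).symm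
        · -- right_inv
          intro p
          apply Prod.ext
          · apply Subtype.ext
            funext v
            simp only
            by_cases hvW : v ∈ hx7_Wd e j
            · rw [if_pos hvW, if_pos hvW]
            · rw [if_neg hvW]
              exact (p.1.2.2.1 v hvW).symm
          · apply Subtype.ext
            funext v
            simp only
            by_cases hvA : v ∈ New.erase us
            · rw [if_pos hvA, if_neg (hANotW v hvA), if_pos hvA]
            · rw [if_neg hvA]
              exact (p.2.2.2 v hvA).symm
      have hcj := ih (by omega)
      rw [Nat.card_congr E, Nat.card_prod, hcj, hx7_card_free hk0, hAcard, ← pow_add]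
      congr 1
      ring
  have hWm : hx7_Wd e m = univ := by
    apply Finset.ext
    intro v
    simp only [Finset.mem_univ, iff_true]
    obtain ⟨j, hj⟩ := hcover v
    exact Finset.mem_biUnion.2 ⟨j, Finset.mem_filter.2 ⟨Finset.mem_univ j, j.isLt⟩, hj⟩
  have hiff : ∀ σ : Fin n → ℂ,
      ((∀ v, σ v ^ k = 1) ∧ (∀ j, ∏ u ∈ e j, σ u = 1) ∧ σ v0 = 1)
      ↔ ((∀ v ∈ hx7_Wd e m, σ v ^ k = 1) ∧ (∀ v ∉ hx7_Wd e m, σ v = 1)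
        ∧ (∀ i : Fin m, (i : ℕ) < m → ∏ u ∈ e i, σ u = 1) ∧ σ v0 = 1) := by
    intro σ
    constructor
    · rintro ⟨h1, h2, h3⟩
      exact ⟨fun v _ => h1 v, fun v hv => absurd (hWm ▸ Finset.mem_univ v) hv,
        fun i _ => h2 i, h3⟩
    · rintro ⟨h1, h2, h3, h4⟩
      exact ⟨fun v => h1 v (hWm ▸ Finset.mem_univ v), fun i => h3 i i.isLt, h4⟩
  rw [Nat.card_congr (Equiv.subtypeEquivRight hiff)]
  exact main m hm le_rfl

private lemma hx7_char {k m n : ℕ} (hk : 2 ≤ k) (hm : 1 ≤ m)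
    (e : Fin m → Finset (Fin n)) (hcard : ∀ j, (e j).card = k)
    (hcover : ∀ v : Fin n, ∃ j, v ∈ e j)
    (htree : ∀ j : Fin m, 0 < (j : ℕ) →
      ((e j) ∩ (univ.filter (fun i => i < j)).biUnion e).card = 1)
    (ρ : ℝ) (y : Fin n → ℝ) (hy : ∀ i, 0 < y i)
    (hρ : ∀ v : Fin n, ∑ j ∈ univ.filter (fun j => v ∈ e j),
      ∏ u ∈ (e j).erase v, ((y u : ℂ)) = (ρ : ℂ) * (y v : ℂ) ^ (k - 1))
    (v0 : Fin n) (hv0 : v0 ∈ e ⟨0, hm⟩)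
    (x : Fin n → ℂ) (hx0 : x ≠ 0)
    (hx : ∀ v, ∑ j ∈ univ.filter (fun j => v ∈ e j),
      ∏ u ∈ (e j).erase v, x u = (ρ : ℂ) * x v ^ (k - 1)) :
    ∃ (c : ℂ) (σ : Fin n → ℂ), c ≠ 0 ∧ (∀ v, σ v ^ k = 1)
      ∧ (∀ j, ∏ u ∈ e j, σ u = 1) ∧ σ v0 = 1
      ∧ x = fun v => c * (σ v * (y v : ℂ)) := by
  have hk1 : k - 1 + 1 = k := by omega
  -- real eigen equation
  have hρR : ∀ v, ∑ j ∈ univ.filter (fun j => v ∈ e j),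
      ∏ u ∈ (e j).erase v, y u = ρ * y v ^ (k - 1) := by
    intro v
    have h := hρ v
    have : ((∑ j ∈ univ.filter (fun j => v ∈ e j),
        ∏ u ∈ (e j).erase v, y u : ℝ) : ℂ) = ((ρ * y v ^ (k - 1) : ℝ) : ℂ) := by
      push_cast
      exact h
    exact_mod_cast this
  have hJne : ∀ v : Fin n, (univ.filter (fun j => v ∈ e j)).Nonempty := by
    intro v
    obtain ⟨j, hj⟩ := hcover v
    exact ⟨j, Finset.mem_filter.2 ⟨Finset.mem_univ j, hj⟩⟩
  have hprodpos : ∀ (j : Fin m) (v : Fin n), 0 < ∏ u ∈ (e j).erase v, y u :=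
    fun j v => Finset.prod_pos (fun u _ => hy u)
  have hρpos : 0 < ρ := by
    have h := hρR v0
    have hs : 0 < ∑ j ∈ univ.filter (fun j => v0 ∈ e j),
        ∏ u ∈ (e j).erase v0, y u :=
      Finset.sum_pos (fun j _ => hprodpos j v0) (hJne v0)
    nlinarith [pow_pos (hy v0) (k - 1)]
  set z : Fin n → ℝ := fun v => ‖x v‖ with hz
  obtain ⟨v1, -, hv1max⟩ := Finset.exists_max_image univ (fun v => z v / y v)
    ⟨v0, Finset.mem_univ v0⟩
  set t : ℝ := z v1 / y v1 with hT
  have ht : ∀ v, z v ≤ t * y v := by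
    intro v
    have := hv1max v (Finset.mem_univ v)
    rw [div_le_iff₀ (hy v)] at this
    linarith [this]
  have htpos : 0 < t := by
    obtain ⟨v, hv⟩ := Function.ne_iff.1 hx0
    have hzv : 0 < z v := by
      simpa [hz] using (norm_pos_iff.mpr hv)
    nlinarith [ht v, hy v]
  have hcarde : ∀ (j : Fin m) (v : Fin n), v ∈ e j → ((e j).erase v).card = k - 1 := by
    intro j v hv
    rw [Finset.card_erase_of_mem hv, hcard]
  -- |x| satisfies the inequality
  have habs : ∀ v, ρ * z v ^ (k - 1) ≤ ∑ j ∈ univ.filter (fun j => v ∈ e j),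
      ∏ u ∈ (e j).erase v, z u := by
    intro v
    have h1 : ρ * z v ^ (k - 1) = ‖(ρ : ℂ) * x v ^ (k - 1)‖ := by
      rw [norm_mul, norm_pow, Complex.norm_real, Real.norm_eq_abs, abs_of_pos hρpos]
    rw [h1, ← hx v]
    calc ‖∑ j ∈ univ.filter (fun j => v ∈ e j),
          ∏ u ∈ (e j).erase v, x u‖
        ≤ ∑ j ∈ univ.filter (fun j => v ∈ e j),
          ‖∏ u ∈ (e j).erase v, x u‖ := norm_sum_le _ _
      _ = ∑ j ∈ univ.filter (fun j => v ∈ e j), ∏ u ∈ (e j).erase v, z u := by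
          apply Finset.sum_congr rfl
          intro j _
          rw [norm_prod]
  -- sum over ty
  have hsumty : ∀ v : Fin n, ∑ j ∈ univ.filter (fun j => v ∈ e j),
      ∏ u ∈ (e j).erase v, (t * y u) = ρ * (t * y v) ^ (k - 1) := by
    intro v
    have : ∀ j ∈ univ.filter (fun j => v ∈ e j),
        ∏ u ∈ (e j).erase v, (t * y u) = t ^ (k - 1) * ∏ u ∈ (e j).erase v, y u := by
      intro j hj
      rw [Finset.prod_mul_distrib, Finset.prod_const,
        hcarde j v (Finset.mem_filter.1 hj).2]
    rw [Finset.sum_congr rfl this, ← Finset.mul_sum, hρR v, mul_pow]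
    ring
  -- edge-closedness of the max set
  have hedge : ∀ (j : Fin m) (v u : Fin n), v ∈ e j → u ∈ e j →
      z v = t * y v → z u = t * y u := by
    intro j v u hvj huj hzv
    by_cases huv : u = v
    · rw [huv]; exact hzv
    have hjJ : j ∈ univ.filter (fun j => v ∈ e j) :=
      Finset.mem_filter.2 ⟨Finset.mem_univ j, hvj⟩
    have hle : ∀ i ∈ univ.filter (fun j => v ∈ e j),
        ∏ u ∈ (e i).erase v, z u ≤ ∏ u ∈ (e i).erase v, (t * y u) := by
      intro i _
      apply Finset.prod_le_prod
      · intro u _; exact norm_nonneg _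
      · intro u _; exact ht u
    have hsandwich : ∑ i ∈ univ.filter (fun j => v ∈ e j),
        ∏ u ∈ (e i).erase v, z u
        = ∑ i ∈ univ.filter (fun j => v ∈ e j), ∏ u ∈ (e i).erase v, (t * y u) := by
      apply le_antisymm (Finset.sum_le_sum hle)
      calc ∑ i ∈ univ.filter (fun j => v ∈ e j), ∏ u ∈ (e i).erase v, (t * y u)
          = ρ * (t * y v) ^ (k - 1) := hsumty v
        _ = ρ * z v ^ (k - 1) := by rw [hzv]
        _ ≤ ∑ i ∈ univ.filter (fun j => v ∈ e j), ∏ u ∈ (e i).erase v, z u := habs v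
    have heq := (Finset.sum_eq_sum_iff_of_le hle).1 hsandwich j hjJ
    have := hx7_prod_eq ((e j).erase v) z (fun u => t * y u)
      (fun u _ => norm_nonneg _) (fun u _ => ht u)
      (fun u _ => mul_pos htpos (hy u)) heq
    exact this u (Finset.mem_erase.2 ⟨huv, huj⟩)
  -- everything attains the max
  have hall : ∀ v, z v = t * y v := by
    apply hx7_conn hm e hcover htree _ hedge v1
    rw [hT]
    exact (div_mul_cancel₀ _ (hy v1).ne').symm
  have hxne : ∀ v, x v ≠ 0 := by
    intro v hv
    have h0 : z v = 0 := by simp [hz, hv]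
    have := hall v
    nlinarith [mul_pos htpos (hy v)]
  have hcne : ∀ v, ((t * y v : ℝ) : ℂ) ≠ 0 := by
    intro v
    simp only [ne_eq, Complex.ofReal_eq_zero]
    exact (mul_pos htpos (hy v)).ne'
  -- phases
  set τ : Fin n → ℂ := fun v => x v / ((t * y v : ℝ) : ℂ) with hτdef
  have hτne : ∀ v, τ v ≠ 0 := fun v => div_ne_zero (hxne v) (hcne v)
  have hallabs : ∀ v, ‖x v‖ = t * y v := hall
  have hxv : ∀ v, x v = ((t * y v : ℝ) : ℂ) * τ v := by
    intro v
    rw [hτdef]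
    rw [mul_div_assoc', mul_comm, mul_div_assoc, div_self (hcne v), mul_one]
  -- equality in triangle inequality
  have hterm : ∀ (v : Fin n) (j : Fin m), v ∈ e j →
      ∏ u ∈ (e j).erase v, x u
        = ((∏ u ∈ (e j).erase v, (t * y u) : ℝ) : ℂ) * τ v ^ (k - 1) := by
    intro v j hvj
    have hu1 : ‖τ v ^ (k - 1)‖ = 1 := by
      rw [norm_pow, hτdef]
      simp only [norm_div, Complex.norm_real, Real.norm_eq_abs]
      rw [hallabs v, abs_of_pos (mul_pos htpos (hy v))]
      rw [div_self (mul_pos htpos (hy v)).ne', one_pow]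
    have habs_eq : ∀ i ∈ univ.filter (fun j => v ∈ e j),
        ‖∏ u ∈ (e i).erase v, x u‖ = ∏ u ∈ (e i).erase v, (t * y u) := by
      intro i _
      rw [norm_prod]
      apply Finset.prod_congr rfl
      intro u _
      rw [hallabs u]
    have hsum_eq : ∑ i ∈ univ.filter (fun j => v ∈ e j),
        ∏ u ∈ (e i).erase v, x u
        = ((∑ i ∈ univ.filter (fun j => v ∈ e j),
            ‖∏ u ∈ (e i).erase v, x u‖ : ℝ) : ℂ) * τ v ^ (k - 1) := by
      rw [Finset.sum_congr rfl habs_eq, hsumty v, hx v]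
      rw [hxv v, mul_pow, ← mul_assoc]
      congr 1
      push_cast
      ring
    have := hx7_tri _ _ _ hu1 hsum_eq j (Finset.mem_filter.2 ⟨Finset.mem_univ j, hvj⟩)
    rw [this, habs_eq j (Finset.mem_filter.2 ⟨Finset.mem_univ j, hvj⟩)]
  -- products of τ over edges
  have hτedge : ∀ (j : Fin m) (v : Fin n), v ∈ e j →
      ∏ u ∈ e j, τ u = τ v ^ k := by
    intro j v hvj
    have hprodx : ∏ u ∈ e j, x u
        = ((t * y v : ℝ) : ℂ) * ((∏ u ∈ (e j).erase v, (t * y u) : ℝ) : ℂ) * τ v ^ k := by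
      rw [← Finset.mul_prod_erase (e j) x hvj, hterm v j hvj, hxv v]
      rw [show ((t * y v : ℝ) : ℂ) * τ v
          * (((∏ u ∈ (e j).erase v, (t * y u) : ℝ) : ℂ) * τ v ^ (k - 1))
          = ((t * y v : ℝ) : ℂ) * ((∏ u ∈ (e j).erase v, (t * y u) : ℝ) : ℂ)
            * (τ v ^ (k - 1) * τ v) from by ring, ← pow_succ, hk1]
    have hprodsplit : ∏ u ∈ e j, τ u
        = (∏ u ∈ e j, x u) / ∏ u ∈ e j, ((t * y u : ℝ) : ℂ) := by
      rw [← Finset.prod_div_distrib]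
    have hprodc : ∏ u ∈ e j, ((t * y u : ℝ) : ℂ)
        = ((t * y v : ℝ) : ℂ) * ((∏ u ∈ (e j).erase v, (t * y u) : ℝ) : ℂ) := by
      rw [← Finset.mul_prod_erase (e j) _ hvj]
      congr 1
      push_cast
      rfl
    rw [hprodsplit, hprodx, hprodc, mul_comm, mul_div_assoc]
    rw [div_self (by
      apply mul_ne_zero (hcne v)
      simp only [ne_eq, Complex.ofReal_eq_zero]
      exact (Finset.prod_pos (fun u _ => mul_pos htpos (hy u))).ne'), mul_one]
  -- τ^k is constant
  have hτconst : ∀ v, τ v ^ k = τ v0 ^ k := by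
    apply hx7_conn hm e hcover htree (fun v => τ v ^ k = τ v0 ^ k) _ v0 rfl
    intro j v u hvj huj hv
    rw [← hτedge j u huj, hτedge j v hvj, hv]
  have hτedge0 : ∀ j : Fin m, ∏ u ∈ e j, τ u = τ v0 ^ k := by
    intro j
    have : (e j).Nonempty := by
      rw [← Finset.card_pos, hcard]; omega
    obtain ⟨v, hv⟩ := this
    rw [hτedge j v hv, hτconst v]
  -- construct c and σ
  refine ⟨(t : ℂ) * τ v0, fun v => τ v / τ v0, ?_, ?_, ?_, ?_, ?_⟩
  · exact mul_ne_zero (Complex.ofReal_ne_zero.2 htpos.ne') (hτne v0)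
  · intro v
    rw [div_pow, hτconst v, div_self (pow_ne_zero k (hτne v0))]
  · intro j
    rw [Finset.prod_div_distrib, Finset.prod_const, hcard, hτedge0 j,
      div_self (pow_ne_zero k (hτne v0))]
  · exact div_self (hτne v0)
  · funext v
    rw [hxv v]
    push_cast
    have hcancel : τ v0 * (τ v / τ v0) = τ v := by
      rw [mul_comm, div_mul_cancel₀ _ (hτne v0)]
    calc (↑t * ↑(y v) : ℂ) * τ v = ↑t * ↑(y v) * (τ v0 * (τ v / τ v0)) := by rw [hcancel]
      _ = ↑t * τ v0 * (τ v / τ v0 * ↑(y v)) := by ring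

private lemma hx7_rev {k m n : ℕ} (hk : 2 ≤ k)
    (e : Fin m → Finset (Fin n)) (hcard : ∀ j, (e j).card = k)
    (ρ : ℝ) (y : Fin n → ℝ)
    (hρ : ∀ v : Fin n, ∑ j ∈ univ.filter (fun j => v ∈ e j),
      ∏ u ∈ (e j).erase v, ((y u : ℂ)) = (ρ : ℂ) * (y v : ℂ) ^ (k - 1))
    (σ : Fin n → ℂ) (hσ1 : ∀ v, σ v ^ k = 1) (hσ2 : ∀ j, ∏ u ∈ e j, σ u = 1) :
    ∀ v, ∑ j ∈ univ.filter (fun j => v ∈ e j),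
      ∏ u ∈ (e j).erase v, (σ u * (y u : ℂ))
        = (ρ : ℂ) * (σ v * (y v : ℂ)) ^ (k - 1) := by
  have hk1 : k - 1 + 1 = k := by omega
  have hσne : ∀ v, σ v ≠ 0 := by
    intro v h0
    have := hσ1 v
    rw [h0, zero_pow (by omega : k ≠ 0)] at this
    exact zero_ne_one this
  intro v
  have herase : ∀ j : Fin m, v ∈ e j →
      ∏ u ∈ (e j).erase v, σ u = σ v ^ (k - 1) := by
    intro j hv
    have h1 : σ v * ∏ u ∈ (e j).erase v, σ u = 1 := by
      rw [Finset.mul_prod_erase _ _ hv]; exact hσ2 j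
    have h2 : σ v * σ v ^ (k - 1) = 1 := by
      rw [← pow_succ', hk1]; exact hσ1 v
    exact mul_left_cancel₀ (hσne v) (h1.trans h2.symm)
  have hterm : ∀ j ∈ univ.filter (fun j => v ∈ e j),
      ∏ u ∈ (e j).erase v, (σ u * (y u : ℂ))
        = σ v ^ (k - 1) * ∏ u ∈ (e j).erase v, ((y u : ℂ)) := by
    intro j hj
    rw [Finset.prod_mul_distrib, herase j (Finset.mem_filter.1 hj).2]
  rw [Finset.sum_congr rfl hterm, ← Finset.mul_sum, hρ v, mul_pow]
  ring

/-- for a `k`-uniform hypertree `T` with `m ≥ 1` edges (edges `e 0, …,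
e (m-1)`, every vertex covered, each later edge meeting the union of the earlier ones in
exactly one vertex) and Perron–Frobenius eigenvalue `ρ` of `𝒜(T)`, the number of
eigenvectors of `𝒜(T)` associated with `ρ`, up to nonzero complex scalars, is
`k^{m(k-2)}`. -/
theorem stmt7 (k m n : ℕ) (hk : 2 ≤ k) (hm : 1 ≤ m) (hn : n = m * (k - 1) + 1)
    (e : Fin m → Finset (Fin n))
    (hcard : ∀ j, (e j).card = k)
    (hinj : Function.Injective e)
    (hcover : ∀ v : Fin n, ∃ j, v ∈ e j)
    (htree : ∀ j : Fin m, 0 < (j : ℕ) →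
      ((e j) ∩ (univ.filter (fun i => i < j)).biUnion e).card = 1)
    (ρ : ℝ) (y : Fin n → ℝ) (hy : ∀ i, 0 < y i)
    (hρ : ∀ v, adjApply (univ.image e) (fun i => (y i : ℂ)) v =
      (ρ : ℂ) * (y v : ℂ) ^ (k - 1)) :
    Nat.card (Quot (fun
        (x z : {x : Fin n → ℂ //
          x ≠ 0 ∧ ∀ v, adjApply (univ.image e) x v = (ρ : ℂ) * x v ^ (k - 1)}) =>
      ∃ c : ℂ, c ≠ 0 ∧ z.1 = c • x.1)) = k ^ (m * (k - 2)) := by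
  have hρ' : ∀ v : Fin n, ∑ j ∈ univ.filter (fun j => v ∈ e j),
      ∏ u ∈ (e j).erase v, ((y u : ℂ)) = (ρ : ℂ) * (y v : ℂ) ^ (k - 1) := by
    intro v
    rw [← hx7_adj e hinj]
    exact hρ v
  obtain ⟨v0, hv0⟩ : (e ⟨0, hm⟩).Nonempty := by
    rw [← Finset.card_pos, hcard]; omega
  have hYne : ∀ v : Fin n, ((y v : ℂ)) ≠ 0 :=
    fun v => Complex.ofReal_ne_zero.2 (hy v).ne'
  have hσne : ∀ (σ : Fin n → ℂ), (∀ v, σ v ^ k = 1) → ∀ v, σ v ≠ 0 := by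
    intro σ h v h0
    have := h v
    rw [h0, zero_pow (by omega : k ≠ 0)] at this
    exact zero_ne_one this
  -- the eigenvector built from σ
  have hmk : ∀ σ : Fin n → ℂ, (∀ v, σ v ^ k = 1) → (∀ j, ∏ u ∈ e j, σ u = 1) →
      ((fun v => σ v * (y v : ℂ)) ≠ 0
        ∧ ∀ v, adjApply (univ.image e) (fun v => σ v * (y v : ℂ)) v
          = (ρ : ℂ) * (σ v * (y v : ℂ)) ^ (k - 1)) := by
    intro σ h1 h2
    constructor
    · intro h
      have h0 := congrFun h v0
      simp only [Pi.zero_apply] at h0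
      exact (mul_ne_zero (hσne σ h1 v0) (hYne v0)) h0
    · intro v
      rw [hx7_adj e hinj]
      exact hx7_rev hk e hcard ρ y hρ' σ h1 h2 v
  -- the relation is an equivalence
  set r := (fun (x z : {x : Fin n → ℂ //
      x ≠ 0 ∧ ∀ v, adjApply (univ.image e) x v = (ρ : ℂ) * x v ^ (k - 1)}) =>
    ∃ c : ℂ, c ≠ 0 ∧ z.1 = c • x.1) with hr
  have hequiv : Equivalence r := by
    constructor
    · intro a; exact ⟨1, one_ne_zero, (one_smul ℂ a.1).symm⟩
    · rintro a b ⟨c, hc, h⟩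
      exact ⟨c⁻¹, inv_ne_zero hc, by rw [h, smul_smul, inv_mul_cancel₀ hc, one_smul]⟩
    · rintro a b c ⟨d, hd, hab⟩ ⟨d', hd', hbc⟩
      exact ⟨d' * d, mul_ne_zero hd' hd, by rw [hbc, hab, smul_smul]⟩
  -- the bijection
  set F : {σ : Fin n → ℂ //
      (∀ v, σ v ^ k = 1) ∧ (∀ j, ∏ u ∈ e j, σ u = 1) ∧ σ v0 = 1} → Quot r :=
    fun σ => Quot.mk r ⟨fun v => σ.1 v * (y v : ℂ), hmk σ.1 σ.2.1 σ.2.2.1⟩ with hF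
  have hbij : Function.Bijective F := by
    constructor
    · intro σ σ' hFeq
      have hrel : r ⟨fun v => σ.1 v * (y v : ℂ), hmk σ.1 σ.2.1 σ.2.2.1⟩
          ⟨fun v => σ'.1 v * (y v : ℂ), hmk σ'.1 σ'.2.1 σ'.2.2.1⟩ :=
        hequiv.eqvGen_iff.1 (Quot.eqvGen_exact hFeq)
      obtain ⟨c, hc, hceq⟩ := hrel
      have hc1 : c = 1 := by
        have h0 := congrFun hceq v0
        simp only [Pi.smul_apply, smul_eq_mul, σ.2.2.2, σ'.2.2.2, one_mul] at h0
        have h1 : 1 * ((y v0 : ℂ)) = c * ((y v0 : ℂ)) := by rw [one_mul]; exact h0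
        exact (mul_right_cancel₀ (hYne v0) h1).symm
      apply Subtype.ext
      funext v
      have h0 := congrFun hceq v
      simp only [Pi.smul_apply, smul_eq_mul, hc1, one_mul] at h0
      exact mul_right_cancel₀ (hYne v) h0.symm
    · intro q
      obtain ⟨x, hxq⟩ := Quot.exists_rep q
      obtain ⟨c, σ, hc0, h1, h2, h3, heq⟩ := hx7_char hk hm e hcard hcover htree
        ρ y hy hρ' v0 hv0 x.1 x.2.1 (fun v => by
          rw [← hx7_adj e hinj]; exact x.2.2 v)
      refine ⟨⟨σ, h1, h2, h3⟩, ?_⟩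
      rw [← hxq, hF]
      apply Quot.sound
      refine ⟨c, hc0, ?_⟩
      rw [heq]
      funext v
      simp only [Pi.smul_apply, smul_eq_mul]
  rw [← Nat.card_congr (Equiv.ofBijective F hbij)]
  exact hx7_count hk hm e hcard hcover htree v0 hv0
end

section
/- Let n > k ≥ 2 and let K_n^{[k]} be the complete k-uniform hypergraph on n vertices (whose edges are all k-element subsets of {1,…,n}). Then the binomial coefficient ρ = C(n−1,k−1) is an eigenvalue of the adjacency tensor 𝒜(K_n^{[k]}) with the all-ones vector as eigenvector, and every eigenvector of 𝒜(K_n^{[k]}) associated with ρ is a nonzero complex scalar multiple of the all-ones vector; that is, |𝕍_ρ(𝒜(K_n^{[k]}))| = 1. -/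
open Finset

/-- The edge set of the complete `k`-uniform hypergraph on `Fin n`: all `k`-element
subsets. -/
def completeEdges (n k : ℕ) : Finset (Finset (Fin n)) :=
  Finset.powersetCard k univ

lemma re_eq_abs_imp {z : ℂ} (h : z.re = ‖z‖) : z = ((‖z‖ : ℝ) : ℂ) := by
  have h2 : ‖z‖ ^ 2 = z.re ^ 2 + z.im ^ 2 := by
    rw [Complex.sq_norm, Complex.normSq_apply]; ring
  rw [h] at h2
  have him : z.im = 0 := by nlinarith
  apply Complex.ext
  · simp [h]
  · simp [him]

lemma tri_eq {ι : Type*} {s : Finset ι} {f : ι → ℂ}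
    (h : ‖∑ i ∈ s, f i‖ = ∑ i ∈ s, ‖f i‖) :
    ∀ i ∈ s, (starRingEnd ℂ) (∑ j ∈ s, f j) * f i =
      ((‖∑ j ∈ s, f j‖ * ‖f i‖ : ℝ) : ℂ) := by
  set w := ∑ j ∈ s, f j with hw
  have hle : ∀ i ∈ s, ((starRingEnd ℂ) w * f i).re ≤ ‖w‖ * ‖f i‖ := by
    intro i _
    calc ((starRingEnd ℂ) w * f i).re ≤ ‖(starRingEnd ℂ) w * f i‖ :=
          Complex.re_le_norm _
      _ = ‖w‖ * ‖f i‖ := by rw [norm_mul, Complex.norm_conj]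
  have hsum : ∑ i ∈ s, ((starRingEnd ℂ) w * f i).re
      = ∑ i ∈ s, ‖w‖ * ‖f i‖ := by
    have l1 : ∑ i ∈ s, ((starRingEnd ℂ) w * f i).re = ((starRingEnd ℂ) w * w).re := by
      rw [← Complex.re_sum, ← Finset.mul_sum, ← hw]
    have l2 : ((starRingEnd ℂ) w * w).re = ‖w‖ ^ 2 := by
      rw [mul_comm, Complex.mul_conj]
      norm_cast
      rw [Complex.sq_norm]
    rw [l1, l2, ← Finset.mul_sum, ← h, sq]
  have heq := (Finset.sum_eq_sum_iff_of_le hle).mp hsum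
  intro i hi
  have h1 : ((starRingEnd ℂ) w * f i).re = ‖(starRingEnd ℂ) w * f i‖ := by
    rw [norm_mul, Complex.norm_conj]; exact heq i hi
  have := re_eq_abs_imp h1
  rwa [norm_mul, Complex.norm_conj] at this

lemma tri_eq' {ι : Type*} {s : Finset ι} {f : ι → ℂ}
    (h : ‖∑ i ∈ s, f i‖ = ∑ i ∈ s, ‖f i‖)
    (hw : ∑ i ∈ s, f i ≠ 0) {i j : ι} (hi : i ∈ s) (hj : j ∈ s)
    (habs : ‖f i‖ = ‖f j‖) : f i = f j := by
  have e1 := tri_eq h i hi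
  have e2 := tri_eq h j hj
  rw [habs] at e1
  have : (starRingEnd ℂ) (∑ j ∈ s, f j) * f i = (starRingEnd ℂ) (∑ j ∈ s, f j) * f j :=
    e1.trans e2.symm
  refine mul_left_cancel₀ (fun hc => hw ?_) this
  exact star_eq_zero.mp hc
open Finset


lemma adj_complete {n k : ℕ} (hk : 1 ≤ k) (x : Fin n → ℂ) (v : Fin n) :
    (∑ e ∈ (Finset.powersetCard k (univ : Finset (Fin n))).filter (fun e => v ∈ e),
      ∏ u ∈ e.erase v, x u) =
    ∑ S ∈ Finset.powersetCard (k-1) ((univ : Finset (Fin n)).erase v), ∏ u ∈ S, x u := by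
  refine Finset.sum_nbij' (fun e => e.erase v) (fun S => insert v S) ?_ ?_ ?_ ?_ ?_
  · intro e he
    simp only [mem_filter, mem_powersetCard] at he ⊢
    refine ⟨fun u hu => ?_, ?_⟩
    · rw [mem_erase] at hu ⊢; exact ⟨hu.1, mem_univ _⟩
    · rw [card_erase_of_mem he.2, he.1.2]
  · intro S hS
    simp only [mem_powersetCard, mem_filter] at hS ⊢
    have hv : v ∉ S := fun h => (mem_erase.mp (hS.1 h)).1 rfl
    refine ⟨⟨fun u _ => mem_univ _, ?_⟩, mem_insert_self _ _⟩
    rw [card_insert_of_notMem hv, hS.2]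
    omega
  · intro e he
    simp only [mem_filter] at he
    exact insert_erase he.2
  · intro S hS
    simp only [mem_powersetCard] at hS
    exact erase_insert (fun h => (mem_erase.mp (hS.1 h)).1 rfl)
  · intro e _; rfl

lemma rigidity {n k : ℕ} (hk : 2 ≤ k) (hn : k < n) (x : Fin n → ℂ) (hx : x ≠ 0)
    (heig : ∀ v : Fin n, ∑ S ∈ Finset.powersetCard (k-1) ((univ : Finset (Fin n)).erase v),
        ∏ u ∈ S, x u = ((n-1).choose (k-1) : ℂ) * x v ^ (k-1)) :
    ∃ c : ℂ, c ≠ 0 ∧ x = fun _ => c := by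
  have hn3 : 3 ≤ n := by omega
  have hnpos : 0 < n := by omega
  set ρ : ℕ := (n-1).choose (k-1) with hρ
  have hρpos : 0 < ρ := Nat.choose_pos (by omega)
  set y : Fin n → ℝ := fun v => ‖x v‖ with hy
  have hyn : ∀ v, 0 ≤ y v := fun v => norm_nonneg _
  haveI : Nonempty (Fin n) := ⟨⟨0, hnpos⟩⟩
  obtain ⟨v0, -, hv0⟩ := Finset.exists_max_image (univ : Finset (Fin n)) y univ_nonempty
  set M : ℝ := y v0 with hM
  have hMle : ∀ v, y v ≤ M := fun v => hv0 v (mem_univ v)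
  have hM0 : 0 < M := by
    obtain ⟨v, hv⟩ := Function.ne_iff.mp hx
    have : 0 < y v := norm_pos_iff.mpr hv
    linarith [hMle v]
  have hcardE : ∀ v : Fin n, #((univ : Finset (Fin n)).erase v) = n - 1 := by
    intro v; rw [card_erase_of_mem (mem_univ v), card_univ, Fintype.card_fin]
  have hcardP : ∀ v : Fin n,
      #(Finset.powersetCard (k-1) ((univ : Finset (Fin n)).erase v)) = ρ := by
    intro v; rw [Finset.card_powersetCard, hcardE]
  -- absolute value bound on products
  have hprodle : ∀ (S : Finset (Fin n)), #S = k - 1 →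
      ‖∏ u ∈ S, x u‖ ≤ M ^ (k-1) := by
    intro S hS
    rw [norm_prod]
    calc ∏ u ∈ S, ‖x u‖ ≤ ∏ u ∈ S, M :=
          Finset.prod_le_prod (fun u _ => hyn u) (fun u _ => hMle u)
      _ = M ^ (k-1) := by rw [prod_const, hS]
  -- key equality chain at every vertex whose modulus is M
  have key : ∀ v : Fin n, y v = M →
      (∀ S ∈ Finset.powersetCard (k-1) ((univ : Finset (Fin n)).erase v),
        ‖∏ u ∈ S, x u‖ = M ^ (k-1)) ∧
      ‖∑ S ∈ Finset.powersetCard (k-1) ((univ : Finset (Fin n)).erase v),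
          ∏ u ∈ S, x u‖
        = ∑ S ∈ Finset.powersetCard (k-1) ((univ : Finset (Fin n)).erase v),
            ‖∏ u ∈ S, x u‖ := by
    intro v hv
    set P := Finset.powersetCard (k-1) ((univ : Finset (Fin n)).erase v) with hP
    have habs_sum : ‖∑ S ∈ P, ∏ u ∈ S, x u‖ = ρ * M ^ (k-1) := by
      rw [heig v, norm_mul, norm_pow, Complex.norm_natCast]
      rw [show ‖x v‖ = M from hv]
    have h1 : ‖∑ S ∈ P, ∏ u ∈ S, x u‖ ≤ ∑ S ∈ P, ‖∏ u ∈ S, x u‖ :=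
      norm_sum_le _ _
    have h2 : ∑ S ∈ P, ‖∏ u ∈ S, x u‖ ≤ ρ * M ^ (k-1) := by
      calc ∑ S ∈ P, ‖∏ u ∈ S, x u‖ ≤ ∑ S ∈ P, M ^ (k-1) :=
            Finset.sum_le_sum (fun S hS =>
              hprodle S (Finset.mem_powersetCard.mp hS).2)
        _ = ρ * M ^ (k-1) := by rw [sum_const, hcardP v, nsmul_eq_mul]
    have hsum_eq : ∑ S ∈ P, ‖∏ u ∈ S, x u‖ = ρ * M ^ (k-1) := by
      linarith [habs_sum ▸ h1]
    constructor
    · intro S hS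
      have := (Finset.sum_eq_sum_iff_of_le
        (fun S hS => hprodle S (Finset.mem_powersetCard.mp hS).2)).mp
        (by rw [hsum_eq, ← nsmul_eq_mul, ← hcardP v, ← sum_const])
      exact this S hS
    · rw [habs_sum, hsum_eq]
  -- Step 1: all moduli equal M
  have hallM : ∀ u, y u = M := by
    intro u
    rcases eq_or_ne u v0 with rfl | hu
    · rfl
    · obtain ⟨S, hS1, hS2, hS3⟩ := Finset.exists_subsuperset_card_eq
        (s := {u}) (t := (univ : Finset (Fin n)).erase v0) (n := k - 1)
        (by simp [hu]) (by simp; omega) (by rw [hcardE]; omega)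
      have hSP : S ∈ Finset.powersetCard (k-1) ((univ : Finset (Fin n)).erase v0) :=
        Finset.mem_powersetCard.mpr ⟨hS2, hS3⟩
      have hprod := (key v0 rfl).1 S hSP
      have huS : u ∈ S := hS1 (mem_singleton_self u)
      rw [norm_prod] at hprod
      have hsplit : y u * ∏ w ∈ S.erase u, ‖x w‖ = M ^ (k-1) := by
        rw [← hprod, Finset.mul_prod_erase _ _ huS]
      have herase_le : ∏ w ∈ S.erase u, ‖x w‖ ≤ M ^ (k-2) := by
        calc ∏ w ∈ S.erase u, ‖x w‖ ≤ ∏ w ∈ S.erase u, M :=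
              Finset.prod_le_prod (fun w _ => hyn w) (fun w _ => hMle w)
          _ = M ^ (k-2) := by rw [prod_const, card_erase_of_mem huS, hS3, show k-1-1 = k-2 from by omega]
      have hMk : M ^ (k-1) = M * M ^ (k-2) := by
        rw [← pow_succ']; congr 1; omega
      have hstep : M * M ^ (k-2) ≤ y u * M ^ (k-2) := by
        calc M * M ^ (k-2) = M ^ (k-1) := hMk.symm
          _ = y u * ∏ w ∈ S.erase u, ‖x w‖ := hsplit.symm
          _ ≤ y u * M ^ (k-2) := by
              apply mul_le_mul_of_nonneg_left herase_le (hyn u)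
      have := le_of_mul_le_mul_right hstep (pow_pos hM0 (k-2))
      linarith [hMle u]
  -- Step 2: all coordinates equal
  have hstep3 : ∀ u u' : Fin n, x u = x u' := by
    intro u u'
    rcases eq_or_ne u u' with rfl | huu
    · rfl
    · -- pick v distinct from u, u'
      have hcompl : (({u, u'} : Finset (Fin n))ᶜ).Nonempty := by
        rw [← Finset.card_pos, Finset.card_compl, Fintype.card_fin]
        have h2 : #({u, u'} : Finset (Fin n)) ≤ 2 :=
          (Finset.card_insert_le _ _).trans (by simp)
        omega
      obtain ⟨v, hv⟩ := hcompl
      rw [Finset.mem_compl, Finset.mem_insert, Finset.mem_singleton] at hv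
      push_neg at hv
      obtain ⟨hvu, hvu'⟩ := hv
      -- choose S
      obtain ⟨S, hS1, hS2, hS3⟩ := Finset.exists_subsuperset_card_eq
        (s := {u}) (t := (((univ : Finset (Fin n)).erase v)).erase u') (n := k - 1)
        (by simp [huu, Ne.symm hvu]) (by simp; omega)
        (by rw [card_erase_of_mem (by simp [Ne.symm hvu']), hcardE]; omega)
      have huS : u ∈ S := hS1 (mem_singleton_self u)
      have hu'S : u' ∉ S := fun h => (Finset.mem_erase.mp (hS2 h)).1 rfl
      have hu'nSe : u' ∉ S.erase u := fun h => hu'S (Finset.erase_subset _ _ h)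
      set S' := insert u' (S.erase u) with hS'
      have hSsub : S ⊆ (univ : Finset (Fin n)).erase v :=
        hS2.trans (Finset.erase_subset _ _)
      have hSP : S ∈ Finset.powersetCard (k-1) ((univ : Finset (Fin n)).erase v) :=
        Finset.mem_powersetCard.mpr ⟨hSsub, hS3⟩
      have hS'P : S' ∈ Finset.powersetCard (k-1) ((univ : Finset (Fin n)).erase v) := by
        refine Finset.mem_powersetCard.mpr ⟨?_, ?_⟩
        · intro w hw
          rcases Finset.mem_insert.mp hw with rfl | hw
          · exact Finset.mem_erase.mpr ⟨Ne.symm hvu', mem_univ _⟩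
          · exact hSsub (Finset.erase_subset _ _ hw)
        · rw [Finset.card_insert_of_notMem hu'nSe, card_erase_of_mem huS, hS3]
          omega
      -- triangle equality at v gives equal products
      have hkeyv := key v (hallM v)
      have hsumne : (∑ T ∈ Finset.powersetCard (k-1) ((univ : Finset (Fin n)).erase v),
          ∏ w ∈ T, x w) ≠ 0 := by
        intro h0
        have := hkeyv.2
        rw [h0, norm_zero] at this
        have h1 := (key v (hallM v)).1 S hSP
        have h2 : (0:ℝ) < M ^ (k-1) := pow_pos hM0 _
        have h3 : ∀ T ∈ Finset.powersetCard (k-1) ((univ : Finset (Fin n)).erase v),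
            (0:ℝ) ≤ ‖∏ w ∈ T, x w‖ := fun T _ => norm_nonneg _
        have h4 := Finset.sum_eq_zero_iff_of_nonneg h3 |>.mp this.symm S hSP
        rw [h1] at h4
        linarith
      have habs_eq : ‖∏ w ∈ S, x w‖ = ‖∏ w ∈ S', x w‖ := by
        rw [hkeyv.1 S hSP, hkeyv.1 S' hS'P]
      have hprod_eq : ∏ w ∈ S, x w = ∏ w ∈ S', x w :=
        tri_eq' hkeyv.2 hsumne hSP hS'P habs_eq
      -- cancel common factor
      have hL : ∏ w ∈ S, x w = x u * ∏ w ∈ S.erase u, x w :=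
        (Finset.mul_prod_erase _ _ huS).symm
      have hR : ∏ w ∈ S', x w = x u' * ∏ w ∈ S.erase u, x w :=
        Finset.prod_insert hu'nSe
      have hPne : (∏ w ∈ S.erase u, x w) ≠ 0 := by
        rw [Finset.prod_ne_zero_iff]
        intro w _
        intro h0
        have : y w = 0 := by rw [hy]; simp [h0]
        rw [hallM w] at this
        linarith
      have : x u * ∏ w ∈ S.erase u, x w = x u' * ∏ w ∈ S.erase u, x w := by
        rw [← hL, ← hR, hprod_eq]
      exact mul_right_cancel₀ hPne this
  refine ⟨x ⟨0, hnpos⟩, ?_, ?_⟩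
  · intro h0
    have : y ⟨0, hnpos⟩ = 0 := by rw [hy]; simp [h0]
    rw [hallM] at this
    linarith
  · funext v
    exact hstep3 v ⟨0, hnpos⟩

/-- for `n > k ≥ 2`, `ρ = C(n-1, k-1)` is an eigenvalue of
`𝒜(K_n^{[k]})` with the all-ones vector as eigenvector, and every eigenvector of
`𝒜(K_n^{[k]})` associated with `ρ` is a nonzero scalar multiple of the all-ones vector;
that is, `|𝕍_ρ(𝒜(K_n^{[k]}))| = 1`. -/
theorem stmt9 (n k : ℕ) (hk : 2 ≤ k) (hn : k < n) :
    ((fun _ => (1 : ℂ)) : Fin n → ℂ) ≠ 0 ∧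
    (∀ v, adjApply (completeEdges n k) (fun _ => 1) v =
      ((n - 1).choose (k - 1) : ℂ) * (1 : ℂ) ^ (k - 1)) ∧
    (∀ x : Fin n → ℂ, x ≠ 0 →
      (∀ v, adjApply (completeEdges n k) x v =
        ((n - 1).choose (k - 1) : ℂ) * x v ^ (k - 1)) →
      ∃ c : ℂ, c ≠ 0 ∧ x = fun _ => c) ∧
    Nat.card (Quot (fun
        (x z : {x : Fin n → ℂ //
          x ≠ 0 ∧ ∀ v, adjApply (completeEdges n k) x v =
            ((n - 1).choose (k - 1) : ℂ) * x v ^ (k - 1)}) =>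
      ∃ c : ℂ, c ≠ 0 ∧ z.1 = c • x.1)) = 1 := by
  have hnpos : 0 < n := by omega
  have hadj : ∀ (x : Fin n → ℂ) (v : Fin n), adjApply (completeEdges n k) x v =
      ∑ S ∈ Finset.powersetCard (k-1) ((univ : Finset (Fin n)).erase v), ∏ u ∈ S, x u :=
    fun x v => adj_complete (by omega) x v
  have hone : ((fun _ => (1 : ℂ)) : Fin n → ℂ) ≠ 0 := by
    intro h
    exact one_ne_zero (congrFun h ⟨0, hnpos⟩)
  have heigone : ∀ v, adjApply (completeEdges n k) (fun _ => (1:ℂ)) v =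
      ((n - 1).choose (k - 1) : ℂ) * (1 : ℂ) ^ (k - 1) := by
    intro v
    rw [hadj, one_pow, mul_one]
    simp only [Finset.prod_const_one, Finset.sum_const, nsmul_eq_mul, mul_one]
    rw [Finset.card_powersetCard, card_erase_of_mem (mem_univ v), card_univ,
      Fintype.card_fin]
  have hrig : ∀ x : Fin n → ℂ, x ≠ 0 →
      (∀ v, adjApply (completeEdges n k) x v =
        ((n - 1).choose (k - 1) : ℂ) * x v ^ (k - 1)) →
      ∃ c : ℂ, c ≠ 0 ∧ x = fun _ => c := by
    intro x hx heig
    exact rigidity hk hn x hx (fun v => by rw [← hadj]; exact heig v)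
  refine ⟨hone, heigone, hrig, ?_⟩
  rw [Nat.card_eq_one_iff_unique]
  constructor
  · constructor
    intro a b
    induction a using Quot.ind with
    | _ xs =>
      induction b using Quot.ind with
      | _ zs =>
        apply Quot.sound
        obtain ⟨c, hc, hxc⟩ := hrig xs.1 xs.2.1 xs.2.2
        obtain ⟨d, hd, hzd⟩ := hrig zs.1 zs.2.1 zs.2.2
        refine ⟨d / c, div_ne_zero hd hc, ?_⟩
        rw [hxc, hzd]
        funext v
        simp only [Pi.smul_apply, smul_eq_mul]
        field_simp
  · exact ⟨Quot.mk _ ⟨fun _ => 1, hone, heigone⟩⟩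
end

section
/- Let k ≥ 2 and let T be a k-uniform hypertree with m ≥ 1 edges and n = m(k−1)+1 vertices, and fix a vertex v₀ of T. Then the number of vectors x ∈ (ℤ/kℤ)^n satisfying ∑_{v∈e} x_v = 0 in ℤ/kℤ for every edge e of T (i.e., B_T x = 0 over ℤ/kℤ) and x_{v₀} = 0 is exactly k^{m(k−2)}. -/
open Finset

/-- Auxiliary recursion: adjust coordinates `d 0, d 1, …` one at a time so that after
step `s` the edge sums of `e 0, …, e (s-1)` equal the prescribed targets. -/
def stmt10Build (k : ℕ) {n m : ℕ} (e : Fin m → Finset (Fin n)) (d : Fin m → Fin n)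
    (t : Fin m → ZMod k) : ℕ → (Fin n → ZMod k)
  | 0 => 0
  | s + 1 =>
    let x := stmt10Build k e d t s
    if h : s < m then
      Function.update x (d ⟨s, h⟩) (x (d ⟨s, h⟩) + (t ⟨s, h⟩ - ∑ v ∈ e ⟨s, h⟩, x v))
    else x

lemma stmt10Build_spec (k : ℕ) {n m : ℕ} (e : Fin m → Finset (Fin n)) (d : Fin m → Fin n)
    (t : Fin m → ZMod k) (hd : ∀ j, d j ∈ e j) (hd' : ∀ i j : Fin m, i < j → d j ∉ e i) :
    ∀ s, ∀ j : Fin m, (j : ℕ) < s → ∑ v ∈ e j, stmt10Build k e d t s v = t j := by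
  intro s
  induction s with
  | zero => intro j hj; omega
  | succ s ih =>
    intro j hj
    by_cases hsm : s < m
    · simp only [stmt10Build, dif_pos hsm]
      rcases lt_or_eq_of_le (Nat.lt_succ_iff.mp hj) with h | h
      · -- j < s : the updated coordinate is not in e j
        rw [Finset.sum_update_of_notMem (hd' j ⟨s, hsm⟩ h)]
        exact ih j h
      · -- j = s
        have hjs : j = ⟨s, hsm⟩ := Fin.ext h
        rw [hjs]
        set jj : Fin m := ⟨s, hsm⟩ with hjj
        set x := stmt10Build k e d t s with hx
        rw [Finset.sum_update_of_mem (hd _)]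
        have hsplit : ∑ v ∈ e jj, x v = ∑ v ∈ e jj \ {d jj}, x v + x (d jj) :=
          Finset.sum_eq_sum_sdiff_singleton_add (hd jj) x
        rw [hsplit]
        ring
    · simp only [stmt10Build, dif_neg hsm]
      have : (j : ℕ) < m := j.isLt
      exact ih j (by omega)

/-- for a `k`-uniform hypertree `T` with `m ≥ 1` edges (edges `e 0, …,
e (m-1)`, every vertex covered, each later edge meeting the union of the earlier ones in
exactly one vertex) on `n = m(k-1)+1` vertices and any fixed vertex `v₀`, the number of
vectors `x ∈ (ℤ/kℤ)^n` with `∑_{v ∈ e} x_v = 0` for every edge `e` and `x_{v₀} = 0` is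
`k^{m(k-2)}`. -/
theorem stmt10 (k m n : ℕ) (hk : 2 ≤ k) (hm : 1 ≤ m) (hn : n = m * (k - 1) + 1)
    (e : Fin m → Finset (Fin n))
    (hcard : ∀ j, (e j).card = k)
    (hinj : Function.Injective e)
    (hcover : ∀ v : Fin n, ∃ j, v ∈ e j)
    (htree : ∀ j : Fin m, 0 < (j : ℕ) →
      ((e j) ∩ (univ.filter (fun i => i < j)).biUnion e).card = 1)
    (v₀ : Fin n) :
    Nat.card {x : Fin n → ZMod k //
      (∀ j : Fin m, ∑ v ∈ e j, x v = 0) ∧ x v₀ = 0} = k ^ (m * (k - 2)) := by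
  classical
  -- choose in each edge a vertex not belonging to any earlier edge
  have hne : ∀ j : Fin m, (e j \ (univ.filter (fun i => i < j)).biUnion e).Nonempty := by
    intro j
    have hle : ((e j) ∩ (univ.filter (fun i => i < j)).biUnion e).card ≤ 1 := by
      rcases Nat.eq_zero_or_pos (j : ℕ) with h0 | h0
      · have hfil : (univ.filter (fun i => i < j)) = ∅ := by
          ext i; simp [Fin.lt_def, h0]
        simp [hfil]
      · exact (htree j h0).le
    have := Finset.card_sdiff_add_card_inter (e j) ((univ.filter (fun i => i < j)).biUnion e)
    rw [← Finset.card_pos]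
    have := hcard j
    omega
  set d : Fin m → Fin n := fun j => (hne j).choose with hdd
  have hd : ∀ j, d j ∈ e j := fun j => (Finset.mem_sdiff.mp (hne j).choose_spec).1
  have hd' : ∀ i j : Fin m, i < j → d j ∉ e i := by
    intro i j hij hmem
    have := (Finset.mem_sdiff.mp (hne j).choose_spec).2
    exact this (Finset.mem_biUnion.mpr ⟨i, by simp [hij], hmem⟩)
  -- the linear map x ↦ (edge sums, x v₀)
  set L : (Fin n → ZMod k) →+ ((Fin m → ZMod k) × ZMod k) :=
    { toFun := fun x => (fun j => ∑ v ∈ e j, x v, x v₀)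
      map_zero' := by simp [Prod.ext_iff, funext_iff]
      map_add' := by
        intro x y
        simp [Prod.ext_iff, funext_iff, Finset.sum_add_distrib] } with hL
  have hLsurj : Function.Surjective L := by
    rintro ⟨t, c⟩
    set x0 := stmt10Build k e d t m with hx0
    have hx0spec : ∀ j : Fin m, ∑ v ∈ e j, x0 v = t j := fun j =>
      stmt10Build_spec k e d t hd hd' m j j.isLt
    refine ⟨fun v => x0 v + (c - x0 v₀), ?_⟩
    have hconst : ∀ j : Fin m, ∑ v ∈ e j, (c - x0 v₀) = 0 := by
      intro j
      rw [Finset.sum_const, hcard j]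
      have : (k : ZMod k) = 0 := ZMod.natCast_self k
      rw [nsmul_eq_mul, this, zero_mul]
    simp only [hL, AddMonoidHom.coe_mk, ZeroHom.coe_mk, Prod.ext_iff, funext_iff]
    constructor
    · intro j
      rw [Finset.sum_add_distrib, hx0spec j, hconst j, add_zero]
    · simp
  -- identify the solution set with the kernel of L
  have hequiv : {x : Fin n → ZMod k //
      (∀ j : Fin m, ∑ v ∈ e j, x v = 0) ∧ x v₀ = 0} ≃ L.ker := by
    apply Equiv.subtypeEquivRight
    intro x
    simp only [AddMonoidHom.mem_ker, hL, AddMonoidHom.coe_mk, ZeroHom.coe_mk, Prod.ext_iff,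
      funext_iff, Prod.fst_zero, Prod.snd_zero, Pi.zero_apply]
  rw [Nat.card_congr hequiv]
  -- counting
  have hcardV : Nat.card (Fin n → ZMod k) = k ^ n := by
    simp [Nat.card_pi, Nat.card_zmod]
  have hcardW : Nat.card ((Fin m → ZMod k) × ZMod k) = k ^ (m + 1) := by
    simp [Nat.card_prod, Nat.card_pi, Nat.card_zmod, pow_succ]
  have hquot := AddSubgroup.card_eq_card_quotient_mul_card_addSubgroup L.ker
  have hqiso := Nat.card_congr
    (QuotientAddGroup.quotientKerEquivOfSurjective L hLsurj).toEquiv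
  rw [hqiso, hcardW, hcardV] at hquot
  have hnexp : n = (m + 1) + m * (k - 2) := by
    have h2 : k - 1 = (k - 2) + 1 := by omega
    rw [hn, h2, Nat.mul_add]
    ring
  have hkpos : 0 < k ^ (m + 1) := Nat.pow_pos (by omega)
  have : k ^ (m + 1) * k ^ (m * (k - 2)) = k ^ (m + 1) * Nat.card L.ker := by
    rw [← pow_add, ← hnexp, hquot]
  exact (Nat.eq_of_mul_eq_mul_left hkpos this).symm
end

section
/- Let k ≥ 3, let G be a connected finite simple graph with at least one edge, let H = G^{(k)} be the k-th power hypergraph of G, and fix a vertex v₀ of H. Then the number of vectors x ∈ (ℤ/kℤ)^{V(H)} satisfying ∑_{v∈e} x_v = 0 in ℤ/kℤ for every edge e of H (i.e., B_H x = 0 over ℤ/kℤ) and x_{v₀} = 0 is exactly k^{|V(G)|+|E(G)|(k−3)−1}. -/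
open Finset

/-- The vertex type of the `k`-th power hypergraph `G^{(k)}`: the vertices of `G`
together with `k-2` new vertices for each edge of `G`. -/
abbrev PowerVert (k N : ℕ) (G : SimpleGraph (Fin N)) [DecidableRel G.Adj] : Type :=
  Fin N ⊕ ({ε : Sym2 (Fin N) // ε ∈ G.edgeFinset} × Fin (k - 2))

/-- The edge of `G^{(k)}` corresponding to an edge `ε = {u,v}` of `G`:
`{u, v, w_{ε,1}, …, w_{ε,k-2}}`. -/
def powerEdge (k N : ℕ) (G : SimpleGraph (Fin N)) [DecidableRel G.Adj]
    (ε : {ε : Sym2 (Fin N) // ε ∈ G.edgeFinset}) : Finset (PowerVert k N G) :=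
  ((univ.filter (fun u : Fin N => u ∈ ε.1)).image Sum.inl) ∪
    ((univ : Finset (Fin (k - 2))).image (fun t => Sum.inr (ε, t)))

section Aux

variable (k N : ℕ) (G : SimpleGraph (Fin N)) [DecidableRel G.Adj]

lemma sum_powerEdge (ε : {ε : Sym2 (Fin N) // ε ∈ G.edgeFinset})
    (x : PowerVert k N G → ZMod k) :
    ∑ v ∈ powerEdge k N G ε, x v =
      (∑ u ∈ univ.filter (fun u : Fin N => u ∈ ε.1), x (Sum.inl u)) +
        ∑ t : Fin (k - 2), x (Sum.inr (ε, t)) := by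
  rw [powerEdge, Finset.sum_union, Finset.sum_image, Finset.sum_image]
  · intro a _ b _ h; simpa using h
  · intro a _ b _ h; exact Sum.inl.inj h
  · simp [Finset.disjoint_left]

def emb (hk : 3 ≤ k) (s : Fin (k - 3)) : Fin (k - 2) := ⟨s.1, by omega⟩

def lastIdx (hk : 3 ≤ k) : Fin (k - 2) := ⟨k - 3, by omega⟩

lemma sum_fin_split (hk : 3 ≤ k) (f : Fin (k - 2) → ZMod k) :
    ∑ t : Fin (k - 2), f t = (∑ s : Fin (k - 3), f (emb k hk s)) + f (lastIdx k hk) := by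
  have h : k - 3 + 1 = k - 2 := by omega
  rw [← Fin.sum_congr' f h, Fin.sum_univ_castSucc]
  congr 1

/-- Sum of a putative solution over an edge, in terms of free data. -/
def Sfun (y : Fin N → ZMod k) (z : {ε : Sym2 (Fin N) // ε ∈ G.edgeFinset} × Fin (k - 3) → ZMod k)
    (ε : {ε : Sym2 (Fin N) // ε ∈ G.edgeFinset}) : ZMod k :=
  (∑ u ∈ univ.filter (fun u : Fin N => u ∈ ε.1), y u) + ∑ s : Fin (k - 3), z (ε, s)

/-- Extend free data to a full solution vector. -/
def back (hk : 3 ≤ k) (w : (Fin N ⊕ ({ε : Sym2 (Fin N) // ε ∈ G.edgeFinset} × Fin (k - 3))) → ZMod k) :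
    PowerVert k N G → ZMod k :=
  Sum.elim (fun u => w (Sum.inl u))
    (fun p => if h : (p.2 : ℕ) < k - 3 then w (Sum.inr (p.1, ⟨p.2.1, h⟩))
      else - Sfun k N G (fun u => w (Sum.inl u)) (fun q => w (Sum.inr q)) p.1)

lemma back_emb (hk : 3 ≤ k) (w) (ε) (s : Fin (k - 3)) :
    back k N G hk w (Sum.inr (ε, emb k hk s)) = w (Sum.inr (ε, s)) := by
  have h : ((emb k hk s : Fin (k-2)) : ℕ) < k - 3 := s.2
  simp only [back, Sum.elim_inr, dif_pos h]
  congr 1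

lemma back_last (hk : 3 ≤ k) (w) (ε) :
    back k N G hk w (Sum.inr (ε, lastIdx k hk)) =
      - Sfun k N G (fun u => w (Sum.inl u)) (fun q => w (Sum.inr q)) ε := by
  have h : ¬ ((lastIdx k hk : Fin (k-2)) : ℕ) < k - 3 := by simp [lastIdx]
  simp only [back, Sum.elim_inr, dif_neg h]

lemma back_mem (hk : 3 ≤ k) (w) (ε) :
    ∑ v ∈ powerEdge k N G ε, back k N G hk w v = 0 := by
  rw [sum_powerEdge, sum_fin_split k hk, back_last]
  have h1 : ∑ s : Fin (k-3), back k N G hk w (Sum.inr (ε, emb k hk s))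
      = ∑ s : Fin (k-3), w (Sum.inr (ε, s)) :=
    Finset.sum_congr rfl fun s _ => back_emb k N G hk w ε s
  rw [h1]
  simp only [back, Sum.elim_inl, Sfun]
  ring

def fwd (hk : 3 ≤ k) (x : PowerVert k N G → ZMod k) :
    (Fin N ⊕ ({ε : Sym2 (Fin N) // ε ∈ G.edgeFinset} × Fin (k - 3))) → ZMod k :=
  Sum.elim (fun u => x (Sum.inl u)) (fun p => x (Sum.inr (p.1, emb k hk p.2)))

lemma fwd_back (hk : 3 ≤ k) (w) : fwd k N G hk (back k N G hk w) = w := by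
  funext i
  cases i with
  | inl u => rfl
  | inr p => exact back_emb k N G hk w p.1 p.2

lemma back_fwd (hk : 3 ≤ k) (x : PowerVert k N G → ZMod k)
    (hx : ∀ ε, ∑ v ∈ powerEdge k N G ε, x v = 0) :
    back k N G hk (fwd k N G hk x) = x := by
  funext p
  cases p with
  | inl u => rfl
  | inr p =>
    obtain ⟨ε, t⟩ := p
    by_cases h : (t : ℕ) < k - 3
    · have he : emb k hk ⟨t.1, h⟩ = t := by ext; rfl
      simp only [back, fwd, Sum.elim_inr, dif_pos h]
      rw [he]
    · have ht : t = lastIdx k hk := by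
        have := t.2; ext; simp only [lastIdx]; omega
      subst ht
      have hc := hx ε
      rw [sum_powerEdge, sum_fin_split k hk] at hc
      simp only [back, fwd, Sum.elim_inr, Sum.elim_inl, dif_neg h, Sfun]
      linear_combination -hc

def Bhom : ((PowerVert k N G) → ZMod k) →+ (({ε : Sym2 (Fin N) // ε ∈ G.edgeFinset}) → ZMod k) where
  toFun := fun x ε => ∑ v ∈ powerEdge k N G ε, x v
  map_zero' := by funext ε; simp
  map_add' := by intro x y; funext ε; simp [Finset.sum_add_distrib]

lemma mem_ker_iff (x : (PowerVert k N G) → ZMod k) :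
    x ∈ (Bhom k N G).ker ↔ ∀ ε, ∑ v ∈ powerEdge k N G ε, x v = 0 := by
  simp [AddMonoidHom.mem_ker, Bhom, funext_iff]

def eK (hk : 3 ≤ k) : (Bhom k N G).ker ≃
    ((Fin N ⊕ ({ε : Sym2 (Fin N) // ε ∈ G.edgeFinset} × Fin (k - 3))) → ZMod k) where
  toFun := fun x => fwd k N G hk x.1
  invFun := fun w => ⟨back k N G hk w, (mem_ker_iff k N G _).2 (back_mem k N G hk w)⟩
  left_inv := fun x => Subtype.ext (back_fwd k N G hk x.1 ((mem_ker_iff k N G _).1 x.2))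
  right_inv := fun w => fwd_back k N G hk w

lemma card_ker (hk : 3 ≤ k) :
    Nat.card (Bhom k N G).ker = k ^ (N + G.edgeFinset.card * (k - 3)) := by
  haveI : NeZero k := ⟨by omega⟩
  rw [Nat.card_congr (eK k N G hk), Nat.card_fun, Nat.card_zmod, Nat.card_eq_fintype_card]
  congr 1
  simp only [Fintype.card_sum, Fintype.card_prod, Fintype.card_coe, Fintype.card_fin]

def phi (v₀ : PowerVert k N G) : (Bhom k N G).ker →+ ZMod k :=
  (Pi.evalAddMonoidHom (fun _ => ZMod k) v₀).comp (Bhom k N G).ker.subtype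

noncomputable def wit (hk : 3 ≤ k) (v₀ : PowerVert k N G) :
    (Fin N ⊕ ({ε : Sym2 (Fin N) // ε ∈ G.edgeFinset} × Fin (k - 3))) → ZMod k :=
  match v₀ with
  | .inl u => fun i => if i = Sum.inl u then 1 else 0
  | .inr (ε, t) =>
      if h : (t : ℕ) < k - 3 then (fun i => if i = Sum.inr (ε, ⟨t.1, h⟩) then 1 else 0)
      else (fun i => if i = Sum.inl (ε.1.out.1) then -1 else 0)

lemma back_wit (hk : 3 ≤ k) (v₀ : PowerVert k N G) :
    back k N G hk (wit k N G hk v₀) v₀ = 1 := by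
  cases v₀ with
  | inl u => simp [back, wit]
  | inr p =>
    obtain ⟨ε, t⟩ := p
    by_cases h : (t : ℕ) < k - 3
    · simp only [back, wit, Sum.elim_inr, dif_pos h, if_pos rfl]
      simp
    · simp only [back, wit, Sum.elim_inr, dif_neg h, Sfun, Sum.inl.injEq, reduceCtorEq,
        if_false, Finset.sum_const_zero, add_zero]
      rw [Finset.sum_ite_eq' _ _ (fun _ => (-1 : ZMod k))]
      simp [Sym2.out_fst_mem]

lemma phi_surj (hk : 3 ≤ k) (v₀ : PowerVert k N G) :
    Function.Surjective (phi k N G v₀) := by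
  haveI : NeZero k := ⟨by omega⟩
  intro c
  refine ⟨c.val • ⟨back k N G hk (wit k N G hk v₀),
    (mem_ker_iff k N G _).2 (back_mem k N G hk _)⟩, ?_⟩
  rw [map_nsmul]
  have : phi k N G v₀ ⟨back k N G hk (wit k N G hk v₀),
      (mem_ker_iff k N G _).2 (back_mem k N G hk _)⟩ = 1 := back_wit k N G hk v₀
  rw [this]
  simp [nsmul_eq_mul, ZMod.natCast_val, ZMod.cast_id]

end Aux

/-- for a connected simple graph `G` with at least one edge, `k ≥ 3`,
`H = G^{(k)}` and a fixed vertex `v₀` of `H`, the number of vectors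
`x ∈ (ℤ/kℤ)^{V(H)}` with `∑_{v ∈ e} x_v = 0` for every edge `e` of `H` and `x_{v₀} = 0`
is `k^{|V(G)| + |E(G)|(k-3) - 1}`. -/
theorem stmt11 (k N : ℕ) (hk : 3 ≤ k) (G : SimpleGraph (Fin N)) [DecidableRel G.Adj]
    (hconn : G.Connected) (hne : G.edgeFinset.Nonempty)
    (v₀ : PowerVert k N G) :
    Nat.card {x : PowerVert k N G → ZMod k //
      (∀ ε : {ε : Sym2 (Fin N) // ε ∈ G.edgeFinset},
        ∑ v ∈ powerEdge k N G ε, x v = 0) ∧ x v₀ = 0} =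
      k ^ (N + G.edgeFinset.card * (k - 3) - 1) := by
  haveI : NeZero k := ⟨by omega⟩
  have hN : 1 ≤ N := by
    have : Nonempty (Fin N) := hconn.nonempty
    exact Fin.pos_iff_nonempty.2 this
  -- identify the counted set with the kernel of `phi`
  have e1 : {x : PowerVert k N G → ZMod k //
      (∀ ε : {ε : Sym2 (Fin N) // ε ∈ G.edgeFinset},
        ∑ v ∈ powerEdge k N G ε, x v = 0) ∧ x v₀ = 0} ≃ (phi k N G v₀).ker :=
    { toFun := fun x => ⟨⟨x.1, (mem_ker_iff k N G _).2 x.2.1⟩, x.2.2⟩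
      invFun := fun y => ⟨y.1.1, ⟨(mem_ker_iff k N G _).1 y.1.2, y.2⟩⟩
      left_inv := fun x => rfl
      right_inv := fun y => rfl }
  rw [Nat.card_congr e1]
  have h2 := AddSubgroup.card_eq_card_quotient_mul_card_addSubgroup (phi k N G v₀).ker
  have h3 : Nat.card ((Bhom k N G).ker ⧸ (phi k N G v₀).ker) = k := by
    rw [Nat.card_congr
      (QuotientAddGroup.quotientKerEquivOfSurjective _ (phi_surj k N G hk v₀)).toEquiv,
      Nat.card_zmod]
  rw [card_ker k N G hk, h3] at h2
  have ha : 1 ≤ N + G.edgeFinset.card * (k - 3) := by omega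
  have : k ^ (N + G.edgeFinset.card * (k - 3))
      = k * k ^ (N + G.edgeFinset.card * (k - 3) - 1) := by
    rw [← pow_succ']
    congr 1
    omega
  rw [this] at h2
  exact Nat.eq_of_mul_eq_mul_left (by omega) h2.symm
end

section
/- Let 𝒜 be a nonnegative weakly irreducible tensor of order k ≥ 2 and dimension n, let ρ be its unique eigenvalue admitting a strictly positive eigenvector (the Perron–Frobenius eigenvalue), and let λ be any eigenvalue of 𝒜 with |λ| = ρ. Then the projective eigenvarieties 𝕍_λ(𝒜) and 𝕍_ρ(𝒜) are finite and have the same cardinality: |𝕍_λ(𝒜)| = |𝕍_ρ(𝒜)|. -/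
open Finset

/-- `(𝒜 x^{k-1})_i` for a tensor of order `k` and dimension `n` with entries `a`. -/
noncomputable def tApply {k n : ℕ} (hk : 0 < k) (a : (Fin k → Fin n) → ℂ)
    (x : Fin n → ℂ) (i : Fin n) : ℂ :=
  ∑ j : Fin k → Fin n,
    if j ⟨0, hk⟩ = i then a j * ∏ t ∈ univ.erase (⟨0, hk⟩ : Fin k), x (j t) else 0

/-- The arc relation of the directed graph `D(𝒜)`. -/
def arcRel {k n : ℕ} (hk : 0 < k) (a : (Fin k → Fin n) → ℂ) (i j : Fin n) : Prop :=
  ∃ f : Fin k → Fin n, a f ≠ 0 ∧ f ⟨0, hk⟩ = i ∧ ∃ t : Fin k, t ≠ ⟨0, hk⟩ ∧ f t = j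

/-- `𝒜` is weakly irreducible if `D(𝒜)` is strongly connected. -/
def WeaklyIrreducible {k n : ℕ} (hk : 0 < k) (a : (Fin k → Fin n) → ℂ) : Prop :=
  ∀ i j : Fin n, Relation.ReflTransGen (arcRel hk a) i j

namespace S12

lemma prod_factors_eq {ι : Type*} (s : Finset ι) (u v : ι → ℝ)
    (hu : ∀ t ∈ s, 0 ≤ u t) (huv : ∀ t ∈ s, u t ≤ v t) (hv : ∀ t ∈ s, 0 < v t)
    (he : ∏ t ∈ s, u t = ∏ t ∈ s, v t) : ∀ t ∈ s, u t = v t := by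
  have hvpos : 0 < ∏ t ∈ s, v t := Finset.prod_pos hv
  by_contra hcon
  push_neg at hcon
  obtain ⟨t0, ht0, hne⟩ := hcon
  have hlt : u t0 < v t0 := lt_of_le_of_ne (huv t0 ht0) hne
  by_cases hz : ∀ t ∈ s, 0 < u t
  · exact absurd he (Finset.prod_lt_prod hz huv ⟨t0, ht0, hlt⟩).ne
  · push_neg at hz
    obtain ⟨t1, ht1, hle⟩ := hz
    have : u t1 = 0 := le_antisymm hle (hu t1 ht1)
    have h0 : ∏ t ∈ s, u t = 0 := Finset.prod_eq_zero ht1 this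
    rw [he] at h0
    exact absurd h0 hvpos.ne'

lemma re_eq_abs_imp (z : ℂ) (h : z.re = ‖z‖) : z = (‖z‖ : ℝ) := by
  have h2 : z.im = 0 := by
    have := Complex.sq_norm z
    rw [Complex.normSq_apply, ← h] at this
    nlinarith
  apply Complex.ext <;> simp [h2, ← h]

lemma term_align {ι : Type*} (s : Finset ι) (c : ι → ℂ) (w : ℂ) (hw : ‖w‖ = 1)
    (hsum : ∑ j ∈ s, c j = ((∑ j ∈ s, ‖c j‖ : ℝ) : ℂ) * w) :
    ∀ j ∈ s, c j = (‖c j‖ : ℝ) * w := by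
  have hww : w * (starRingEnd ℂ) w = 1 := by
    rw [Complex.mul_conj]
    norm_cast
    rw [← Complex.sq_norm, hw]; norm_num
  have hle : ∀ j ∈ s, (c j * (starRingEnd ℂ) w).re ≤ ‖c j‖ := fun j _ => by
    calc (c j * (starRingEnd ℂ) w).re ≤ ‖c j * (starRingEnd ℂ) w‖ := Complex.re_le_norm _
    _ = ‖c j‖ := by rw [norm_mul, Complex.norm_conj, hw, mul_one]
  have hsre : ∑ j ∈ s, (c j * (starRingEnd ℂ) w).re = ∑ j ∈ s, ‖c j‖ := by
    have : (∑ j ∈ s, c j * (starRingEnd ℂ) w) = ((∑ j ∈ s, ‖c j‖ : ℝ) : ℂ) := by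
      rw [← Finset.sum_mul, hsum, mul_assoc, hww, mul_one]
    calc ∑ j ∈ s, (c j * (starRingEnd ℂ) w).re = (∑ j ∈ s, c j * (starRingEnd ℂ) w).re := by
          rw [Complex.re_sum]
      _ = _ := by rw [this, Complex.ofReal_re]
  have heach := (Finset.sum_eq_sum_iff_of_le hle).mp hsre
  intro j hj
  have h1 : c j * (starRingEnd ℂ) w = (‖c j‖ : ℝ) := by
    have h2 := re_eq_abs_imp (c j * (starRingEnd ℂ) w) ?_
    · rw [h2, norm_mul, Complex.norm_conj, hw, mul_one]
    · rw [heach j hj, norm_mul, Complex.norm_conj, hw, mul_one]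
  calc c j = c j * ((starRingEnd ℂ) w * w) := by rw [mul_comm ((starRingEnd ℂ) w), hww, mul_one]
    _ = (‖c j‖ : ℝ) * w := by rw [← mul_assoc, h1]

noncomputable def Ap {k n : ℕ} (hk0 : 0 < k) (a : (Fin k → Fin n) → ℝ) (u : Fin n → ℝ) (i : Fin n) : ℝ :=
  ∑ j ∈ univ.filter (fun j : Fin k → Fin n => j ⟨0, hk0⟩ = i),
    a j * ∏ t ∈ univ.erase (⟨0, hk0⟩ : Fin k), u (j t)

lemma tApply_filter {k n : ℕ} (hk0 : 0 < k) (b : (Fin k → Fin n) → ℂ) (x : Fin n → ℂ) (i : Fin n) :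
    tApply hk0 b x i = ∑ j ∈ univ.filter (fun j : Fin k → Fin n => j ⟨0, hk0⟩ = i),
      b j * ∏ t ∈ univ.erase (⟨0, hk0⟩ : Fin k), x (j t) := by
  rw [tApply, Finset.sum_filter]

lemma tApply_real {k n : ℕ} (hk0 : 0 < k) (a : (Fin k → Fin n) → ℝ) (u : Fin n → ℝ) (i : Fin n) :
    tApply hk0 (fun j => (a j : ℂ)) (fun i => (u i : ℂ)) i = ((Ap hk0 a u i : ℝ) : ℂ) := by
  rw [tApply_filter, Ap]
  push_cast
  rfl

lemma const_of {k n : ℕ} (hk0 : 0 < k) (hn : 0 < n) (b : (Fin k → Fin n) → ℂ) (hwi : WeaklyIrreducible hk0 b)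
    (δ : Fin n → ℝ)
    (hstep : ∀ i, (∀ i', δ i' ≤ δ i) → ∀ f : Fin k → Fin n, b f ≠ 0 → f ⟨0, hk0⟩ = i →
      ∀ t : Fin k, t ≠ ⟨0, hk0⟩ → δ (f t) = δ i) :
    ∀ i, δ i = δ ⟨0, hn⟩ := by
  obtain ⟨i₁, -, hmax⟩ := Finset.exists_max_image univ δ ⟨⟨0, hn⟩, mem_univ _⟩
  have hmax' : ∀ i', δ i' ≤ δ i₁ := fun i' => hmax i' (mem_univ _)
  have hall : ∀ j, δ j = δ i₁ := by
    intro j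
    induction hwi i₁ j with
    | refl => rfl
    | tail _ harc ih =>
      obtain ⟨f, hf, hf0, t, ht, hft⟩ := harc
      rw [← hft]
      rw [← ih]
      exact hstep _ (by rw [ih]; exact hmax') f hf hf0 t ht
  intro i; rw [hall i, hall ⟨0, hn⟩]

lemma card_erase0 {k : ℕ} (hk0 : 0 < k) : (univ.erase (⟨0, hk0⟩ : Fin k)).card = k - 1 := by
  rw [Finset.card_erase_of_mem (mem_univ _), Finset.card_univ, Fintype.card_fin]

lemma Ap_smul {k n : ℕ} (hk0 : 0 < k) (a : (Fin k → Fin n) → ℝ) (s : ℝ) (u : Fin n → ℝ) (i : Fin n) :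
    Ap hk0 a (fun j => s * u j) i = s ^ (k - 1) * Ap hk0 a u i := by
  rw [Ap, Ap, Finset.mul_sum]
  refine Finset.sum_congr rfl fun j _ => ?_
  rw [Finset.prod_mul_distrib, Finset.prod_const, card_erase0]
  ring

lemma rho_pos {k n : ℕ} (hk0 : 0 < k) (hn2 : 2 ≤ n) (a : (Fin k → Fin n) → ℝ)
    (ha : ∀ j, 0 ≤ a j) (hwi : WeaklyIrreducible hk0 (fun j => (a j : ℂ)))
    (ρ : ℝ) (y : Fin n → ℝ) (hy : ∀ i, 0 < y i)
    (hρR : ∀ i, Ap hk0 a y i = ρ * y i ^ (k - 1)) : 0 < ρ := by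
  have h01 : (⟨0, by omega⟩ : Fin n) ≠ ⟨1, by omega⟩ := by
    intro h; simpa using congrArg Fin.val h
  obtain ⟨f, hfne⟩ : ∃ f : Fin k → Fin n, a f ≠ 0 := by
    rcases (Relation.ReflTransGen.cases_head (hwi ⟨0, by omega⟩ ⟨1, by omega⟩)) with h | ⟨c, hrel, -⟩
    · exact absurd h h01
    · obtain ⟨f, hf, -⟩ := hrel; exact ⟨f, by simpa using hf⟩
  set i := f ⟨0, hk0⟩ with hi
  have hterm : 0 < a f * ∏ t ∈ univ.erase (⟨0, hk0⟩ : Fin k), y (f t) :=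
    mul_pos (lt_of_le_of_ne (ha f) (Ne.symm hfne)) (Finset.prod_pos fun t _ => hy _)
  have hle : a f * ∏ t ∈ univ.erase (⟨0, hk0⟩ : Fin k), y (f t) ≤ Ap hk0 a y i := by
    rw [Ap]
    refine Finset.single_le_sum (f := fun j : Fin k → Fin n =>
      a j * ∏ t ∈ univ.erase (⟨0, hk0⟩ : Fin k), y (j t)) (fun j _ => ?_) ?_
    · exact mul_nonneg (ha j) (Finset.prod_nonneg fun t _ => (hy _).le)
    · simp [hi]
  have h2 : 0 < ρ * y i ^ (k - 1) := lt_of_lt_of_le hterm (hle.trans_eq (hρR i))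
  have h3 : 0 < y i ^ (k - 1) := pow_pos (hy i) _
  by_contra h
  push_neg at h
  nlinarith

lemma unique_pos {k n : ℕ} (hk0 : 0 < k) (hk : 2 ≤ k) (hn : 0 < n) (a : (Fin k → Fin n) → ℝ)
    (ha : ∀ j, 0 ≤ a j) (hwi : WeaklyIrreducible hk0 (fun j => (a j : ℂ)))
    (ρ : ℝ) (y : Fin n → ℝ) (hy : ∀ i, 0 < y i)
    (hρR : ∀ i, Ap hk0 a y i = ρ * y i ^ (k - 1))
    (u : Fin n → ℝ) (hu0 : ∀ i, 0 ≤ u i) (hune : ∃ i, u i ≠ 0)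
    (hineq : ∀ i, ρ * u i ^ (k - 1) ≤ Ap hk0 a u i) :
    ∃ s : ℝ, 0 < s ∧ ∀ i, u i = s * y i := by
  set δ : Fin n → ℝ := fun i => u i / y i with hδ
  have hconst := const_of hk0 hn _ hwi δ ?_
  · refine ⟨δ ⟨0, hn⟩, ?_, fun i => ?_⟩
    · obtain ⟨i₂, hi₂⟩ := hune
      have h1 : 0 < u i₂ := lt_of_le_of_ne (hu0 i₂) (Ne.symm hi₂)
      have : 0 < δ i₂ := div_pos h1 (hy i₂)
      rwa [hconst i₂] at this
    · rw [← hconst i, hδ]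
      exact (div_mul_cancel₀ (u i) (hy i).ne').symm
  · -- the step
    intro i hmaxi f hf hf0 t ht
    have hfne : a f ≠ 0 := by simpa using hf
    set s := δ i with hs
    have hs0 : 0 ≤ s := div_nonneg (hu0 i) (hy i).le
    have hub : ∀ i', u i' ≤ s * y i' := fun i' => (div_le_iff₀ (hy i')).mp (hmaxi i')
    have hui : u i = s * y i := by
      rw [hs, hδ]; exact (div_mul_cancel₀ (u i) (hy i).ne').symm
    have htermle : ∀ j ∈ univ.filter (fun j : Fin k → Fin n => j ⟨0, hk0⟩ = i),
        a j * ∏ t' ∈ univ.erase (⟨0, hk0⟩ : Fin k), u (j t') ≤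
        a j * ∏ t' ∈ univ.erase (⟨0, hk0⟩ : Fin k), s * y (j t') := by
      intro j _
      exact mul_le_mul_of_nonneg_left
        (Finset.prod_le_prod (fun t' _ => hu0 _) (fun t' _ => hub _)) (ha j)
    have hA1 : Ap hk0 a u i ≤ Ap hk0 a (fun j => s * y j) i := Finset.sum_le_sum htermle
    have hA2 : Ap hk0 a (fun j => s * y j) i = ρ * u i ^ (k - 1) := by
      rw [Ap_smul, hρR i, hui]; ring
    have heq : Ap hk0 a u i = Ap hk0 a (fun j => s * y j) i :=
      le_antisymm hA1 (hA2 ▸ hineq i)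
    have hterm := (Finset.sum_eq_sum_iff_of_le htermle).mp heq f (by simp [hf0])
    have hprod : ∏ t' ∈ univ.erase (⟨0, hk0⟩ : Fin k), u (f t')
        = ∏ t' ∈ univ.erase (⟨0, hk0⟩ : Fin k), s * y (f t') :=
      mul_left_cancel₀ hfne hterm
    have hspos : 0 < s := by
      rcases hs0.eq_or_lt with h | h
      · exfalso
        obtain ⟨i₂, hi₂⟩ := hune
        have h1 : u i₂ ≤ 0 := by have := hub i₂; rw [← h] at this; simpa using this
        exact hi₂ (le_antisymm h1 (hu0 i₂))
      · exact h
    have hfac := prod_factors_eq _ _ _ (fun t' _ => hu0 _) (fun t' _ => hub _)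
      (fun t' _ => mul_pos hspos (hy _)) hprod t (by simp [ht])
    show u (f t) / y (f t) = s
    rw [hfac, mul_div_assoc, div_self (hy _).ne', mul_one]

lemma abs_term {k n : ℕ} (hk0 : 0 < k) (a : (Fin k → Fin n) → ℝ) (ha : ∀ j, 0 ≤ a j)
    (x : Fin n → ℂ) (j : Fin k → Fin n) :
    ‖(a j : ℂ) * ∏ t ∈ univ.erase (⟨0, hk0⟩ : Fin k), x (j t)‖ =
      a j * ∏ t ∈ univ.erase (⟨0, hk0⟩ : Fin k), ‖x (j t)‖ := by
  rw [norm_mul, norm_prod, Complex.norm_real, Real.norm_eq_abs, abs_of_nonneg (ha j)]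

lemma abs_eigen {k n : ℕ} (hk0 : 0 < k) (hk : 2 ≤ k) (hn : 0 < n) (a : (Fin k → Fin n) → ℝ)
    (ha : ∀ j, 0 ≤ a j) (hwi : WeaklyIrreducible hk0 (fun j => (a j : ℂ)))
    (ρ : ℝ) (y : Fin n → ℝ) (hy : ∀ i, 0 < y i)
    (hρR : ∀ i, Ap hk0 a y i = ρ * y i ^ (k - 1))
    (μ : ℂ) (hμ : ‖μ‖ = ρ) (x : Fin n → ℂ) (hxne : x ≠ 0)
    (hx : ∀ i, tApply hk0 (fun j => (a j : ℂ)) x i = μ * x i ^ (k - 1)) :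
    ∃ s : ℝ, 0 < s ∧ ∀ i, ‖x i‖ = s * y i := by
  apply unique_pos hk0 hk hn a ha hwi ρ y hy hρR _ (fun i => norm_nonneg _)
  · obtain ⟨i, hi⟩ := Function.ne_iff.mp hxne
    exact ⟨i, by simpa using hi⟩
  · intro i
    have h1 : ‖tApply hk0 (fun j => (a j : ℂ)) x i‖ = ρ * ‖x i‖ ^ (k - 1) := by
      rw [hx i, norm_mul, norm_pow, hμ]
    rw [← h1, tApply_filter, Ap]
    calc ‖∑ j ∈ univ.filter (fun j : Fin k → Fin n => j ⟨0, hk0⟩ = i),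
          (a j : ℂ) * ∏ t ∈ univ.erase (⟨0, hk0⟩ : Fin k), x (j t)‖
        ≤ ∑ j ∈ univ.filter (fun j : Fin k → Fin n => j ⟨0, hk0⟩ = i),
          ‖(a j : ℂ) * ∏ t ∈ univ.erase (⟨0, hk0⟩ : Fin k), x (j t)‖ :=
          norm_sum_le _ _
      _ = _ := Finset.sum_congr rfl fun j _ => abs_term hk0 a ha x j

lemma align {k n : ℕ} (hk0 : 0 < k) (a : (Fin k → Fin n) → ℝ)
    (ha : ∀ j, 0 ≤ a j) (ρ : ℝ) (hρpos : 0 < ρ) (y : Fin n → ℝ) (hy : ∀ i, 0 < y i)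
    (hρR : ∀ i, Ap hk0 a y i = ρ * y i ^ (k - 1))
    (μ : ℂ) (hμ : ‖μ‖ = ρ) (x : Fin n → ℂ)
    (hx : ∀ i, tApply hk0 (fun j => (a j : ℂ)) x i = μ * x i ^ (k - 1))
    (hax : ∀ i, ‖x i‖ = y i) (f : Fin k → Fin n) (hf : a f ≠ 0) :
    ∏ t ∈ univ.erase (⟨0, hk0⟩ : Fin k), (x (f t) / (y (f t) : ℂ)) =
      (μ / (ρ : ℂ)) * (x (f ⟨0, hk0⟩) / (y (f ⟨0, hk0⟩) : ℂ)) ^ (k - 1) := by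
  set i := f ⟨0, hk0⟩ with hi
  set d : ℝ := ρ * y i ^ (k - 1) with hd
  have hdpos : 0 < d := mul_pos hρpos (pow_pos (hy i) _)
  set w : ℂ := μ * x i ^ (k - 1) / (d : ℂ) with hw
  have habsnum : ‖μ * x i ^ (k - 1)‖ = d := by
    rw [norm_mul, norm_pow, hμ, hax]
  have hwabs : ‖w‖ = 1 := by
    rw [hw, norm_div, habsnum, Complex.norm_real, Real.norm_eq_abs, abs_of_pos hdpos, div_self hdpos.ne']
  have hsumabs : ∑ j ∈ univ.filter (fun j : Fin k → Fin n => j ⟨0, hk0⟩ = i),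
      ‖(a j : ℂ) * ∏ t ∈ univ.erase (⟨0, hk0⟩ : Fin k), x (j t)‖ = d := by
    rw [hd, ← hρR i, Ap]
    refine Finset.sum_congr rfl fun j _ => ?_
    rw [abs_term hk0 a ha x j]
    exact congrArg _ (Finset.prod_congr rfl fun t _ => hax _)
  have hsum : ∑ j ∈ univ.filter (fun j : Fin k → Fin n => j ⟨0, hk0⟩ = i),
      ((a j : ℂ) * ∏ t ∈ univ.erase (⟨0, hk0⟩ : Fin k), x (j t)) =
      ((∑ j ∈ univ.filter (fun j : Fin k → Fin n => j ⟨0, hk0⟩ = i),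
        ‖(a j : ℂ) * ∏ t ∈ univ.erase (⟨0, hk0⟩ : Fin k), x (j t)‖ : ℝ) : ℂ) * w := by
    rw [hsumabs, ← tApply_filter, hx i, hw, mul_div_cancel₀]
    exact Complex.ofReal_ne_zero.mpr hdpos.ne'
  have happ := term_align _ _ w hwabs hsum f (by simp [hi])
  rw [abs_term hk0 a ha x f] at happ
  have hyy : (fun t => ‖x (f t)‖) = fun t => y (f t) := funext fun t => hax _
  have haf : ((a f : ℂ)) ≠ 0 := Complex.ofReal_ne_zero.mpr hf
  have hprody : (0:ℝ) < ∏ t ∈ univ.erase (⟨0, hk0⟩ : Fin k), y (f t) :=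
    Finset.prod_pos fun t _ => hy _
  have hkey : ∏ t ∈ univ.erase (⟨0, hk0⟩ : Fin k), x (f t) =
      ((∏ t ∈ univ.erase (⟨0, hk0⟩ : Fin k), y (f t) : ℝ) : ℂ) * w := by
    apply mul_left_cancel₀ haf
    rw [happ]
    push_cast
    simp only [hax]
    ring
  rw [Finset.prod_div_distrib, hkey]
  have h2 : ∏ t ∈ univ.erase (⟨0, hk0⟩ : Fin k), ((y (f t) : ℝ) : ℂ) =
      ((∏ t ∈ univ.erase (⟨0, hk0⟩ : Fin k), y (f t) : ℝ) : ℂ) := by push_cast; rfl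
  rw [h2]
  rw [mul_comm, mul_div_assoc, div_self (by exact_mod_cast hprody.ne' : ((∏ t ∈ univ.erase (⟨0, hk0⟩ : Fin k), y (f t) : ℝ) : ℂ) ≠ 0), mul_one, hw, div_pow, hd]
  have hyne : ((y i : ℝ) : ℂ) ≠ 0 := Complex.ofReal_ne_zero.mpr (hy i).ne'
  have hρne : ((ρ : ℝ) : ℂ) ≠ 0 := Complex.ofReal_ne_zero.mpr hρpos.ne'
  push_cast
  field_simp

lemma eigen_of_align {k n : ℕ} (hk0 : 0 < k) (a : (Fin k → Fin n) → ℝ)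
    (ρ : ℝ) (hρpos : 0 < ρ) (y : Fin n → ℝ)
    (hρR : ∀ i, Ap hk0 a y i = ρ * y i ^ (k - 1))
    (μ : ℂ) (z : Fin n → ℂ)
    (hal : ∀ f : Fin k → Fin n, a f ≠ 0 →
      ∏ t ∈ univ.erase (⟨0, hk0⟩ : Fin k), z (f t) = (μ / (ρ : ℂ)) * z (f ⟨0, hk0⟩) ^ (k - 1)) :
    ∀ i, tApply hk0 (fun j => (a j : ℂ)) (fun i' => (y i' : ℂ) * z i') i =
      μ * ((y i : ℂ) * z i) ^ (k - 1) := by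
  intro i
  rw [tApply_filter]
  have hterm : ∀ j ∈ univ.filter (fun j : Fin k → Fin n => j ⟨0, hk0⟩ = i),
      (a j : ℂ) * ∏ t ∈ univ.erase (⟨0, hk0⟩ : Fin k), ((y (j t) : ℂ) * z (j t)) =
      ((a j : ℝ) * ∏ t ∈ univ.erase (⟨0, hk0⟩ : Fin k), y (j t) : ℝ) *
        ((μ / (ρ : ℂ)) * z i ^ (k - 1)) := by
    intro j hj
    have hj0 : j ⟨0, hk0⟩ = i := by simpa using hj
    by_cases haj : a j = 0
    · simp [haj]
    · rw [Finset.prod_mul_distrib]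
      have := hal j haj
      rw [hj0] at this
      rw [this]
      push_cast
      ring
  rw [Finset.sum_congr rfl hterm, ← Finset.sum_mul]
  have : (∑ j ∈ univ.filter (fun j : Fin k → Fin n => j ⟨0, hk0⟩ = i),
      ((a j : ℝ) * ∏ t ∈ univ.erase (⟨0, hk0⟩ : Fin k), y (j t) : ℝ) : ℂ) =
      ((Ap hk0 a y i : ℝ) : ℂ) := by
    rw [Ap]; push_cast; rfl
  rw [this, hρR i]
  have hρne : ((ρ : ℝ) : ℂ) ≠ 0 := Complex.ofReal_ne_zero.mpr hρpos.ne'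
  push_cast
  rw [mul_pow]
  field_simp

lemma aux_scale (Y0 Y X0 X c : ℂ) (hc : c ≠ 0) (hX0 : X0 ≠ 0) (hY : Y ≠ 0) :
    Y0 / (c * X0) * (c * X) / Y = Y0 / X0 * X / Y := by
  field_simp

lemma aux_linv (Y Y0 X0 X : ℂ) (hY : Y ≠ 0) : Y * (Y0 / X0 * X / Y) = Y0 / X0 * X := by
  rw [mul_comm Y, div_mul_eq_mul_div, mul_div_assoc, div_self hY, mul_one]

def ZS {k n : ℕ} (hk0 : 0 < k) (hn : 0 < n) (a : (Fin k → Fin n) → ℝ)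
    (ρ : ℝ) (μ : ℂ) : Set (Fin n → ℂ) :=
  {z | z ⟨0, hn⟩ = 1 ∧ (∀ i, ‖z i‖ = 1) ∧
    ∀ f : Fin k → Fin n, a f ≠ 0 →
      ∏ t ∈ univ.erase (⟨0, hk0⟩ : Fin k), z (f t) = (μ / (ρ : ℂ)) * z (f ⟨0, hk0⟩) ^ (k - 1)}

lemma tApply_smul {k n : ℕ} (hk0 : 0 < k) (b : (Fin k → Fin n) → ℂ) (c : ℂ) (x : Fin n → ℂ)
    (i : Fin n) : tApply hk0 b (c • x) i = c ^ (k - 1) * tApply hk0 b x i := by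
  rw [tApply, tApply, Finset.mul_sum]
  refine Finset.sum_congr rfl fun j _ => ?_
  rw [mul_ite, mul_zero]
  refine if_congr Iff.rfl ?_ rfl
  simp only [Pi.smul_apply, smul_eq_mul]
  rw [Finset.prod_mul_distrib, Finset.prod_const, card_erase0]
  ring

noncomputable def zOf {k n : ℕ} (hk0 : 0 < k) (hn : 0 < n) (y : Fin n → ℝ) (x : Fin n → ℂ) :
    Fin n → ℂ :=
  fun i' => (y ⟨0, hn⟩ : ℂ) / x ⟨0, hn⟩ * x i' / (y i' : ℂ)

lemma quotZEquiv {k n : ℕ} (hk0 : 0 < k) (hk : 2 ≤ k) (hn : 0 < n) (a : (Fin k → Fin n) → ℝ)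
    (ha : ∀ j, 0 ≤ a j) (hwi : WeaklyIrreducible hk0 (fun j => (a j : ℂ)))
    (ρ : ℝ) (hρpos : 0 < ρ) (y : Fin n → ℝ) (hy : ∀ i, 0 < y i)
    (hρR : ∀ i, Ap hk0 a y i = ρ * y i ^ (k - 1)) (μ : ℂ) (hμ : ‖μ‖ = ρ) :
    Nonempty ((Quot fun (x z : {x : Fin n → ℂ // x ≠ 0 ∧
        ∀ i, tApply hk0 (fun j => (a j : ℂ)) x i = μ * x i ^ (k - 1)}) =>
      ∃ c : ℂ, c ≠ 0 ∧ z.1 = c • x.1) ≃ ↥(ZS hk0 hn a ρ μ)) := by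
  set i0 : Fin n := ⟨0, hn⟩ with hi0
  have hyne : ∀ i, ((y i : ℝ) : ℂ) ≠ 0 := fun i => Complex.ofReal_ne_zero.mpr (hy i).ne'
  -- every eigenvector has everywhere nonzero entries
  have hnz : ∀ x : Fin n → ℂ, x ≠ 0 →
      (∀ i, tApply hk0 (fun j => (a j : ℂ)) x i = μ * x i ^ (k - 1)) → ∀ i, x i ≠ 0 := by
    intro x hxne hx i
    obtain ⟨s, hs, habs⟩ := abs_eigen hk0 hk hn a ha hwi ρ y hy hρR μ hμ x hxne hx
    intro h0
    have := habs i
    rw [h0] at this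
    simp at this
    rcases this with h | h
    · exact hs.ne' h
    · exact (hy i).ne' h
  -- the normalized vector of an eigenvector is in ZS
  have hmem : ∀ x : Fin n → ℂ, x ≠ 0 →
      (∀ i, tApply hk0 (fun j => (a j : ℂ)) x i = μ * x i ^ (k - 1)) →
      zOf hk0 hn y x ∈ ZS hk0 hn a ρ μ := by
    intro x hxne hx
    obtain ⟨s, hs, habs⟩ := abs_eigen hk0 hk hn a ha hwi ρ y hy hρR μ hμ x hxne hx
    have hx0 := hnz x hxne hx
    set c : ℂ := (y i0 : ℂ) / x i0 with hc
    have hcne : c ≠ 0 := div_ne_zero (hyne i0) (hx0 i0)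
    have hxeig' : ∀ i, tApply hk0 (fun j => (a j : ℂ)) (c • x) i = μ * ((c • x) i) ^ (k - 1) := by
      intro i
      rw [tApply_smul, hx i, Pi.smul_apply, smul_eq_mul, mul_pow]
      ring
    have habs' : ∀ i, ‖(c • x) i‖ = y i := by
      intro i
      rw [Pi.smul_apply, smul_eq_mul, norm_mul, hc, norm_div, Complex.norm_real, Real.norm_eq_abs,
        abs_of_pos (hy i0), habs i0, habs i]
      field_simp [hs.ne', (hy i0).ne']
    have hzx : ∀ i, zOf hk0 hn y x i = (c • x) i / (y i : ℂ) := fun i => by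
      rw [zOf, Pi.smul_apply, smul_eq_mul, hc]
    refine ⟨?_, ?_, ?_⟩
    · rw [zOf]
      rw [div_mul_cancel₀ _ (hx0 _), div_self (hyne _)]
    · intro i
      rw [hzx i, norm_div, habs' i, Complex.norm_real, Real.norm_eq_abs, abs_of_pos (hy i),
        div_self (hy i).ne']
    · intro f hf
      have := align hk0 a ha ρ hρpos y hy hρR μ hμ (c • x) hxeig' habs' f hf
      rw [Finset.prod_congr rfl fun t _ => (hzx (f t)).symm, ← hzx (f ⟨0, hk0⟩)] at this
      exact this
  -- scaling invariance of zOf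
  have hzscale : ∀ (x : Fin n → ℂ) (c : ℂ), c ≠ 0 → (∀ i, x i ≠ 0) →
      zOf hk0 hn y (c • x) = zOf hk0 hn y x := by
    intro x c hc hx0
    funext i
    rw [zOf, zOf, Pi.smul_apply, Pi.smul_apply, smul_eq_mul, smul_eq_mul]
    exact aux_scale _ _ _ _ _ hc (hx0 _) (hyne _)
  -- build the equivalence
  refine ⟨Equiv.mk
    (Quot.lift (fun x => (⟨zOf hk0 hn y x.1, hmem x.1 x.2.1 x.2.2⟩ : ↥(ZS hk0 hn a ρ μ)))
      ?_)
    (fun z => Quot.mk _ ⟨fun i => (y i : ℂ) * z.1 i, ?_, ?_⟩)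
    ?_ ?_⟩
  · rintro x x' ⟨c, hc, he⟩
    refine Subtype.ext ?_
    show zOf hk0 hn y x.1 = zOf hk0 hn y x'.1
    rw [he]
    exact (hzscale x.1 c hc (hnz x.1 x.2.1 x.2.2)).symm
  · -- nonzero
    intro h0
    have := congrFun h0 i0
    simp only [Pi.zero_apply] at this
    rcases mul_eq_zero.mp this with h | h
    · exact hyne i0 h
    · rw [z.2.1] at h; exact one_ne_zero h
  · exact eigen_of_align hk0 a ρ hρpos y hρR μ z.1 z.2.2.2
  · -- left inverse
    refine Quot.ind fun x => ?_
    refine (Quot.sound ?_).symm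
    refine ⟨(y i0 : ℂ) / x.1 i0, div_ne_zero (hyne i0) (hnz x.1 x.2.1 x.2.2 i0), ?_⟩
    funext i
    show (y i : ℂ) * zOf hk0 hn y x.1 i = ((y i0 : ℂ) / x.1 i0) * x.1 i
    rw [zOf]
    exact aux_linv _ _ _ _ (hyne i)
  · -- right inverse
    intro z
    refine Subtype.ext (funext fun i => ?_)
    show zOf hk0 hn y (fun i' => (y i' : ℂ) * z.1 i') i = z.1 i
    rw [zOf]
    simp only [z.2.1]
    field_simp [hyne]

noncomputable def rr {k n : ℕ} (hk0 : 0 < k) (z : Fin n → ℂ) (f : Fin k → Fin n) : ℝ :=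
  ∑ t ∈ univ.erase (⟨0, hk0⟩ : Fin k), Complex.arg (z (f t)) -
    (k - 1 : ℕ) * Complex.arg (z (f ⟨0, hk0⟩))

lemma exp_arg_of_abs_one (z : ℂ) (h : ‖z‖ = 1) :
    Complex.exp ((Complex.arg z : ℝ) * Complex.I) = z := by
  have := Complex.norm_mul_exp_arg_mul_I z
  rwa [h, Complex.ofReal_one, one_mul] at this

lemma exp_rr {k n : ℕ} (hk0 : 0 < k) (hn : 0 < n) (a : (Fin k → Fin n) → ℝ)
    (ρ : ℝ) (μ : ℂ) (z : Fin n → ℂ) (hz : z ∈ ZS hk0 hn a ρ μ)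
    (f : Fin k → Fin n) (hf : a f ≠ 0) :
    Complex.exp ((rr hk0 z f : ℝ) * Complex.I) = μ / (ρ : ℂ) := by
  obtain ⟨-, habs, hal⟩ := hz
  have h1 : Complex.exp (((∑ t ∈ univ.erase (⟨0, hk0⟩ : Fin k), Complex.arg (z (f t)) : ℝ)) * Complex.I)
      = ∏ t ∈ univ.erase (⟨0, hk0⟩ : Fin k), z (f t) := by
    push_cast
    rw [Finset.sum_mul, Complex.exp_sum]
    exact Finset.prod_congr rfl fun t _ => exp_arg_of_abs_one _ (habs _)
  have h2 : Complex.exp ((((k - 1 : ℕ) * Complex.arg (z (f ⟨0, hk0⟩)) : ℝ)) * Complex.I)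
      = z (f ⟨0, hk0⟩) ^ (k - 1) := by
    push_cast
    rw [mul_assoc, Complex.exp_nat_mul, exp_arg_of_abs_one _ (habs _)]
  rw [rr, Complex.ofReal_sub, sub_mul, Complex.exp_sub, h1, h2, hal f hf,
    mul_div_assoc, div_self (pow_ne_zero _ ?_), mul_one]
  intro h0
  have := habs (f ⟨0, hk0⟩)
  rw [h0] at this
  simp at this

lemma rr_int {k n : ℕ} (hk0 : 0 < k) (hn : 0 < n) (a : (Fin k → Fin n) → ℝ)
    (ρ : ℝ) (μ : ℂ) (z : Fin n → ℂ) (hz : z ∈ ZS hk0 hn a ρ μ)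
    (f : Fin k → Fin n) (hf : a f ≠ 0) :
    ∃ m : ℤ, rr hk0 z f = 2 * Real.pi * m + Complex.arg (μ / (ρ : ℂ)) := by
  have habs1 : ‖μ / (ρ : ℂ)‖ = 1 := by
    have := exp_rr hk0 hn a ρ μ z hz f hf
    rw [← this, Complex.norm_exp]
    simp
  have h1 : Complex.exp (((rr hk0 z f - Complex.arg (μ / (ρ : ℂ)) : ℝ)) * Complex.I) = 1 := by
    rw [Complex.ofReal_sub, sub_mul, Complex.exp_sub, exp_rr hk0 hn a ρ μ z hz f hf,
      exp_arg_of_abs_one _ habs1, div_self]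
    intro h0
    rw [h0] at habs1
    simp at habs1
  obtain ⟨m, hm⟩ := Complex.exp_eq_one_iff.mp h1
  refine ⟨m, ?_⟩
  have him := congrArg Complex.im hm
  simp [Complex.mul_im] at him
  linarith [him]

noncomputable def G {k n : ℕ} (hk0 : 0 < k) (z : Fin n → ℂ) (f : Fin k → Fin n) : ℤ :=
  ⌊rr hk0 z f / (2 * Real.pi)⌋

lemma rr_bound {k n : ℕ} (hk0 : 0 < k) (z : Fin n → ℂ) (f : Fin k → Fin n) :
    |rr hk0 z f| ≤ 2 * (k - 1 : ℕ) * Real.pi := by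
  rw [rr]
  have h1 : |∑ t ∈ univ.erase (⟨0, hk0⟩ : Fin k), Complex.arg (z (f t))| ≤ (k - 1 : ℕ) * Real.pi := by
    calc |∑ t ∈ univ.erase (⟨0, hk0⟩ : Fin k), Complex.arg (z (f t))|
        ≤ ∑ t ∈ univ.erase (⟨0, hk0⟩ : Fin k), |Complex.arg (z (f t))| :=
          Finset.abs_sum_le_sum_abs _ _
      _ ≤ ∑ _t ∈ univ.erase (⟨0, hk0⟩ : Fin k), Real.pi :=
          Finset.sum_le_sum fun t _ => Complex.abs_arg_le_pi _
      _ = (k - 1 : ℕ) * Real.pi := by rw [Finset.sum_const, card_erase0, nsmul_eq_mul]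
  have h2 : |(k - 1 : ℕ) * Complex.arg (z (f ⟨0, hk0⟩))| ≤ (k - 1 : ℕ) * Real.pi := by
    rw [abs_mul, abs_of_nonneg (by positivity : (0:ℝ) ≤ (k - 1 : ℕ))]
    exact mul_le_mul_of_nonneg_left (Complex.abs_arg_le_pi _) (by positivity)
  calc |_ - _| ≤ _ + _ := abs_sub _ _
    _ ≤ 2 * (k - 1 : ℕ) * Real.pi := by linarith

lemma G_bound {k n : ℕ} (hk0 : 0 < k) (z : Fin n → ℂ) (f : Fin k → Fin n) :
    G hk0 z f ∈ Finset.Icc (-(k : ℤ)) k := by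
  have hπ := Real.pi_pos
  have hb := rr_bound hk0 z f
  have hk1 : (k - 1 : ℕ) ≤ (k : ℝ) := by
    have : ((k - 1 : ℕ) : ℝ) ≤ (k : ℕ) := by exact_mod_cast Nat.sub_le k 1
    simpa using this
  have h1 : rr hk0 z f / (2 * Real.pi) ≤ (k : ℝ) := by
    rw [div_le_iff₀ (by positivity)]
    have := (abs_le.mp hb).2
    nlinarith
  have h2 : (-(k : ℝ)) ≤ rr hk0 z f / (2 * Real.pi) := by
    rw [le_div_iff₀ (by positivity)]
    have := (abs_le.mp hb).1
    nlinarith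
  rw [Finset.mem_Icc]
  constructor
  · have : ⌊(-(k:ℝ))⌋ ≤ ⌊rr hk0 z f / (2 * Real.pi)⌋ := Int.floor_le_floor h2
    rwa [show (-(k:ℝ)) = ((-(k:ℤ) : ℤ) : ℝ) by push_cast; ring, Int.floor_intCast] at this
  · have : ⌊rr hk0 z f / (2 * Real.pi)⌋ ≤ ⌊((k:ℤ) : ℝ)⌋ := Int.floor_le_floor (by exact_mod_cast h1)
    rwa [Int.floor_intCast] at this

lemma G_det {k n : ℕ} (hk0 : 0 < k) (hn : 0 < n) (a : (Fin k → Fin n) → ℝ)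
    (ρ : ℝ) (μ : ℂ) (z z' : Fin n → ℂ) (hz : z ∈ ZS hk0 hn a ρ μ) (hz' : z' ∈ ZS hk0 hn a ρ μ)
    (f : Fin k → Fin n) (hf : a f ≠ 0) (hG : G hk0 z f = G hk0 z' f) :
    rr hk0 z f = rr hk0 z' f := by
  have hπ := Real.pi_pos
  obtain ⟨m, hm⟩ := rr_int hk0 hn a ρ μ z hz f hf
  obtain ⟨m', hm'⟩ := rr_int hk0 hn a ρ μ z' hz' f hf
  have hkey : ∀ mm : ℤ, ⌊(2 * Real.pi * mm + Complex.arg (μ / (ρ : ℂ))) / (2 * Real.pi)⌋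
      = mm + ⌊Complex.arg (μ / (ρ : ℂ)) / (2 * Real.pi)⌋ := by
    intro mm
    have : (2 * Real.pi * mm + Complex.arg (μ / (ρ : ℂ))) / (2 * Real.pi)
        = (mm : ℝ) + Complex.arg (μ / (ρ : ℂ)) / (2 * Real.pi) := by
      field_simp
    rw [this, Int.floor_intCast_add]
  rw [G, G, hm, hm', hkey m, hkey m'] at hG
  have : m = m' := by omega
  rw [hm, hm', this]

lemma ZS_finite {k n : ℕ} (hk0 : 0 < k) (hk : 2 ≤ k) (hn : 0 < n) (a : (Fin k → Fin n) → ℝ)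
    (hwi : WeaklyIrreducible hk0 (fun j => (a j : ℂ)))
    (ρ : ℝ) (μ : ℂ) : (ZS hk0 hn a ρ μ).Finite := by
  have hπ := Real.pi_pos
  -- injectivity of G on ZS
  have hinj : Set.InjOn (G hk0) (ZS hk0 hn a ρ μ) := by
    intro z hz z' hz' hG
    set δ : Fin n → ℝ := fun i => Complex.arg (z i) - Complex.arg (z' i) with hδ
    have hconst := const_of hk0 hn (fun j => (a j : ℂ)) hwi δ ?_
    · have hδ0 : δ ⟨0, hn⟩ = 0 := by
        rw [hδ]
        simp only []
        rw [hz.1, hz'.1, Complex.arg_one, sub_zero]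
      funext i
      have h1 : Complex.arg (z i) = Complex.arg (z' i) := by
        have := hconst i
        rw [hδ0] at this
        have h2 : δ i = 0 := this
        rw [hδ] at h2
        simpa [sub_eq_zero] using h2
      rw [← exp_arg_of_abs_one _ (hz.2.1 i), ← exp_arg_of_abs_one _ (hz'.2.1 i), h1]
    · intro i hmaxi f hfC hf0 t ht
      have hf : a f ≠ 0 := by simpa using hfC
      have hrr : rr hk0 z f = rr hk0 z' f :=
        G_det hk0 hn a ρ μ z z' hz hz' f hf (congrFun hG f)
      have hsum : ∑ t' ∈ univ.erase (⟨0, hk0⟩ : Fin k), δ (f t') = (k - 1 : ℕ) * δ i := by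
        rw [hδ]
        simp only []
        rw [Finset.sum_sub_distrib]
        have e1 := sub_eq_sub_iff_sub_eq_sub.mp (sub_eq_sub_iff_sub_eq_sub.mpr hrr)
        rw [rr, rr] at hrr
        rw [← hf0]
        ring_nf
        ring_nf at hrr
        linarith [hrr]
      by_contra hne
      have hlt : δ (f t) < δ i := lt_of_le_of_ne (hmaxi (f t)) hne
      have hmem : t ∈ univ.erase (⟨0, hk0⟩ : Fin k) := Finset.mem_erase.mpr ⟨ht, mem_univ _⟩
      have : ∑ t' ∈ univ.erase (⟨0, hk0⟩ : Fin k), δ (f t') <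
          ∑ _t' ∈ univ.erase (⟨0, hk0⟩ : Fin k), δ i :=
        Finset.sum_lt_sum (fun t' _ => hmaxi (f t')) ⟨t, hmem, hlt⟩
      rw [Finset.sum_const, card_erase0, nsmul_eq_mul, hsum] at this
      exact lt_irrefl _ this
  -- the image of G is contained in a finite set
  have himg : Set.Finite (Set.pi (Set.univ : Set (Fin k → Fin n))
      (fun _ => ((Finset.Icc (-(k : ℤ)) k : Finset ℤ) : Set ℤ))) :=
    Set.Finite.pi fun _ => Finset.finite_toSet _
  refine Set.Finite.of_finite_image (himg.subset ?_) hinj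
  rintro g ⟨z, hz, rfl⟩
  intro f _
  exact G_bound hk0 z f

lemma zsEquiv {k n : ℕ} (hk0 : 0 < k) (hn : 0 < n) (a : (Fin k → Fin n) → ℝ)
    (ρ : ℝ) (hρpos : 0 < ρ) (μ : ℂ) (hμ : ‖μ‖ = ρ)
    (w : Fin n → ℂ) (hw : w ∈ ZS hk0 hn a ρ μ) :
    Nonempty (↥(ZS hk0 hn a ρ μ) ≃ ↥(ZS hk0 hn a ρ ((ρ : ℝ) : ℂ))) := by
  have hρC : ((ρ : ℝ) : ℂ) ≠ 0 := Complex.ofReal_ne_zero.mpr hρpos.ne'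
  have hμ0 : μ ≠ 0 := by
    intro h; rw [h] at hμ; simp at hμ; exact hρpos.ne' hμ.symm
  have hμρ : μ / (ρ : ℂ) ≠ 0 := div_ne_zero hμ0 hρC
  have hwne : ∀ i, w i ≠ 0 := fun i h0 => by
    have := hw.2.1 i; rw [h0] at this; simp at this
  obtain ⟨hw1, hw2, hw3⟩ := hw
  refine ⟨Equiv.mk
    (fun z => ⟨fun i => z.1 i / w i, ?_⟩)
    (fun z => ⟨fun i => w i * z.1 i, ?_⟩) ?_ ?_⟩
  · obtain ⟨hz1, hz2, hz3⟩ := z.2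
    refine ⟨?_, ?_, ?_⟩
    · show z.1 ⟨0, hn⟩ / w ⟨0, hn⟩ = 1
      rw [hz1, hw1, div_one]
    · intro i
      show ‖z.1 i / w i‖ = 1
      rw [norm_div, hz2 i, hw2 i, div_one]
    · intro f hf
      show ∏ t ∈ univ.erase (⟨0, hk0⟩ : Fin k), (z.1 (f t) / w (f t)) =
        ((ρ : ℂ) / (ρ : ℂ)) * (z.1 (f ⟨0, hk0⟩) / w (f ⟨0, hk0⟩)) ^ (k - 1)
      rw [Finset.prod_div_distrib, hz3 f hf, hw3 f hf, div_self hρC, div_pow, one_mul,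
        mul_div_mul_left _ _ hμρ]
  · obtain ⟨hz1, hz2, hz3⟩ := z.2
    refine ⟨?_, ?_, ?_⟩
    · show w ⟨0, hn⟩ * z.1 ⟨0, hn⟩ = 1
      rw [hz1, hw1, mul_one]
    · intro i
      show ‖w i * z.1 i‖ = 1
      rw [norm_mul, hz2 i, hw2 i, mul_one]
    · intro f hf
      show ∏ t ∈ univ.erase (⟨0, hk0⟩ : Fin k), (w (f t) * z.1 (f t)) =
        (μ / (ρ : ℂ)) * (w (f ⟨0, hk0⟩) * z.1 (f ⟨0, hk0⟩)) ^ (k - 1)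
      rw [Finset.prod_mul_distrib, hz3 f hf, hw3 f hf, div_self hρC, one_mul, mul_pow]
      ring
  · intro z
    refine Subtype.ext (funext fun i => ?_)
    show w i * (z.1 i / w i) = z.1 i
    rw [mul_comm]
    exact div_mul_cancel₀ _ (hwne i)
  · intro z
    refine Subtype.ext (funext fun i => ?_)
    show (w i * z.1 i) / w i = z.1 i
    rw [mul_comm, mul_div_assoc, div_self (hwne i), mul_one]

end S12

open S12 in
/-- for a nonnegative weakly irreducible tensor `𝒜` with Perron–Frobenius
eigenvalue `ρ` and any eigenvalue `λ` of `𝒜` with `|λ| = ρ`, the projective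
eigenvarieties `𝕍_λ(𝒜)` and `𝕍_ρ(𝒜)` (eigenvectors up to nonzero complex scalars) are
finite and have the same cardinality. -/
theorem stmt12 (k n : ℕ) (hk : 2 ≤ k) (a : (Fin k → Fin n) → ℝ)
    (ha : ∀ j, 0 ≤ a j)
    (hwi : WeaklyIrreducible (by omega : 0 < k) (fun j => (a j : ℂ)))
    (ρ : ℝ) (y : Fin n → ℝ) (hy : ∀ i, 0 < y i)
    (hρ : ∀ i, tApply (by omega : 0 < k) (fun j => (a j : ℂ)) (fun i => (y i : ℂ)) i =
      (ρ : ℂ) * (y i : ℂ) ^ (k - 1))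
    (lam : ℂ) (hlam : ‖lam‖ = ρ)
    (hev : ∃ x : Fin n → ℂ, x ≠ 0 ∧
      ∀ i, tApply (by omega : 0 < k) (fun j => (a j : ℂ)) x i = lam * x i ^ (k - 1)) :
    Finite (Quot (fun
        (x z : {x : Fin n → ℂ // x ≠ 0 ∧
          ∀ i, tApply (by omega : 0 < k) (fun j => (a j : ℂ)) x i = lam * x i ^ (k - 1)}) =>
      ∃ c : ℂ, c ≠ 0 ∧ z.1 = c • x.1)) ∧
    Finite (Quot (fun
        (x z : {x : Fin n → ℂ // x ≠ 0 ∧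
          ∀ i, tApply (by omega : 0 < k) (fun j => (a j : ℂ)) x i =
            (ρ : ℂ) * x i ^ (k - 1)}) =>
      ∃ c : ℂ, c ≠ 0 ∧ z.1 = c • x.1)) ∧
    Nat.card (Quot (fun
        (x z : {x : Fin n → ℂ // x ≠ 0 ∧
          ∀ i, tApply (by omega : 0 < k) (fun j => (a j : ℂ)) x i = lam * x i ^ (k - 1)}) =>
      ∃ c : ℂ, c ≠ 0 ∧ z.1 = c • x.1)) =
    Nat.card (Quot (fun
        (x z : {x : Fin n → ℂ // x ≠ 0 ∧
          ∀ i, tApply (by omega : 0 < k) (fun j => (a j : ℂ)) x i =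
            (ρ : ℂ) * x i ^ (k - 1)}) =>
      ∃ c : ℂ, c ≠ 0 ∧ z.1 = c • x.1)) := by
  classical
  have hk0 : 0 < k := by omega
  obtain ⟨x₀, hx₀ne, hx₀⟩ := hev
  rcases Nat.lt_or_ge n 1 with hn0 | hn1
  · exact absurd (funext fun i => absurd i.isLt (by omega)) hx₀ne
  rcases Nat.lt_or_ge n 2 with hn1' | hn2
  · -- n = 1 : all eigenvectors are proportional
    have hn1e : n = 1 := by omega
    subst hn1e
    have hrel : ∀ (μ : ℂ) (x z : {x : Fin 1 → ℂ // x ≠ 0 ∧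
        ∀ i, tApply hk0 (fun j => (a j : ℂ)) x i = μ * x i ^ (k - 1)}),
        ∃ c : ℂ, c ≠ 0 ∧ z.1 = c • x.1 := by
      intro μ x z
      have hx0 : x.1 0 ≠ 0 := fun h =>
        x.2.1 (funext fun i => by rw [Subsingleton.elim i 0]; exact h)
      have hz0 : z.1 0 ≠ 0 := fun h =>
        z.2.1 (funext fun i => by rw [Subsingleton.elim i 0]; exact h)
      refine ⟨z.1 0 / x.1 0, div_ne_zero hz0 hx0, funext fun i => ?_⟩
      rw [Subsingleton.elim i 0]
      show z.1 0 = (z.1 0 / x.1 0) * x.1 0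
      rw [div_mul_cancel₀ _ hx0]
    have s1 : Subsingleton (Quot (fun (x z : {x : Fin 1 → ℂ // x ≠ 0 ∧
        ∀ i, tApply hk0 (fun j => (a j : ℂ)) x i = lam * x i ^ (k - 1)}) =>
        ∃ c : ℂ, c ≠ 0 ∧ z.1 = c • x.1)) :=
      ⟨Quot.ind fun x => Quot.ind fun z => Quot.sound (hrel lam x z)⟩
    have s2 : Subsingleton (Quot (fun (x z : {x : Fin 1 → ℂ // x ≠ 0 ∧
        ∀ i, tApply hk0 (fun j => (a j : ℂ)) x i = (ρ : ℂ) * x i ^ (k - 1)}) =>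
        ∃ c : ℂ, c ≠ 0 ∧ z.1 = c • x.1)) :=
      ⟨Quot.ind fun x => Quot.ind fun z => Quot.sound (hrel (ρ : ℂ) x z)⟩
    have hyne : (fun i : Fin 1 => (y i : ℂ)) ≠ 0 := fun h => by
      have := congrFun h 0
      simp only [Pi.zero_apply, Complex.ofReal_eq_zero] at this
      exact (hy 0).ne' this
    have ne1 : Nonempty (Quot (fun (x z : {x : Fin 1 → ℂ // x ≠ 0 ∧
        ∀ i, tApply hk0 (fun j => (a j : ℂ)) x i = lam * x i ^ (k - 1)}) =>
        ∃ c : ℂ, c ≠ 0 ∧ z.1 = c • x.1)) := ⟨Quot.mk _ ⟨x₀, hx₀ne, hx₀⟩⟩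
    have ne2 : Nonempty (Quot (fun (x z : {x : Fin 1 → ℂ // x ≠ 0 ∧
        ∀ i, tApply hk0 (fun j => (a j : ℂ)) x i = (ρ : ℂ) * x i ^ (k - 1)}) =>
        ∃ c : ℂ, c ≠ 0 ∧ z.1 = c • x.1)) := ⟨Quot.mk _ ⟨fun i => (y i : ℂ), hyne, hρ⟩⟩
    have c1 := Nat.card_eq_one_iff_unique.mpr ⟨s1, ne1⟩
    have c2 := Nat.card_eq_one_iff_unique.mpr ⟨s2, ne2⟩
    exact ⟨@Finite.of_subsingleton _ s1, @Finite.of_subsingleton _ s2, by rw [c1, c2]⟩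
  · -- main case : 2 ≤ n
    have hn : 0 < n := by omega
    have hρR : ∀ i, Ap hk0 a y i = ρ * y i ^ (k - 1) := by
      intro i
      have h := hρ i
      rw [tApply_real hk0 a y i] at h
      exact_mod_cast h
    have hρpos : 0 < ρ := rho_pos hk0 hn2 a ha hwi ρ y hy hρR
    have hρabs : ‖((ρ : ℝ) : ℂ)‖ = ρ := by
      rw [Complex.norm_real, Real.norm_eq_abs, abs_of_pos hρpos]
    obtain ⟨E1⟩ := quotZEquiv hk0 hk hn a ha hwi ρ hρpos y hy hρR lam hlam
    obtain ⟨E2⟩ := quotZEquiv hk0 hk hn a ha hwi ρ hρpos y hy hρR ((ρ : ℝ) : ℂ) hρabs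
    set w := E1 (Quot.mk _ ⟨x₀, hx₀ne, hx₀⟩) with hw
    obtain ⟨E3⟩ := zsEquiv hk0 hn a ρ hρpos lam hlam w.1 w.2
    have hfin : (ZS hk0 hn a ρ ((ρ : ℝ) : ℂ)).Finite := ZS_finite hk0 hk hn a hwi ρ _
    haveI hfin' : Finite ↥(ZS hk0 hn a ρ ((ρ : ℝ) : ℂ)) := hfin.to_subtype
    haveI F1 : Finite (Quot (fun (x z : {x : Fin n → ℂ // x ≠ 0 ∧
        ∀ i, tApply hk0 (fun j => (a j : ℂ)) x i = lam * x i ^ (k - 1)}) =>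
        ∃ c : ℂ, c ≠ 0 ∧ z.1 = c • x.1)) := Finite.of_equiv _ (E1.trans E3).symm
    haveI F2 : Finite (Quot (fun (x z : {x : Fin n → ℂ // x ≠ 0 ∧
        ∀ i, tApply hk0 (fun j => (a j : ℂ)) x i = (ρ : ℂ) * x i ^ (k - 1)}) =>
        ∃ c : ℂ, c ≠ 0 ∧ z.1 = c • x.1)) := Finite.of_equiv _ E2.symm
    exact ⟨F1, F2, Nat.card_congr ((E1.trans E3).trans E2.symm)⟩
end

section
/- Let 𝒜 be a nonnegative, combinatorial symmetric, weakly irreducible tensor of order k ≥ 2 and dimension n, let ρ be its unique eigenvalue admitting a strictly positive eigenvector, and let λ be an eigenvalue of 𝒜 with |λ| = ρ. Let x be an eigenvector of 𝒜 associated with λ, scaled so that x_1 is a positive real number. Then every entry x_i is nonzero, (x_i/|x_i|)^k = 1 for every i ∈ {1,…,n}, and for every index tuple (i_1,…,i_k) with a_{i_1…i_k} ≠ 0 the product satisfies x_{i_1}x_{i_2}⋯x_{i_k} = (λ/ρ)·|x_{i_1}x_{i_2}⋯x_{i_k}| (the uniform angle property). -/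
open Finset

/-- `𝒜` is combinatorial symmetric if its support is invariant under permutations of
the indices. -/
def CombSymmetricR {k n : ℕ} (a : (Fin k → Fin n) → ℝ) : Prop :=
  ∀ (σ : Equiv.Perm (Fin k)) (j : Fin k → Fin n), a j ≠ 0 → a (j ∘ σ) ≠ 0

lemma re_eq_abs' {z : ℂ} (h : z.re = ‖z‖) : z = (‖z‖ : ℂ) := by
  have h2 : (‖z‖)^2 = z.re^2 + z.im^2 := by
    rw [Complex.sq_norm, Complex.normSq_apply]; ring
  have him2 : z.im^2 = 0 := by rw [← h] at h2; linarith
  have him : z.im = 0 := by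
    have := sq_eq_zero_iff.mp him2
    exact this
  rw [← h]
  exact (Complex.ext_iff.mpr ⟨rfl, him⟩ : z = (z.re : ℂ))

lemma triangle_eq {ι : Type*} (s : Finset ι) (f : ι → ℂ) (u : ℂ) (hu : ‖u‖ = 1)
    (h : ∑ i ∈ s, f i = u * (∑ i ∈ s, ‖f i‖ : ℝ)) :
    ∀ i ∈ s, f i = u * (‖f i‖ : ℂ) := by
  have huu : (starRingEnd ℂ) u * u = 1 := by
    rw [mul_comm, Complex.mul_conj, ← Complex.sq_norm, hu]; norm_num
  set g : ι → ℂ := fun i => (starRingEnd ℂ) u * f i with hg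
  have hsum : ∑ i ∈ s, g i = ((∑ i ∈ s, ‖f i‖ : ℝ) : ℂ) := by
    rw [hg, ← Finset.mul_sum, h, ← mul_assoc, huu, one_mul]
  have habsg : ∀ i, ‖g i‖ = ‖f i‖ := by
    intro i
    rw [hg]
    simp [norm_mul, Complex.norm_conj, hu]
  have hre : ∑ i ∈ s, (‖f i‖ - (g i).re) = 0 := by
    have := congrArg Complex.re hsum
    rw [Complex.re_sum] at this
    rw [Complex.ofReal_sum] at this
    rw [Complex.re_sum] at this
    simp only [Complex.ofReal_re] at this
    rw [Finset.sum_sub_distrib, this, sub_self]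
  have hterm : ∀ i ∈ s, ‖f i‖ - (g i).re = 0 := by
    intro i hi
    refine (Finset.sum_eq_zero_iff_of_nonneg ?_).mp hre i hi
    intro j hj
    have := Complex.re_le_norm (g j)
    rw [habsg] at this
    linarith
  intro i hi
  have h1 : (g i).re = ‖g i‖ := by
    rw [habsg]; have := hterm i hi; linarith
  have h2 : g i = (‖g i‖ : ℂ) := re_eq_abs' h1
  have : u * g i = f i := by rw [hg, ← mul_assoc, mul_comm u, huu, one_mul]
  conv_lhs => rw [← this, h2, habsg]

lemma prod_eq_of_le_of_pos {ι : Type*} (s : Finset ι) (f g : ι → ℝ)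
    (h0 : ∀ i ∈ s, 0 ≤ f i) (hg : ∀ i ∈ s, 0 < g i) (hle : ∀ i ∈ s, f i ≤ g i)
    (heq : ∏ i ∈ s, f i = ∏ i ∈ s, g i) : ∀ i ∈ s, f i = g i := by
  classical
  induction s using Finset.induction_on with
  | empty => simp
  | @insert b t ha ih =>
    rw [Finset.prod_insert ha, Finset.prod_insert ha] at heq
    have hpf : ∏ i ∈ t, f i ≤ ∏ i ∈ t, g i :=
      Finset.prod_le_prod (fun i hi => h0 i (mem_insert_of_mem hi))
        (fun i hi => hle i (mem_insert_of_mem hi))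
    have hpg : 0 < ∏ i ∈ t, g i := Finset.prod_pos (fun i hi => hg i (mem_insert_of_mem hi))
    have hfb := h0 b (mem_insert_self b t)
    have hgb := hg b (mem_insert_self b t)
    have hlb := hle b (mem_insert_self b t)
    have hb : f b = g b := by nlinarith
    have hrest : ∏ i ∈ t, f i = ∏ i ∈ t, g i := by
      rw [hb] at heq
      exact mul_left_cancel₀ (ne_of_gt hgb) heq
    intro i hi
    rcases Finset.mem_insert.mp hi with h | h
    · rw [h]; exact hb
    · exact ih (fun i hi => h0 i (mem_insert_of_mem hi)) (fun i hi => hg i (mem_insert_of_mem hi))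
        (fun i hi => hle i (mem_insert_of_mem hi)) hrest i h

/-- for a nonnegative combinatorial symmetric weakly irreducible tensor
`𝒜` with Perron–Frobenius eigenvalue `ρ`, an eigenvalue `λ` with `|λ| = ρ` and an
associated eigenvector `x` scaled so that `x_1` is a positive real: every entry of `x`
is nonzero, each `x_i/|x_i|` is a `k`-th root of unity, and the uniform angle property
`x_{i_1}⋯x_{i_k} = (λ/ρ)|x_{i_1}⋯x_{i_k}|` holds whenever `a_{i_1…i_k} ≠ 0`. -/
theorem stmt14 (k n : ℕ) (hk : 2 ≤ k) (hn : 0 < n) (a : (Fin k → Fin n) → ℝ)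
    (ha : ∀ j, 0 ≤ a j)
    (hcs : CombSymmetricR a)
    (hwi : WeaklyIrreducible (by omega : 0 < k) (fun j => (a j : ℂ)))
    (ρ : ℝ) (y : Fin n → ℝ) (hy : ∀ i, 0 < y i)
    (hρ : ∀ i, tApply (by omega : 0 < k) (fun j => (a j : ℂ)) (fun i => (y i : ℂ)) i =
      (ρ : ℂ) * (y i : ℂ) ^ (k - 1))
    (lam : ℂ) (hlam : ‖lam‖ = ρ)
    (x : Fin n → ℂ) (hx0 : x ≠ 0)
    (heig : ∀ i, tApply (by omega : 0 < k) (fun j => (a j : ℂ)) x i = lam * x i ^ (k - 1))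
    (hscale : (x ⟨0, hn⟩).im = 0 ∧ 0 < (x ⟨0, hn⟩).re) :
    (∀ i, x i ≠ 0) ∧
    (∀ i, (x i / (‖x i‖ : ℂ)) ^ k = 1) ∧
    (∀ j : Fin k → Fin n, a j ≠ 0 →
      (∏ t, x (j t)) = (lam / (ρ : ℂ)) * (‖∏ t, x (j t)‖ : ℂ)) := by
  classical
  have hk0 : 0 < k := by omega
  obtain ⟨m, hm⟩ : ∃ m, k = m + 1 := ⟨k - 1, by omega⟩
  have hkm : k - 1 = m := by omega
  set z0 : Fin k := ⟨0, hk0⟩ with hz0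
  set E : Finset (Fin k) := univ.erase z0 with hE
  have hEcard : E.card = m := by
    rw [hE, Finset.card_erase_of_mem (mem_univ _), Finset.card_univ, Fintype.card_fin]; omega
  set F : Fin n → Finset (Fin k → Fin n) :=
    fun i => univ.filter (fun j : Fin k → Fin n => j z0 = i) with hF
  -- tApply as a filtered sum
  have htapp : ∀ (w : Fin n → ℂ) (i : Fin n),
      tApply hk0 (fun j => (a j : ℂ)) w i = ∑ j ∈ F i, (a j : ℂ) * ∏ t ∈ E, w (j t) := by
    intro w i
    rw [tApply, hF, Finset.sum_filter]
  -- the real eigen equation for y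
  have hρR : ∀ i, ∑ j ∈ F i, a j * ∏ t ∈ E, y (j t) = ρ * y i ^ m := by
    intro i
    have h1 := hρ i
    rw [show tApply (by omega : 0 < k) (fun j => (a j : ℂ)) (fun i => (y i : ℂ)) i
        = tApply hk0 (fun j => (a j : ℂ)) (fun i => (y i : ℂ)) i from rfl, htapp] at h1
    rw [hkm] at h1
    have h2 : ((∑ j ∈ F i, a j * ∏ t ∈ E, y (j t) : ℝ) : ℂ) = ((ρ * y i ^ m : ℝ) : ℂ) := by
      push_cast
      rw [← h1]
    exact_mod_cast h2
  set Z : Fin n → ℝ := fun i => ‖x i‖ with hZ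
  have hZnn : ∀ i, 0 ≤ Z i := fun i => norm_nonneg _
  -- abs of each term
  have hZsum : ∀ (j : Fin k → Fin n),
      ‖(a j : ℂ) * ∏ t ∈ E, x (j t)‖ = a j * ∏ t ∈ E, Z (j t) := by
    intro j
    rw [norm_mul, norm_prod, Complex.norm_real, Real.norm_eq_abs, abs_of_nonneg (ha j)]
  -- the key inequality
  have hineq : ∀ i, ρ * Z i ^ m ≤ ∑ j ∈ F i, a j * ∏ t ∈ E, Z (j t) := by
    intro i
    have h1 : ‖lam * x i ^ (k - 1)‖ = ρ * Z i ^ m := by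
      rw [norm_mul, norm_pow, hlam, hZ, hkm]
    have h2 := heig i
    rw [show tApply (by omega : 0 < k) (fun j => (a j : ℂ)) x i
        = tApply hk0 (fun j => (a j : ℂ)) x i from rfl, htapp] at h2
    calc ρ * Z i ^ m = ‖∑ j ∈ F i, (a j : ℂ) * ∏ t ∈ E, x (j t)‖ := by
          rw [h2, h1]
      _ ≤ ∑ j ∈ F i, ‖(a j : ℂ) * ∏ t ∈ E, x (j t)‖ :=
          norm_sum_le _ _
      _ = ∑ j ∈ F i, a j * ∏ t ∈ E, Z (j t) := by
          exact Finset.sum_congr rfl (fun j _ => hZsum j)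
  by_cases hA0 : ∀ j, a j = 0
  · -- degenerate case : the zero tensor, n = 1
    have hone : ∀ i : Fin n, i = ⟨0, hn⟩ := by
      intro i
      by_contra hine
      have h1 := hwi i ⟨0, hn⟩
      rcases Relation.ReflTransGen.cases_head h1 with h | ⟨c, ⟨f, hf, _⟩, _⟩
      · exact hine h
      · exact hf (by simp [hA0 f])
    have hx1 : x ⟨0, hn⟩ ≠ 0 := by
      intro h
      rw [h] at hscale
      simp at hscale
    refine ⟨fun i => by rw [hone i]; exact hx1, fun i => ?_, fun j hj => absurd (hA0 j) hj⟩
    rw [hone i]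
    have hxre : x ⟨0, hn⟩ = ((x ⟨0, hn⟩).re : ℂ) :=
      Complex.ext_iff.mpr ⟨rfl, hscale.1⟩
    rw [hxre, Complex.norm_real, Real.norm_eq_abs, abs_of_pos hscale.2,
      div_self (by exact_mod_cast hscale.2.ne'), one_pow]
  · push_neg at hA0
    obtain ⟨j0, hj0⟩ := hA0
    -- ρ > 0
    have hρpos : 0 < ρ := by
      have hmem : j0 ∈ F (j0 z0) := by rw [hF]; simp
      have hpos : 0 < a j0 * ∏ t ∈ E, y (j0 t) :=
        mul_pos (lt_of_le_of_ne (ha j0) (Ne.symm hj0)) (Finset.prod_pos fun t _ => hy _)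
      have hsum : 0 < ∑ j ∈ F (j0 z0), a j * ∏ t ∈ E, y (j t) :=
        Finset.sum_pos' (fun j _ => mul_nonneg (ha j) (Finset.prod_nonneg fun t _ => (hy _).le))
          ⟨j0, hmem, hpos⟩
      rw [hρR] at hsum
      nlinarith [pow_pos (hy (j0 z0)) m]
    have hlam0 : lam ≠ 0 := by
      intro h; rw [h, norm_zero] at hlam; exact hρpos.ne hlam
    -- the maximum of Z i / y i
    obtain ⟨i0, -, hi0max⟩ := Finset.exists_max_image univ (fun i => Z i / y i)
      ⟨⟨0, hn⟩, mem_univ _⟩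
    set tm : ℝ := Z i0 / y i0 with htm
    have htpos : 0 < tm := by
      obtain ⟨i1, hi1⟩ := Function.ne_iff.mp hx0
      have : 0 < Z i1 := norm_pos_iff.mpr (by simpa using hi1)
      have h2 : 0 < Z i1 / y i1 := div_pos this (hy i1)
      exact lt_of_lt_of_le h2 (hi0max i1 (mem_univ _))
    have hle : ∀ i, Z i ≤ tm * y i := by
      intro i
      have := hi0max i (mem_univ _)
      rw [div_le_iff₀ (hy i)] at this
      linarith [this]
    -- sum with t*y
    have hsumty : ∀ i, ∑ j ∈ F i, a j * ∏ t ∈ E, (tm * y (j t)) = ρ * (tm * y i) ^ m := by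
      intro i
      have : ∀ j : Fin k → Fin n, ∏ t ∈ E, (tm * y (j t)) = tm ^ m * ∏ t ∈ E, y (j t) := by
        intro j
        rw [Finset.prod_mul_distrib, Finset.prod_const, hEcard]
      calc ∑ j ∈ F i, a j * ∏ t ∈ E, (tm * y (j t))
          = ∑ j ∈ F i, tm ^ m * (a j * ∏ t ∈ E, y (j t)) := by
            refine Finset.sum_congr rfl (fun j _ => ?_); rw [this j]; ring
        _ = tm ^ m * ∑ j ∈ F i, a j * ∏ t ∈ E, y (j t) := by rw [← Finset.mul_sum]
        _ = tm ^ m * (ρ * y i ^ m) := by rw [hρR]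
        _ = ρ * (tm * y i) ^ m := by rw [mul_pow]; ring
    -- closure of the equality set
    have hclosure : ∀ i, Z i = tm * y i → ∀ f : Fin k → Fin n, a f ≠ 0 → f z0 = i →
        ∀ s ∈ E, Z (f s) = tm * y (f s) := by
      intro i hi f hf hfz
      have hsle : ∀ j ∈ F i, a j * ∏ t ∈ E, Z (j t) ≤ a j * ∏ t ∈ E, (tm * y (j t)) := by
        intro j _
        exact mul_le_mul_of_nonneg_left
          (Finset.prod_le_prod (fun t _ => hZnn _) (fun t _ => hle _)) (ha j)
      have hsumeq : ∑ j ∈ F i, a j * ∏ t ∈ E, Z (j t)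
          = ∑ j ∈ F i, a j * ∏ t ∈ E, (tm * y (j t)) := by
        refine le_antisymm (Finset.sum_le_sum hsle) ?_
        rw [hsumty i, ← hi]
        exact hineq i
      have hfe : f ∈ F i := by rw [hF]; simp [hfz]
      have h1 : a f * ∏ t ∈ E, Z (f t) = a f * ∏ t ∈ E, (tm * y (f t)) :=
        (Finset.sum_eq_sum_iff_of_le hsle).mp hsumeq f hfe
      have h2 : ∏ t ∈ E, Z (f t) = ∏ t ∈ E, (tm * y (f t)) :=
        mul_left_cancel₀ hf h1
      exact prod_eq_of_le_of_pos E _ _ (fun s _ => hZnn _)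
        (fun s _ => mul_pos htpos (hy _)) (fun s _ => hle _) h2
    -- Z = tm * y everywhere
    have hZall : ∀ i, Z i = tm * y i := by
      have hstep : ∀ b c : Fin n, Z b = tm * y b →
          arcRel (by omega : 0 < k) (fun j => (a j : ℂ)) b c → Z c = tm * y c := by
        rintro b c hb ⟨f, hf, hfz, t, ht, hftc⟩
        have hf' : a f ≠ 0 := fun h => hf (by simp [h])
        have htE : t ∈ E := by
          rw [hE, Finset.mem_erase]
          exact ⟨ht, mem_univ _⟩
        rw [← hftc]
        exact hclosure b hb f hf' hfz t htE
      intro i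
      have hpath := hwi i0 i
      induction hpath with
      | refl => rw [htm, div_mul_cancel₀ _ (hy i0).ne']
      | tail _ harc ih => exact hstep _ _ ih harc
    have hZpos : ∀ i, 0 < Z i := fun i => by rw [hZall i]; exact mul_pos htpos (hy i)
    have hxne : ∀ i, x i ≠ 0 := by
      intro i h
      have := hZpos i
      rw [hZ] at this
      simp only [h, norm_zero] at this
      exact lt_irrefl 0 this
    -- the equality of the sums
    have hAeq : ∀ i, ∑ j ∈ F i, a j * ∏ t ∈ E, Z (j t) = ρ * Z i ^ m := by
      intro i
      calc ∑ j ∈ F i, a j * ∏ t ∈ E, Z (j t)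
          = ∑ j ∈ F i, a j * ∏ t ∈ E, (tm * y (j t)) := by
            refine Finset.sum_congr rfl fun j _ => ?_
            congr 1
            exact Finset.prod_congr rfl fun t _ => by rw [hZall]
        _ = ρ * (tm * y i) ^ m := hsumty i
        _ = ρ * Z i ^ m := by rw [← hZall]
    -- per-tuple phase equality
    have hterm : ∀ j : Fin k → Fin n, a j ≠ 0 →
        (∏ t, x (j t)) = (lam / (ρ : ℂ)) * (x (j z0) / (Z (j z0) : ℂ)) ^ k *
          ((∏ t, Z (j t) : ℝ) : ℂ) := by
      intro j hj
      set i : Fin n := j z0 with hi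
      set u : ℂ := lam * x i ^ m / ((ρ * Z i ^ m : ℝ) : ℂ) with hu
      have hden : (0:ℝ) < ρ * Z i ^ m := mul_pos hρpos (pow_pos (hZpos i) m)
      have huabs : ‖u‖ = 1 := by
        rw [hu, norm_div, norm_mul, norm_pow, hlam, Complex.norm_real, Real.norm_eq_abs,
          abs_of_pos hden]
        rw [show ‖x i‖ = Z i from rfl]
        field_simp
        exact div_self (pow_pos (hZpos i) m).ne'
      have hsum : ∑ j' ∈ F i, ((a j' : ℂ) * ∏ t ∈ E, x (j' t))
          = u * ((∑ j' ∈ F i, ‖(a j' : ℂ) * ∏ t ∈ E, x (j' t)‖ : ℝ) : ℂ) := by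
        have h2 := heig i
        rw [show tApply (by omega : 0 < k) (fun j => (a j : ℂ)) x i
            = tApply hk0 (fun j => (a j : ℂ)) x i from rfl, htapp] at h2
        have h3 : ∑ j' ∈ F i, ‖(a j' : ℂ) * ∏ t ∈ E, x (j' t)‖
            = ρ * Z i ^ m := by
          rw [Finset.sum_congr rfl (fun j' _ => hZsum j'), hAeq]
        rw [h3, h2, hkm, hu]
        rw [div_mul_cancel₀]
        exact_mod_cast hden.ne'
      have htri := triangle_eq (F i) _ u huabs hsum
      have hmem : j ∈ F i := by rw [hF]; simp [hi]
      have h4 := htri j hmem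
      rw [hZsum j] at h4
      have h5 : (a j : ℂ) * ∏ t ∈ E, x (j t)
          = (a j : ℂ) * (u * ((∏ t ∈ E, Z (j t) : ℝ) : ℂ)) := by
        rw [h4]; push_cast; ring
      have h6 : ∏ t ∈ E, x (j t) = u * ((∏ t ∈ E, Z (j t) : ℝ) : ℂ) :=
        mul_left_cancel₀ (by exact_mod_cast hj) h5
      have h7 : ∏ t, x (j t) = x i * ∏ t ∈ E, x (j t) :=
        (Finset.mul_prod_erase univ (fun t => x (j t)) (mem_univ z0)).symm
      have h8 : (∏ t, Z (j t) : ℝ) = Z i * ∏ t ∈ E, Z (j t) :=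
        (Finset.mul_prod_erase univ (fun t => Z (j t)) (mem_univ z0)).symm
      rw [h7, h6, h8, hu]
      have hZi : ((Z i : ℝ) : ℂ) ≠ 0 := by exact_mod_cast (hZpos i).ne'
      have hρc : ((ρ : ℝ) : ℂ) ≠ 0 := by exact_mod_cast hρpos.ne'
      have hxik : x i ^ k = x i * x i ^ m := by rw [hm, pow_succ]; ring
      rw [div_pow, hxik]
      push_cast
      field_simp
      rw [show ((Z i : ℝ) : ℂ) ^ k = ((Z i : ℝ) : ℂ) * ((Z i : ℝ) : ℂ) ^ m by
        rw [hm, pow_succ]; ring]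
      ring
    -- the phase function is constant along arcs
    set φ : Fin n → ℂ := fun i => (x i / (‖x i‖ : ℂ)) ^ k with hφ
    have hlr0 : lam / (ρ : ℂ) ≠ 0 :=
      div_ne_zero hlam0 (by exact_mod_cast hρpos.ne')
    have hphiarc : ∀ b c : Fin n,
        arcRel (by omega : 0 < k) (fun j => (a j : ℂ)) b c → φ b = φ c := by
      rintro b c ⟨f, hf, hfz, t, ht, hftc⟩
      have hf' : a f ≠ 0 := fun h => hf (by simp [h])
      set σ : Equiv.Perm (Fin k) := Equiv.swap z0 t with hσ
      have hg' : a (f ∘ σ) ≠ 0 := hcs σ f hf'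
      have hgz : (f ∘ σ) z0 = c := by
        rw [← hftc]
        simp [hσ, Equiv.swap_apply_left]
      have hx1 := hterm f hf'
      have hx2 := hterm (f ∘ σ) hg'
      have hpx : ∏ t', x ((f ∘ σ) t') = ∏ t', x (f t') := Equiv.prod_comp σ (fun t' => x (f t'))
      have hpZ : ∏ t', Z ((f ∘ σ) t') = ∏ t', Z (f t') := Equiv.prod_comp σ (fun t' => Z (f t'))
      rw [hpx, hpZ, hgz, hx1, hfz] at hx2
      have hPne : ((∏ t', Z (f t') : ℝ) : ℂ) ≠ 0 := by
        exact_mod_cast (Finset.prod_pos fun t' _ => hZpos _).ne'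
      have h9 := mul_right_cancel₀ hPne hx2
      have h10 := mul_left_cancel₀ hlr0 h9
      simp only [hZ] at h10
      simp only [hφ]
      exact h10
    have hφ0 : φ ⟨0, hn⟩ = 1 := by
      have hxre : x ⟨0, hn⟩ = ((x ⟨0, hn⟩).re : ℂ) :=
        Complex.ext_iff.mpr ⟨rfl, hscale.1⟩
      show (x ⟨0, hn⟩ / (‖x ⟨0, hn⟩‖ : ℂ)) ^ k = 1
      rw [hxre, Complex.norm_real, Real.norm_eq_abs, abs_of_pos hscale.2,
        div_self (by exact_mod_cast hscale.2.ne'), one_pow]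
    have hφall : ∀ i, φ i = 1 := by
      intro i
      have hpath := hwi ⟨0, hn⟩ i
      induction hpath with
      | refl => exact hφ0
      | tail _ harc ih => rw [← hphiarc _ _ harc]; exact ih
    refine ⟨hxne, fun i => hφall i, fun j hj => ?_⟩
    have h1 := hterm j hj
    have h2 : (x (j z0) / (Z (j z0) : ℂ)) ^ k = 1 := by
      have := hφall (j z0)
      rw [hφ] at this
      simpa [hZ] using this
    rw [h2, mul_one] at h1
    have habsp : ‖∏ t, x (j t)‖ = ∏ t, Z (j t) :=
      norm_prod univ (fun t => x (j t))
    rw [habsp]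
    exact h1
end

section
/- Let H be a connected k-uniform hypergraph (k ≥ 2) on n ≥ 2 vertices with at least one edge, and let ρ be the unique eigenvalue of the adjacency tensor 𝒜(H) admitting a strictly positive eigenvector. Then the projective eigenvariety 𝕍_0(ℒ(H)) of the Laplacian tensor associated with the eigenvalue 0 and the projective eigenvariety 𝕍_ρ(𝒜(H)) of the adjacency tensor associated with ρ are finite and have the same cardinality: |𝕍_0(ℒ(H))| = |𝕍_ρ(𝒜(H))|. -/
open Finset

/-- The degree of a vertex `v`: the number of edges containing `v`. -/
def hDeg {n : ℕ} (E : Finset (Finset (Fin n))) (v : Fin n) : ℕ :=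
  (E.filter (fun e => v ∈ e)).card

/-- The action `(ℒ(H) x^{k-1})_v = d_v x_v^{k-1} - (𝒜(H) x^{k-1})_v` of the Laplacian
tensor. -/
noncomputable def lapApply {n : ℕ} (k : ℕ) (E : Finset (Finset (Fin n))) (x : Fin n → ℂ)
    (v : Fin n) : ℂ :=
  (hDeg E v : ℂ) * x v ^ (k - 1) - adjApply E x v

/-- A hypergraph is connected if any two vertices are joined by a sequence of vertices
in which consecutive vertices lie in a common edge. -/
def HConnected {n : ℕ} (E : Finset (Finset (Fin n))) : Prop :=
  ∀ u v : Fin n, Relation.ReflTransGen (fun a b => ∃ e ∈ E, a ∈ e ∧ b ∈ e) u v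

namespace Stmt15

variable {n : ℕ}

/-- real adjacency action -/
noncomputable def adjR (E : Finset (Finset (Fin n))) (w : Fin n → ℝ) (v : Fin n) : ℝ :=
  ∑ e ∈ E.filter (fun e => v ∈ e), ∏ u ∈ e.erase v, w u

lemma adjApply_coe (E : Finset (Finset (Fin n))) (w : Fin n → ℝ) (v : Fin n) :
    adjApply E (fun i => (w i : ℂ)) v = (adjR E w v : ℂ) := by
  simp [adjApply, adjR]

/-- every vertex lies in an edge -/
lemma exists_edge (E : Finset (Finset (Fin n))) (hn : 2 ≤ n) (hconn : HConnected E)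
    (v : Fin n) : ∃ e ∈ E, v ∈ e := by
  have h2 : ∃ u : Fin n, u ≠ v := by
    rcases eq_or_ne v ⟨0, by omega⟩ with h | h
    · exact ⟨⟨1, by omega⟩, by simp [h, Fin.ext_iff]⟩
    · exact ⟨⟨0, by omega⟩, fun hu => h (hu ▸ rfl)⟩
  obtain ⟨u, hu⟩ := h2
  rcases (hconn v u).cases_head with h | ⟨b, ⟨e, he, hve, _⟩, _⟩
  · exact absurd h.symm hu
  · exact ⟨e, he, hve⟩

lemma filter_nonempty (E : Finset (Finset (Fin n))) (hn : 2 ≤ n) (hconn : HConnected E)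
    (v : Fin n) : (E.filter (fun e => v ∈ e)).Nonempty := by
  obtain ⟨e, he, hv⟩ := exists_edge E hn hconn v
  exact ⟨e, mem_filter.2 ⟨he, hv⟩⟩

/-- connectivity propagation -/
lemma conn_prop (E : Finset (Finset (Fin n))) (hconn : HConnected E)
    (P : Fin n → Prop) (v0 : Fin n) (h0 : P v0)
    (hstep : ∀ e ∈ E, ∀ a ∈ e, ∀ b ∈ e, P a → P b) (v : Fin n) : P v := by
  have h := hconn v0 v
  induction h with
  | refl => exact h0
  | tail _ hrel ih =>
    obtain ⟨e, he, ha, hb⟩ := hrel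
    exact hstep e he _ ha _ hb ih

/-- product equality forces factor equality -/
lemma prod_eq_factors {ι : Type*} (s : Finset ι) (f g : ι → ℝ)
    (h0 : ∀ i ∈ s, 0 ≤ f i) (hle : ∀ i ∈ s, f i ≤ g i) (hg : ∀ i ∈ s, 0 < g i)
    (heq : ∏ i ∈ s, f i = ∏ i ∈ s, g i) : ∀ i ∈ s, f i = g i := by
  intro i hi
  by_contra hne
  have hlt : f i < g i := lt_of_le_of_ne (hle i hi) hne
  classical
  have h1 : ∏ j ∈ s, f j ≤ f i * ∏ j ∈ s.erase i, g j := by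
    rw [← Finset.mul_prod_erase s f hi]
    refine mul_le_mul_of_nonneg_left (Finset.prod_le_prod ?_ ?_) (h0 i hi)
    · exact fun j hj => h0 j (Finset.mem_of_mem_erase hj)
    · exact fun j hj => hle j (Finset.mem_of_mem_erase hj)
  have h2 : f i * ∏ j ∈ s.erase i, g j < g i * ∏ j ∈ s.erase i, g j := by
    exact mul_lt_mul_of_pos_right hlt (Finset.prod_pos fun j hj => hg j (Finset.mem_of_mem_erase hj))
  rw [Finset.mul_prod_erase s g hi] at h2
  exact absurd heq (ne_of_lt (lt_of_le_of_lt h1 h2))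

lemma unit_re_one {z : ℂ} (habs : ‖z‖ = 1) (hre : z.re = 1) : z = 1 := by
  have h := Complex.sq_norm z
  rw [habs] at h
  have : z.im ^ 2 = 0 := by
    have := Complex.normSq_apply z
    nlinarith [this]
  have him : z.im = 0 := by nlinarith
  exact Complex.ext (by simp [hre]) (by simp [him])

end Stmt15

namespace Stmt15
variable {n : ℕ}

/-- the phase condition set -/
def SCond (k : ℕ) (E : Finset (Finset (Fin n))) (v0 : Fin n) (θ : Fin n → ℂ) : Prop :=
  θ v0 = 1 ∧ ∀ e ∈ E, ∀ v ∈ e, ∏ u ∈ e, θ u = θ v ^ k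

lemma SCond.pow_eq_one {k : ℕ} {E : Finset (Finset (Fin n))} {v0 : Fin n} {θ : Fin n → ℂ}
    (hconn : HConnected E) (h : SCond k E v0 θ) (v : Fin n) : θ v ^ k = 1 := by
  refine conn_prop E hconn (fun v => θ v ^ k = 1) v0 (by simp [h.1]) ?_ v
  intro e he a ha b hb hPa
  rw [← h.2 e he b hb, h.2 e he a ha, hPa]

lemma SCond.ne_zero {k : ℕ} (hk : k ≠ 0) {E : Finset (Finset (Fin n))} {v0 : Fin n}
    {θ : Fin n → ℂ} (hconn : HConnected E) (h : SCond k E v0 θ) (v : Fin n) : θ v ≠ 0 := by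
  intro h0
  have := h.pow_eq_one hconn v
  rw [h0, zero_pow hk] at this
  exact one_ne_zero this.symm

end Stmt15

namespace Stmt15
variable {n : ℕ}

lemma emb_eig {k : ℕ} (hk : 2 ≤ k) {E : Finset (Finset (Fin n))}
    (hunif : ∀ e ∈ E, e.card = k) (hconn : HConnected E)
    {v0 : Fin n} {θ : Fin n → ℂ} (hθ : SCond k E v0 θ)
    (w : Fin n → ℝ) (hw : ∀ i, 0 < w i) (μ : Fin n → ℝ)
    (hμ : ∀ v, μ v * w v ^ (k - 1) = adjR E w v) (v : Fin n) :
    adjApply E (fun i => θ i * (w i : ℂ)) v = (μ v : ℂ) * (θ v * (w v : ℂ)) ^ (k - 1) := by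
  have hθ0 := hθ.ne_zero (by omega : k ≠ 0) hconn
  have key : ∀ e ∈ E.filter (fun e => v ∈ e),
      ∏ u ∈ e.erase v, θ u = θ v ^ (k - 1) := by
    intro e he
    rw [mem_filter] at he
    have h1 : θ v * ∏ u ∈ e.erase v, θ u = θ v ^ k :=
      (Finset.mul_prod_erase e θ he.2).trans (hθ.2 e he.1 v he.2)
    have h2 : θ v ^ k = θ v * θ v ^ (k - 1) := by
      rw [← pow_succ']
      congr 1
      omega
    rw [h2] at h1
    exact mul_left_cancel₀ (hθ0 v) h1
  unfold adjApply
  have : ∀ e ∈ E.filter (fun e => v ∈ e),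
      ∏ u ∈ e.erase v, (θ u * (w u : ℂ)) = θ v ^ (k - 1) * ∏ u ∈ e.erase v, (w u : ℂ) := by
    intro e he
    rw [Finset.prod_mul_distrib, key e he]
  rw [Finset.sum_congr rfl this, ← Finset.mul_sum]
  have hcast : ∑ e ∈ E.filter (fun e => v ∈ e), ∏ u ∈ e.erase v, (w u : ℂ)
      = ((adjR E w v : ℝ) : ℂ) := by
    simp [adjR]
  rw [hcast, ← hμ v]
  push_cast
  ring

end Stmt15

namespace Stmt15
variable {n : ℕ}

lemma eig_structure {k : ℕ} (hk : 2 ≤ k) (hn : 2 ≤ n) {E : Finset (Finset (Fin n))}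
    (hunif : ∀ e ∈ E, e.card = k) (hconn : HConnected E) (v0 : Fin n)
    (w : Fin n → ℝ) (hw : ∀ i, 0 < w i) (μ : Fin n → ℝ)
    (hμ : ∀ v, μ v * w v ^ (k - 1) = adjR E w v)
    (x : Fin n → ℂ) (hx : x ≠ 0)
    (heig : ∀ v, adjApply E x v = (μ v : ℂ) * x v ^ (k - 1)) :
    ∃ c : ℂ, c ≠ 0 ∧ ∃ θ : Fin n → ℂ, SCond k E v0 θ ∧
      x = fun v => c * (θ v * (w v : ℂ)) := by
  classical
  have hk1 : 1 ≤ k - 1 := by omega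
  -- (a) positivity of μ
  have hadjpos : ∀ v, 0 < adjR E w v := by
    intro v
    exact Finset.sum_pos (fun e _ => Finset.prod_pos fun u _ => hw u)
      (filter_nonempty E hn hconn v)
  have hμpos : ∀ v, 0 < μ v := by
    intro v
    have h1 := hadjpos v
    rw [← hμ v] at h1
    have h2 : 0 < w v ^ (k - 1) := pow_pos (hw v) _
    nlinarith
  -- (b) modulus inequality
  have habs : ∀ v, μ v * ‖x v‖ ^ (k - 1)
      ≤ adjR E (fun u => ‖x u‖) v := by
    intro v
    have h1 : ‖adjApply E x v‖ = μ v * ‖x v‖ ^ (k - 1) := by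
      rw [heig v, norm_mul, norm_pow, Complex.norm_real, Real.norm_eq_abs, abs_of_pos (hμpos v)]
    rw [← h1]
    unfold adjApply adjR
    refine le_trans (norm_sum_le _ _) ?_
    refine Finset.sum_le_sum fun e _ => ?_
    rw [norm_prod]
  -- (c) the max ratio
  have : Nonempty (Fin n) := ⟨v0⟩
  obtain ⟨vm, -, hvm⟩ := Finset.exists_max_image Finset.univ
    (fun v => ‖x v‖ / w v) Finset.univ_nonempty
  set t : ℝ := ‖x vm‖ / w vm with htdef
  have htw : ∀ v, ‖x v‖ ≤ t * w v := by
    intro v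
    have := hvm v (Finset.mem_univ v)
    rw [div_le_iff₀ (hw v)] at this
    linarith [this]
  -- (d) t > 0
  have ht : 0 < t := by
    obtain ⟨v1, hv1⟩ := Function.ne_iff.mp hx
    have h1 : 0 < ‖x v1‖ := by
      simpa using (norm_pos_iff.mpr hv1)
    have h2 := hvm v1 (Finset.mem_univ v1)
    calc (0:ℝ) < ‖x v1‖ / w v1 := div_pos h1 (hw v1)
      _ ≤ t := h2
  -- cardinality of erased edge
  have hcarde : ∀ e ∈ E, ∀ a ∈ e, (e.erase a).card = k - 1 := by
    intro e he a ha
    rw [Finset.card_erase_of_mem ha, hunif e he]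
  -- (e) all moduli equal t * w
  have hall : ∀ v, ‖x v‖ = t * w v := by
    refine conn_prop E hconn _ vm ?_ ?_
    · rw [htdef, div_mul_cancel₀ _ (ne_of_gt (hw vm))]
    · intro e he a ha b hb hPa
      -- chain of inequalities at a
      set A := E.filter (fun e => a ∈ e) with hA
      have heA : e ∈ A := mem_filter.2 ⟨he, ha⟩
      have h3 : ∀ e' ∈ A, ∏ u ∈ e'.erase a, (t * w u)
          = t ^ (k - 1) * ∏ u ∈ e'.erase a, w u := by
        intro e' he'
        rw [mem_filter] at he'
        rw [Finset.prod_mul_distrib, Finset.prod_const, hcarde e' he'.1 a he'.2]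
      have h2 : adjR E (fun u => ‖x u‖) a
          ≤ ∑ e' ∈ A, ∏ u ∈ e'.erase a, (t * w u) := by
        refine Finset.sum_le_sum fun e' _ => ?_
        refine Finset.prod_le_prod (fun u _ => norm_nonneg _)
          (fun u _ => htw u)
      have h4 : ∑ e' ∈ A, ∏ u ∈ e'.erase a, (t * w u)
          = μ a * (t * w a) ^ (k - 1) := by
        rw [Finset.sum_congr rfl h3, ← Finset.mul_sum]
        have : ∑ e' ∈ A, ∏ u ∈ e'.erase a, w u = adjR E w a := rfl
        rw [this, ← hμ a, mul_pow]
        ring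
      have h1 : μ a * (t * w a) ^ (k - 1)
          ≤ adjR E (fun u => ‖x u‖) a := by
        rw [← hPa]
        exact habs a
      -- equalities
      have heq2 : adjR E (fun u => ‖x u‖) a
          = ∑ e' ∈ A, ∏ u ∈ e'.erase a, (t * w u) := le_antisymm h2 (by linarith)
      have hterm : ∀ e' ∈ A, ∏ u ∈ e'.erase a, (t * w u)
          - ∏ u ∈ e'.erase a, ‖x u‖ = 0 := by
        rw [← Finset.sum_eq_zero_iff_of_nonneg]
        · rw [Finset.sum_sub_distrib]
          have : adjR E (fun u => ‖x u‖) a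
              = ∑ e' ∈ A, ∏ u ∈ e'.erase a, ‖x u‖ := rfl
          rw [← this, heq2, sub_self]
        · intro e' _
          rw [sub_nonneg]
          exact Finset.prod_le_prod (fun u _ => norm_nonneg _)
            (fun u _ => htw u)
      have hprod : ∏ u ∈ e.erase a, ‖x u‖ = ∏ u ∈ e.erase a, (t * w u) := by
        have := hterm e heA
        linarith [this]
      have hfac := prod_eq_factors (e.erase a) _ _
        (fun u _ => norm_nonneg _) (fun u _ => htw u)
        (fun u _ => mul_pos ht (hw u)) hprod
      rcases eq_or_ne b a with hba | hba
      · rw [hba]; exact hPa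
      · exact hfac b (Finset.mem_erase.2 ⟨hba, hb⟩)
  -- (f) phases
  set tw : Fin n → ℝ := fun v => t * w v with htwdef
  have htwpos : ∀ v, 0 < tw v := fun v => mul_pos ht (hw v)
  have htwne : ∀ v, (tw v : ℂ) ≠ 0 := fun v => by
    exact_mod_cast ne_of_gt (htwpos v)
  set θ : Fin n → ℂ := fun v => x v / (tw v : ℂ) with hθdef
  have hθabs : ∀ v, ‖θ v‖ = 1 := by
    intro v
    rw [hθdef]
    simp only
    rw [norm_div, Complex.norm_real, Real.norm_eq_abs, abs_of_pos (htwpos v), hall v]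
    exact div_self (ne_of_gt (htwpos v))
  have hθne : ∀ v, θ v ≠ 0 := by
    intro v h0
    have := hθabs v
    rw [h0] at this
    simp at this
  have hxdec : ∀ v, x v = (tw v : ℂ) * θ v := by
    intro v
    rw [hθdef]
    simp only
    rw [mul_div_cancel₀ _ (htwne v)]
  have htkne : ((t ^ (k - 1) : ℝ) : ℂ) ≠ 0 := by
    exact_mod_cast ne_of_gt (pow_pos ht (k - 1))
  -- (h) phase equation on edges
  have hphase : ∀ e ∈ E, ∀ v ∈ e, ∏ u ∈ e.erase v, θ u = θ v ^ (k - 1) := by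
    intro e0 he0 v hv
    set A := E.filter (fun e => v ∈ e) with hA
    have he0A : e0 ∈ A := mem_filter.2 ⟨he0, hv⟩
    set c : Finset (Fin n) → ℝ := fun e => ∏ u ∈ e.erase v, w u with hc
    have hcpos : ∀ e ∈ A, 0 < c e := fun e _ => Finset.prod_pos fun u _ => hw u
    have hΘabs : ∀ e : Finset (Fin n), ‖∏ u ∈ e.erase v, θ u‖ = 1 := by
      intro e
      rw [norm_prod]
      exact Finset.prod_eq_one fun u _ => hθabs u
    -- rewrite the eigen equation
    have h1 := heig v
    unfold adjApply at h1
    have h2 : ∀ e ∈ A, ∏ u ∈ e.erase v, x u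
        = ((t ^ (k - 1) * c e : ℝ) : ℂ) * ∏ u ∈ e.erase v, θ u := by
      intro e he
      rw [mem_filter] at he
      calc ∏ u ∈ e.erase v, x u = ∏ u ∈ e.erase v, ((tw u : ℂ) * θ u) := by
            exact Finset.prod_congr rfl fun u _ => hxdec u
        _ = (∏ u ∈ e.erase v, (tw u : ℂ)) * ∏ u ∈ e.erase v, θ u :=
            Finset.prod_mul_distrib
        _ = ((t ^ (k - 1) * c e : ℝ) : ℂ) * ∏ u ∈ e.erase v, θ u := by
            congr 1
            rw [htwdef]
            push_cast [hc]
            rw [Finset.prod_mul_distrib, Finset.prod_const,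
              hcarde e he.1 v he.2]
    have h3 : (↑(μ v) : ℂ) * x v ^ (k - 1)
        = ((t ^ (k - 1) : ℝ) : ℂ) * (((adjR E w v : ℝ)) : ℂ) * θ v ^ (k - 1) := by
      rw [hxdec v, mul_pow, ← hμ v]
      rw [htwdef]
      push_cast
      ring
    rw [Finset.sum_congr rfl h2, h3] at h1
    have h4 : ∑ e ∈ A, ((t ^ (k - 1) * c e : ℝ) : ℂ) * ∏ u ∈ e.erase v, θ u
        = ((t ^ (k - 1) : ℝ) : ℂ) * ∑ e ∈ A, ((c e : ℝ) : ℂ) * ∏ u ∈ e.erase v, θ u := by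
      rw [Finset.mul_sum]
      refine Finset.sum_congr rfl fun e _ => ?_
      push_cast
      ring
    rw [h4] at h1
    have h5 : ∑ e ∈ A, ((c e : ℝ) : ℂ) * ∏ u ∈ e.erase v, θ u
        = ((adjR E w v : ℝ) : ℂ) * θ v ^ (k - 1) := by
      exact mul_left_cancel₀ htkne (h1.trans (mul_assoc _ _ _))
    -- divide by θ v ^ (k-1)
    have hθvk : θ v ^ (k - 1) ≠ 0 := pow_ne_zero _ (hθne v)
    set η : Finset (Fin n) → ℂ := fun e => (∏ u ∈ e.erase v, θ u) / θ v ^ (k - 1)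
      with hη
    have hηabs : ∀ e, ‖η e‖ = 1 := by
      intro e
      rw [hη]
      simp only
      rw [norm_div, hΘabs e, norm_pow]
      rw [hθabs v]
      simp
    have h6 : ∑ e ∈ A, ((c e : ℝ) : ℂ) * η e = ((adjR E w v : ℝ) : ℂ) := by
      have : ∑ e ∈ A, ((c e : ℝ) : ℂ) * η e
          = (∑ e ∈ A, ((c e : ℝ) : ℂ) * ∏ u ∈ e.erase v, θ u) / θ v ^ (k - 1) := by
        rw [Finset.sum_div]
        exact Finset.sum_congr rfl fun e _ => (mul_div_assoc _ _ _).symm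
      rw [this, h5, mul_div_cancel_right₀ _ hθvk]
    -- real parts
    have h7 : ∑ e ∈ A, c e * (η e).re = adjR E w v := by
      have := congrArg Complex.re h6
      rw [Complex.re_sum] at this
      simpa [Complex.re_ofReal_mul] using this
    have hadj : adjR E w v = ∑ e ∈ A, c e := rfl
    have h8 : ∑ e ∈ A, c e * (1 - (η e).re) = 0 := by
      rw [Finset.sum_congr rfl (fun e _ => (mul_one_sub (c e) ((η e).re)))]
      rw [Finset.sum_sub_distrib, h7, ← hadj, sub_self]
    have h9 : ∀ e ∈ A, c e * (1 - (η e).re) = 0 := by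
      refine (Finset.sum_eq_zero_iff_of_nonneg ?_).mp h8
      intro e he
      have h10 : (η e).re ≤ 1 := by
        calc (η e).re ≤ ‖η e‖ := Complex.re_le_norm _
          _ = 1 := hηabs e
      have := le_of_lt (hcpos e he)
      nlinarith
    have h10 := h9 e0 he0A
    have h11 : (η e0).re = 1 := by
      have hce0 := hcpos e0 he0A
      have : 1 - (η e0).re = 0 := by
        rcases mul_eq_zero.mp h10 with h | h
        · exact absurd h (ne_of_gt hce0)
        · exact h
      linarith
    have h12 : η e0 = 1 := unit_re_one (hηabs e0) h11
    rw [hη] at h12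
    simp only at h12
    exact (div_eq_one_iff_eq hθvk).mp h12
  -- (i) normalize
  refine ⟨(t : ℂ) * θ v0, ?_, fun v => θ v / θ v0, ⟨?_, ?_⟩, ?_⟩
  · exact mul_ne_zero (by exact_mod_cast ne_of_gt ht) (hθne v0)
  · exact div_self (hθne v0)
  · intro e he v hv
    have hfull : ∏ u ∈ e, θ u = θ v ^ k := by
      rw [← Finset.mul_prod_erase e θ hv, hphase e he v hv]
      rw [← pow_succ']
      congr 1
      omega
    rw [Finset.prod_div_distrib, Finset.prod_const, hfull, hunif e he]
    simp only [hθdef, div_pow]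
  · funext v
    rw [hxdec v]
    show ((t * w v : ℝ) : ℂ) * θ v = (t : ℂ) * θ v0 * (θ v / θ v0 * (w v : ℂ))
    have h0 : θ v0 / θ v0 = 1 := div_self (hθne v0)
    calc ((t * w v : ℝ) : ℂ) * θ v
        = (t : ℂ) * (w v : ℂ) * θ v * (θ v0 / θ v0) := by
          rw [h0]; push_cast; ring
      _ = (t : ℂ) * θ v0 * (θ v / θ v0 * (w v : ℂ)) := by ring

end Stmt15

namespace Stmt15
variable {n : ℕ}

lemma rel_equivalence (p : (Fin n → ℂ) → Prop) :
    Equivalence (fun (x z : {x : Fin n → ℂ // p x}) =>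
      ∃ c : ℂ, c ≠ 0 ∧ z.1 = c • x.1) := by
  constructor
  · intro x; exact ⟨1, one_ne_zero, (one_smul _ _).symm⟩
  · rintro x z ⟨c, hc, hz⟩
    exact ⟨c⁻¹, inv_ne_zero hc, by rw [hz, smul_smul, inv_mul_cancel₀ hc, one_smul]⟩
  · rintro x z u ⟨c, hc, hz⟩ ⟨d, hd, hu⟩
    exact ⟨d * c, mul_ne_zero hd hc, by rw [hu, hz, smul_smul]⟩

lemma scond_finite {k : ℕ} (hk : k ≠ 0) {E : Finset (Finset (Fin n))}
    (hconn : HConnected E) (v0 : Fin n) :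
    Finite {θ : Fin n → ℂ // SCond k E v0 θ} := by
  have hinj : Function.Injective (fun (θ : {θ : Fin n → ℂ // SCond k E v0 θ}) =>
      (fun v => (⟨θ.1 v, (Polynomial.mem_nthRootsFinset (Nat.pos_of_ne_zero hk) (1 : ℂ)).mpr
          (θ.2.pow_eq_one hconn v)⟩ : {z : ℂ // z ∈ Polynomial.nthRootsFinset k (1 : ℂ)}))) := by
    intro a b h
    apply Subtype.ext
    funext v
    exact congrArg Subtype.val (congrFun h v)
  exact Finite.of_injective _ hinj

lemma quot_main {k : ℕ} (hk : 2 ≤ k) (hn : 2 ≤ n) {E : Finset (Finset (Fin n))}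
    (hunif : ∀ e ∈ E, e.card = k) (hconn : HConnected E) (v0 : Fin n)
    (w : Fin n → ℝ) (hw : ∀ i, 0 < w i) (μ : Fin n → ℝ)
    (hμ : ∀ v, μ v * w v ^ (k - 1) = adjR E w v)
    (p : (Fin n → ℂ) → Prop)
    (hp : ∀ x, p x ↔ (x ≠ 0 ∧ ∀ v, adjApply E x v = ((μ v : ℝ) : ℂ) * x v ^ (k - 1))) :
    ∃ F : {θ : Fin n → ℂ // SCond k E v0 θ} →
      Quot (fun (x z : {x : Fin n → ℂ // p x}) => ∃ c : ℂ, c ≠ 0 ∧ z.1 = c • x.1),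
      Function.Bijective F := by
  have hwne : ∀ v, ((w v : ℝ) : ℂ) ≠ 0 := fun v => by
    exact_mod_cast ne_of_gt (hw v)
  -- the embedding
  have hemb : ∀ θ : {θ : Fin n → ℂ // SCond k E v0 θ},
      p (fun v => θ.1 v * (w v : ℂ)) := by
    intro θ
    rw [hp]
    constructor
    · intro h0
      have := congrFun h0 v0
      simp only [Pi.zero_apply, θ.2.1, one_mul] at this
      exact hwne v0 this
    · exact emb_eig hk hunif hconn θ.2 w hw μ hμ
  refine ⟨fun θ => Quot.mk _ ⟨fun v => θ.1 v * (w v : ℂ), hemb θ⟩, ?_, ?_⟩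
  · -- injective
    intro θ θ' hFF
    have h := Quot.eq.mp hFF
    rw [(rel_equivalence p).eqvGen_iff] at h
    obtain ⟨c, hc, hcc⟩ := h
    have h0 := congrFun hcc v0
    simp only [Pi.smul_apply, smul_eq_mul, θ.2.1, θ'.2.1, one_mul] at h0
    have hc1 : c = 1 := by
      have h1 : (c - 1) * (w v0 : ℂ) = 0 := by
        rw [sub_mul, ← h0, one_mul, sub_self]
      rcases mul_eq_zero.mp h1 with h | h
      · linear_combination h
      · exact absurd h (hwne v0)
    apply Subtype.ext
    funext v
    have hv := congrFun hcc v
    simp only [Pi.smul_apply, smul_eq_mul, hc1, one_mul] at hv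
    exact (mul_right_cancel₀ (hwne v) hv).symm
  · -- surjective
    refine Quot.ind fun x => ?_
    obtain ⟨hx0, heig⟩ := (hp x.1).mp x.2
    obtain ⟨c, hc, θ, hθ, hxeq⟩ := eig_structure hk hn hunif hconn v0 w hw μ hμ
      x.1 hx0 heig
    refine ⟨⟨θ, hθ⟩, Quot.sound ⟨c, hc, ?_⟩⟩
    rw [hxeq]
    funext v
    simp [mul_assoc]

end Stmt15

open Stmt15

/-- for a connected `k`-uniform hypergraph `H` with Perron–Frobenius
eigenvalue `ρ` of the adjacency tensor, the projective eigenvarieties `𝕍_0(ℒ(H))` and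
`𝕍_ρ(𝒜(H))` (eigenvectors up to nonzero complex scalars) are finite and have the same
cardinality. -/
theorem stmt15 (k n : ℕ) (hk : 2 ≤ k) (hn : 2 ≤ n)
    (E : Finset (Finset (Fin n))) (hunif : ∀ e ∈ E, e.card = k) (hne : E.Nonempty)
    (hconn : HConnected E)
    (ρ : ℝ) (y : Fin n → ℝ) (hy : ∀ i, 0 < y i)
    (hρ : ∀ v, adjApply E (fun i => (y i : ℂ)) v = (ρ : ℂ) * (y v : ℂ) ^ (k - 1)) :
    Finite (Quot (fun
        (x z : {x : Fin n → ℂ // x ≠ 0 ∧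
          ∀ v, lapApply k E x v = 0 * x v ^ (k - 1)}) =>
      ∃ c : ℂ, c ≠ 0 ∧ z.1 = c • x.1)) ∧
    Finite (Quot (fun
        (x z : {x : Fin n → ℂ // x ≠ 0 ∧
          ∀ v, adjApply E x v = (ρ : ℂ) * x v ^ (k - 1)}) =>
      ∃ c : ℂ, c ≠ 0 ∧ z.1 = c • x.1)) ∧
    Nat.card (Quot (fun
        (x z : {x : Fin n → ℂ // x ≠ 0 ∧
          ∀ v, lapApply k E x v = 0 * x v ^ (k - 1)}) =>
      ∃ c : ℂ, c ≠ 0 ∧ z.1 = c • x.1)) =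
    Nat.card (Quot (fun
        (x z : {x : Fin n → ℂ // x ≠ 0 ∧
          ∀ v, adjApply E x v = (ρ : ℂ) * x v ^ (k - 1)}) =>
      ∃ c : ℂ, c ≠ 0 ∧ z.1 = c • x.1)) := by
  classical
  have hk0 : k ≠ 0 := by omega
  set v0 : Fin n := ⟨0, by omega⟩ with hv0
  have hμL : ∀ v, ((hDeg E v : ℝ)) * (1 : ℝ) ^ (k - 1) = adjR E (fun _ => 1) v := by
    intro v
    simp [adjR, hDeg]
  have hμA : ∀ v, ρ * y v ^ (k - 1) = adjR E y v := by
    intro v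
    have h := hρ v
    rw [adjApply_coe] at h
    exact_mod_cast h.symm
  have hpL : ∀ x : Fin n → ℂ,
      (x ≠ 0 ∧ ∀ v, lapApply k E x v = 0 * x v ^ (k - 1)) ↔
      (x ≠ 0 ∧ ∀ v, adjApply E x v = (((hDeg E v : ℝ) : ℝ) : ℂ) * x v ^ (k - 1)) := by
    intro x
    have key : ∀ v, (lapApply k E x v = 0 * x v ^ (k - 1)) ↔
        (adjApply E x v = (((hDeg E v : ℝ) : ℝ) : ℂ) * x v ^ (k - 1)) := by
      intro v
      simp only [lapApply, zero_mul, sub_eq_zero]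
      push_cast
      exact eq_comm
    exact and_congr_right fun _ => forall_congr' key
  have hpA : ∀ x : Fin n → ℂ,
      (x ≠ 0 ∧ ∀ v, adjApply E x v = (ρ : ℂ) * x v ^ (k - 1)) ↔
      (x ≠ 0 ∧ ∀ v, adjApply E x v = (((ρ : ℝ) : ℝ) : ℂ) * x v ^ (k - 1)) :=
    fun x => Iff.rfl
  obtain ⟨FL, hFL⟩ := quot_main hk hn hunif hconn v0 (fun _ => 1) (fun _ => one_pos)
    (fun v => (hDeg E v : ℝ)) hμL _ hpL
  obtain ⟨FA, hFA⟩ := quot_main hk hn hunif hconn v0 y hy (fun _ => ρ) hμA _ hpA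
  have hS : Finite {θ : Fin n → ℂ // SCond k E v0 θ} := scond_finite hk0 hconn v0
  refine ⟨Finite.of_surjective FL hFL.surjective, Finite.of_surjective FA hFA.surjective, ?_⟩
  rw [← Nat.card_eq_of_bijective FL hFL, ← Nat.card_eq_of_bijective FA hFA]
end
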